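/- arXiv:2007.02786 — 9 statements merged into one kernel-verified Lean document; each statement's English description precedes it below -/
import Mathlib

section
/- Let H be an n×n real matrix (n ≥ 1) admitting two regular splittings H = B₁ - C₁ and H = B₂ - C₂. If H is invertible, every entry of H⁻¹ is nonnegative, and 0 ≤ C₂ ≤ C₁ entrywise, then 0 ≤ ρ(B₂⁻¹ C₂) ≤ ρ(B₁⁻¹ C₁) < 1. -/
open Filter


open Matrix

/-- Spectral radius of a real square matrix: the maximum of `|μ|` over all complex
eigenvalues `μ` of the matrix (elements of the spectrum of its complexification). -/
noncomputable def specRad {n : ℕ} (A : Matrix (Fin n) (Fin n) ℝ) : ℝ :=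
  sSup {x : ℝ | ∃ μ ∈ spectrum ℂ (A.map (Complex.ofReal ·)), x = ‖μ‖}
/-- `(B, C)` is a regular splitting of `H`: `H = B - C`, `B` is invertible,
every entry of `B⁻¹` is nonnegative, and every entry of `C` is nonnegative. -/
def IsRegularSplitting {n : ℕ} (H B C : Matrix (Fin n) (Fin n) ℝ) : Prop :=
  H = B - C ∧ IsUnit B ∧ (∀ i j, 0 ≤ B⁻¹ i j) ∧ (∀ i j, 0 ≤ C i j)

namespace SpecRadAux

attribute [local instance] Matrix.linftyOpNormedRing Matrix.linftyOpNormedAlgebra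
  Matrix.linftyOpNormedSpace

variable {n : ℕ}

noncomputable instance : CompleteSpace (Matrix (Fin n) (Fin n) ℂ) :=
  FiniteDimensional.complete ℂ _

/-- complexification -/
def cmap (A : Matrix (Fin n) (Fin n) ℝ) : Matrix (Fin n) (Fin n) ℂ :=
  A.map (Complex.ofReal ·)

lemma specRad_def (A : Matrix (Fin n) (Fin n) ℝ) :
    specRad A = sSup {x : ℝ | ∃ μ ∈ spectrum ℂ (cmap A), x = ‖μ‖} := rfl

lemma cmap_mul (A B : Matrix (Fin n) (Fin n) ℝ) : cmap (A * B) = cmap A * cmap B := by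
  ext i j
  simp [cmap, Matrix.mul_apply]

lemma cmap_one : cmap (1 : Matrix (Fin n) (Fin n) ℝ) = 1 := by
  ext i j
  by_cases h : i = j <;> simp [cmap, Matrix.one_apply, h]

lemma cmap_sub (A B : Matrix (Fin n) (Fin n) ℝ) : cmap (A - B) = cmap A - cmap B := by
  ext i j; simp [cmap]

lemma cmap_pow (A : Matrix (Fin n) (Fin n) ℝ) (k : ℕ) : cmap (A ^ k) = cmap A ^ k := by
  induction k with
  | zero => simpa using cmap_one
  | succ k ih => rw [pow_succ, pow_succ, cmap_mul, ih]

lemma cmap_mulVec_apply (A : Matrix (Fin n) (Fin n) ℝ) (v : Fin n → ℂ) (i : Fin n) :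
    (cmap A *ᵥ v) i = ∑ j, (A i j : ℂ) * v j := by
  simp [cmap, Matrix.mulVec, dotProduct]

lemma sr_ne_top (hn : 0 < n) (M : Matrix (Fin n) (Fin n) ℂ) : spectralRadius ℂ M ≠ ⊤ := by
  haveI : Nonempty (Fin n) := Fin.pos_iff_nonempty.mp hn
  exact ((spectrum.spectralRadius_le_nnnorm (𝕜 := ℂ) M).trans_lt ENNReal.coe_lt_top).ne

lemma isGreatest_specRad (hn : 0 < n) (M : Matrix (Fin n) (Fin n) ℂ) :
    IsGreatest {x : ℝ | ∃ μ ∈ spectrum ℂ M, x = ‖μ‖}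
      ((spectralRadius ℂ M).toReal) := by
  haveI : Nonempty (Fin n) := Fin.pos_iff_nonempty.mp hn
  haveI : Nontrivial (Matrix (Fin n) (Fin n) ℂ) := by
    refine ⟨0, 1, fun h => ?_⟩
    have := congr_fun (congr_fun h ⟨0, hn⟩) ⟨0, hn⟩
    simp [Matrix.one_apply] at this
  constructor
  · obtain ⟨z, hz, hnorm⟩ := spectrum.exists_nnnorm_eq_spectralRadius M
    refine ⟨z, hz, ?_⟩
    rw [← hnorm, ENNReal.coe_toReal, coe_nnnorm]
  · rintro x ⟨μ, hμ, rfl⟩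
    have h1 : (‖μ‖₊ : ENNReal) ≤ spectralRadius ℂ M := by
      rw [spectralRadius]
      exact le_iSup₂ (f := fun k (_ : k ∈ spectrum ℂ M) => (‖k‖₊ : ENNReal)) μ hμ
    have := ENNReal.toReal_mono (sr_ne_top hn M) h1
    rwa [ENNReal.coe_toReal, coe_nnnorm] at this

lemma specRad_eq (hn : 0 < n) (A : Matrix (Fin n) (Fin n) ℝ) :
    specRad A = (spectralRadius ℂ (cmap A)).toReal :=
  (specRad_def A).trans (isGreatest_specRad hn (cmap A)).csSup_eq

lemma specRad_nonneg (hn : 0 < n) (A : Matrix (Fin n) (Fin n) ℝ) : 0 ≤ specRad A := by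
  rw [specRad_eq hn A]; exact ENNReal.toReal_nonneg

lemma exists_abs_eq_specRad (hn : 0 < n) (A : Matrix (Fin n) (Fin n) ℝ) :
    ∃ μ ∈ spectrum ℂ (cmap A), ‖μ‖ = specRad A := by
  obtain ⟨μ, hμ, h⟩ := (isGreatest_specRad hn (cmap A)).1
  exact ⟨μ, hμ, by rw [specRad_eq hn A, h]⟩

lemma abs_le_specRad (hn : 0 < n) (A : Matrix (Fin n) (Fin n) ℝ) {μ : ℂ}
    (hμ : μ ∈ spectrum ℂ (cmap A)) : ‖μ‖ ≤ specRad A := by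
  rw [specRad_eq hn A]
  exact (isGreatest_specRad hn (cmap A)).2 ⟨μ, hμ, rfl⟩

lemma mem_spectrum_iff_eigen {M : Matrix (Fin n) (Fin n) ℂ} {μ : ℂ} :
    μ ∈ spectrum ℂ M ↔ ∃ v, v ≠ 0 ∧ M *ᵥ v = μ • v := by
  rw [spectrum.mem_iff, Matrix.isUnit_iff_isUnit_det, isUnit_iff_ne_zero, not_ne_iff,
    ← Matrix.exists_mulVec_eq_zero_iff]
  constructor
  · rintro ⟨v, hv, heq⟩
    refine ⟨v, hv, ?_⟩
    have : (algebraMap ℂ (Matrix (Fin n) (Fin n) ℂ) μ - M) *ᵥ v = μ • v - M *ᵥ v := by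
      rw [Matrix.sub_mulVec, Algebra.algebraMap_eq_smul_one, Matrix.smul_mulVec,
        Matrix.one_mulVec]
    rw [this] at heq
    exact (sub_eq_zero.mp heq).symm
  · rintro ⟨v, hv, heq⟩
    refine ⟨v, hv, ?_⟩
    rw [Matrix.sub_mulVec, Algebra.algebraMap_eq_smul_one, Matrix.smul_mulVec,
      Matrix.one_mulVec, heq, sub_self]

lemma rowsum_le_norm (M : Matrix (Fin n) (Fin n) ℝ) (hM : ∀ i j, 0 ≤ M i j) (i : Fin n) :
    ∑ j, M i j ≤ ‖cmap M‖ := by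
  have h1 : (∑ j, ‖(cmap M) i j‖₊) ≤ ‖cmap M‖₊ := by
    rw [Matrix.linfty_opNNNorm_def]
    exact Finset.le_sup (f := fun i => ∑ j, ‖(cmap M) i j‖₊) (Finset.mem_univ i)
  have h2 : ((∑ j, ‖(cmap M) i j‖₊ : NNReal) : ℝ) = ∑ j, M i j := by
    push_cast
    refine Finset.sum_congr rfl fun j _ => ?_
    simp [cmap, abs_of_nonneg (hM i j)]
  calc ∑ j, M i j = _ := h2.symm
    _ ≤ (‖cmap M‖₊ : ℝ) := by exact_mod_cast h1
    _ = ‖cmap M‖ := rfl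

lemma tendsto_rpow_one_div (C : ℝ) (hC : 0 < C) :
    Tendsto (fun k : ℕ => C ^ ((k : ℝ)⁻¹)) atTop (nhds 1) := by
  have h : ∀ k : ℕ, C ^ ((k : ℝ)⁻¹) = Real.exp (Real.log C * (k : ℝ)⁻¹) := by
    intro k
    rw [Real.rpow_def_of_pos hC, mul_comm]
  simp_rw [h]
  have : Tendsto (fun k : ℕ => Real.log C * (k : ℝ)⁻¹) atTop (nhds 0) := by
    simpa using tendsto_const_nhds.mul (tendsto_inv_atTop_nhds_zero_nat (𝕜 := ℝ))
  simpa [Function.comp_def] using (Real.continuous_exp.tendsto 0).comp this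

lemma pow_entry_nonneg {A : Matrix (Fin n) (Fin n) ℝ} (hA : ∀ i j, 0 ≤ A i j) :
    ∀ k : ℕ, ∀ i j, 0 ≤ (A ^ k) i j := by
  intro k
  induction k with
  | zero => intro i j; by_cases hij : i = j <;> simp [Matrix.one_apply, hij]
  | succ k ih =>
    intro i j
    rw [pow_succ, Matrix.mul_apply]
    exact Finset.sum_nonneg fun l _ => mul_nonneg (ih i l) (hA l j)

/-- Collatz–Wielandt style upper bound via Gelfand's formula. -/
lemma le_specRad_of_mulVec (hn : 0 < n) {A : Matrix (Fin n) (Fin n) ℝ}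
    (hA : ∀ i j, 0 ≤ A i j) {w : Fin n → ℝ} (hw : ∀ i, 0 ≤ w i) {i₀ : Fin n}
    (hi₀ : 0 < w i₀) {s : ℝ} (hs : ∀ i, s * w i ≤ (A *ᵥ w) i) :
    s ≤ specRad A := by
  rcases le_or_gt s 0 with hneg | hpos
  · exact hneg.trans (specRad_nonneg hn A)
  have hpow : ∀ k : ℕ, ∀ i, s ^ k * w i ≤ ((A ^ k) *ᵥ w) i := by
    intro k
    induction k with
    | zero => intro i; simp [Matrix.one_mulVec]
    | succ k ih =>
      intro i
      have h1 : ((A ^ (k+1)) *ᵥ w) i = ∑ j, A i j * ((A ^ k) *ᵥ w) j := by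
        rw [pow_succ', ← Matrix.mulVec_mulVec]
        simp [Matrix.mulVec, dotProduct]
      rw [h1]
      have h2 : ∑ j, A i j * (s ^ k * w j) ≤ ∑ j, A i j * ((A ^ k) *ᵥ w) j :=
        Finset.sum_le_sum fun j _ => mul_le_mul_of_nonneg_left (ih j) (hA i j)
      calc s ^ (k+1) * w i = s ^ k * (s * w i) := by ring
        _ ≤ s ^ k * (A *ᵥ w) i :=
            mul_le_mul_of_nonneg_left (hs i) (pow_nonneg hpos.le k)
        _ = ∑ j, A i j * (s ^ k * w j) := by
            simp only [Matrix.mulVec, dotProduct, Finset.mul_sum]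
            exact Finset.sum_congr rfl fun j _ => by ring
        _ ≤ _ := h2
  set W : ℝ := ∑ i, w i with hW
  have hWpos : 0 < W := by
    refine Finset.sum_pos' (fun i _ => hw i) ⟨i₀, Finset.mem_univ i₀, hi₀⟩
  set C : ℝ := W / w i₀ with hC
  have hCpos : 0 < C := div_pos hWpos hi₀
  set a := cmap A with ha
  have key : ∀ k : ℕ, s ^ k ≤ C * ‖a ^ k‖ := by
    intro k
    have h1 : s ^ k * w i₀ ≤ ((A ^ k) *ᵥ w) i₀ := hpow k i₀
    have h2 : ((A ^ k) *ᵥ w) i₀ ≤ W * ∑ j, (A ^ k) i₀ j := by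
      simp only [Matrix.mulVec, dotProduct, Finset.mul_sum]
      refine Finset.sum_le_sum fun j _ => ?_
      have : w j ≤ W := Finset.single_le_sum (fun i _ => hw i) (Finset.mem_univ j)
      calc (A ^ k) i₀ j * w j ≤ (A ^ k) i₀ j * W :=
            mul_le_mul_of_nonneg_left this (pow_entry_nonneg hA k i₀ j)
        _ = W * (A ^ k) i₀ j := by ring
    have h3 : ∑ j, (A ^ k) i₀ j ≤ ‖a ^ k‖ := by
      rw [ha, ← cmap_pow]
      exact rowsum_le_norm _ (pow_entry_nonneg hA k) i₀
    have h4 : s ^ k * w i₀ ≤ W * ‖a ^ k‖ :=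
      h1.trans (h2.trans (mul_le_mul_of_nonneg_left h3 hWpos.le))
    rw [hC, div_mul_eq_mul_div, le_div_iff₀ hi₀]
    linarith [h4]
  have hg := spectrum.pow_norm_pow_one_div_tendsto_nhds_spectralRadius a
  have hne := sr_ne_top hn a
  have hlim : Tendsto (fun k : ℕ => ‖a ^ k‖ ^ ((k : ℝ)⁻¹)) atTop
      (nhds ((spectralRadius ℂ a).toReal)) := by
    have h1 := (ENNReal.tendsto_toReal hne).comp hg
    refine h1.congr fun k => ?_
    simp only [Function.comp_apply, one_div]
    exact ENNReal.toReal_ofReal (Real.rpow_nonneg (norm_nonneg _) _)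
  have hC1 : Tendsto (fun k : ℕ => C ^ ((k : ℝ)⁻¹)) atTop (nhds 1) :=
    tendsto_rpow_one_div C hCpos
  have hmul : Tendsto (fun k : ℕ => C ^ ((k : ℝ)⁻¹) * ‖a ^ k‖ ^ ((k : ℝ)⁻¹)) atTop
      (nhds ((spectralRadius ℂ a).toReal)) := by
    simpa using hC1.mul hlim
  rw [specRad_eq hn A, ← ha]
  refine ge_of_tendsto hmul ?_
  filter_upwards [eventually_ge_atTop 1] with k hk
  have hk0 : ((k : ℝ)) ≠ 0 := by
    have : (1 : ℝ) ≤ (k : ℝ) := by exact_mod_cast hk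
    linarith
  have hss : s = (s ^ k) ^ ((k : ℝ)⁻¹) := by
    rw [← Real.rpow_natCast s k, ← Real.rpow_mul hpos.le, mul_inv_cancel₀ hk0,
      Real.rpow_one]
  rw [hss]
  calc (s ^ k) ^ ((k : ℝ)⁻¹) ≤ (C * ‖a ^ k‖) ^ ((k : ℝ)⁻¹) :=
        Real.rpow_le_rpow (pow_nonneg hpos.le k) (key k) (inv_nonneg.mpr (Nat.cast_nonneg k))
    _ = C ^ ((k : ℝ)⁻¹) * ‖a ^ k‖ ^ ((k : ℝ)⁻¹) :=
        Real.mul_rpow hCpos.le (norm_nonneg _)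

/-- From an eigenvalue attaining the spectral radius, build a nonnegative
Collatz–Wielandt vector. -/
lemma exists_CW_vector (hn : 0 < n) {A : Matrix (Fin n) (Fin n) ℝ}
    (hA : ∀ i j, 0 ≤ A i j) :
    ∃ w : Fin n → ℝ, (∀ i, 0 ≤ w i) ∧ (∃ i, 0 < w i) ∧
      ∀ i, specRad A * w i ≤ (A *ᵥ w) i := by
  obtain ⟨μ, hμ, hμabs⟩ := exists_abs_eq_specRad hn A
  obtain ⟨v, hv, hva⟩ := mem_spectrum_iff_eigen.mp hμ
  refine ⟨fun i => ‖v i‖, fun i => (norm_nonneg _), ?_, ?_⟩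
  · obtain ⟨i, hi⟩ := Function.ne_iff.mp hv
    exact ⟨i, norm_pos_iff.mpr hi⟩
  · intro i
    have h1 : specRad A * ‖v i‖ = ‖(cmap A *ᵥ v) i‖ := by
      rw [hva, ← hμabs]
      simp [Pi.smul_apply, _root_.map_mul]
    rw [h1, cmap_mulVec_apply]
    calc ‖∑ j, (A i j : ℂ) * v j‖ ≤ ∑ j, ‖(A i j : ℂ) * v j‖ :=
          norm_sum_le _ _
      _ = (A *ᵥ (fun i => ‖v i‖)) i := by
          simp only [Matrix.mulVec, dotProduct]
          exact Finset.sum_congr rfl fun j _ => by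
            rw [norm_mul, Complex.norm_real, Real.norm_eq_abs, abs_of_nonneg (hA i j)]


lemma mulVec_mono_vec {A : Matrix (Fin n) (Fin n) ℝ} (hA : ∀ i j, 0 ≤ A i j)
    {u v : Fin n → ℝ} (h : ∀ i, u i ≤ v i) : ∀ i, (A *ᵥ u) i ≤ (A *ᵥ v) i := by
  intro i
  simp only [Matrix.mulVec, dotProduct]
  exact Finset.sum_le_sum fun j _ => mul_le_mul_of_nonneg_left (h j) (hA i j)

lemma mulVec_mono_mat {A B : Matrix (Fin n) (Fin n) ℝ} (hAB : ∀ i j, A i j ≤ B i j)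
    {w : Fin n → ℝ} (hw : ∀ i, 0 ≤ w i) : ∀ i, (A *ᵥ w) i ≤ (B *ᵥ w) i := by
  intro i
  simp only [Matrix.mulVec, dotProduct]
  exact Finset.sum_le_sum fun j _ => mul_le_mul_of_nonneg_right (hAB i j) (hw j)

lemma mul_entry_nonneg {A B : Matrix (Fin n) (Fin n) ℝ} (hA : ∀ i j, 0 ≤ A i j)
    (hB : ∀ i j, 0 ≤ B i j) : ∀ i j, 0 ≤ (A * B) i j := by
  intro i j
  rw [Matrix.mul_apply]
  exact Finset.sum_nonneg fun l _ => mul_nonneg (hA i l) (hB l j)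

lemma pow_mulVec_lower {A : Matrix (Fin n) (Fin n) ℝ} (hA : ∀ i j, 0 ≤ A i j)
    {w : Fin n → ℝ} {s : ℝ} (hs0 : 0 ≤ s)
    (hs : ∀ i, s * w i ≤ (A *ᵥ w) i) : ∀ k i, s ^ k * w i ≤ ((A ^ k) *ᵥ w) i := by
  intro k
  induction k with
  | zero => intro i; simp [Matrix.one_mulVec]
  | succ k ih =>
    intro i
    have h1 : ((A ^ (k+1)) *ᵥ w) i = ∑ j, A i j * ((A ^ k) *ᵥ w) j := by
      rw [pow_succ', ← Matrix.mulVec_mulVec]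
      simp [Matrix.mulVec, dotProduct]
    rw [h1]
    have h2 : ∑ j, A i j * (s ^ k * w j) ≤ ∑ j, A i j * ((A ^ k) *ᵥ w) j :=
      Finset.sum_le_sum fun j _ => mul_le_mul_of_nonneg_left (ih j) (hA i j)
    calc s ^ (k+1) * w i = s ^ k * (s * w i) := by ring
      _ ≤ s ^ k * (A *ᵥ w) i := mul_le_mul_of_nonneg_left (hs i) (pow_nonneg hs0 k)
      _ = ∑ j, A i j * (s ^ k * w j) := by
          simp only [Matrix.mulVec, dotProduct, Finset.mul_sum]
          exact Finset.sum_congr rfl fun j _ => by ring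
      _ ≤ _ := h2

lemma sum_mulVec_apply (m : ℕ) (f : ℕ → Matrix (Fin n) (Fin n) ℝ) (w : Fin n → ℝ) (i : Fin n) :
    ((∑ k ∈ Finset.range m, f k) *ᵥ w) i = ∑ k ∈ Finset.range m, ((f k) *ᵥ w) i := by
  simp only [Matrix.mulVec, dotProduct, Matrix.sum_apply, Finset.sum_mul]
  rw [Finset.sum_comm]

/-- main per-splitting bounds -/
lemma splitting_bounds (hn : 0 < n) {H B C : Matrix (Fin n) (Fin n) ℝ}
    (hsp : IsRegularSplitting H B C) (hH : IsUnit H) (hHinv : ∀ i j, 0 ≤ H⁻¹ i j) :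
    specRad (B⁻¹ * C) < 1 ∧
    specRad (B⁻¹ * C) / (1 - specRad (B⁻¹ * C)) ≤ specRad (H⁻¹ * C) ∧
    specRad (H⁻¹ * C) ≤ specRad (B⁻¹ * C) / (1 - specRad (B⁻¹ * C)) := by
  obtain ⟨hHBC, hB, hBinv, hC⟩ := hsp
  have hBdet : IsUnit B.det := (Matrix.isUnit_iff_isUnit_det B).mp hB
  have hHdet : IsUnit H.det := (Matrix.isUnit_iff_isUnit_det H).mp hH
  set T := B⁻¹ * C with hTdef
  set G := H⁻¹ * C with hGdef
  have hT : ∀ i j, 0 ≤ T i j := mul_entry_nonneg hBinv hC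
  have hGnn : ∀ i j, 0 ≤ G i j := mul_entry_nonneg hHinv hC
  have hTid : B⁻¹ * H = 1 - T := by
    rw [hHBC, mul_sub, Matrix.nonsing_inv_mul B hBdet, hTdef]
  have hGid : (1 - T) * G = T := by
    rw [← hTid, hGdef, mul_assoc, ← mul_assoc H, Matrix.mul_nonsing_inv H hHdet, one_mul]
  have hTG : G = T + T * G := by
    have h1 : G - T * G = T := by
      calc G - T * G = (1 - T) * G := by rw [sub_mul, one_mul]
        _ = T := hGid
    exact sub_eq_iff_eq_add.mp h1
  -- partial sums bounded by G
  have hSm : ∀ m : ℕ, ∀ i j, (∑ k ∈ Finset.range m, T ^ (k+1)) i j ≤ G i j := by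
    intro m
    induction m with
    | zero => intro i j; simpa using hGnn i j
    | succ m ih =>
      have hstep : (∑ k ∈ Finset.range (m+1), T ^ (k+1)) =
          T + T * (∑ k ∈ Finset.range m, T ^ (k+1)) := by
        rw [Finset.sum_range_succ', Finset.mul_sum, add_comm]
        congr 1
        · simp
        · exact Finset.sum_congr rfl fun k _ => by rw [← pow_succ']
      intro i j
      rw [hstep]
      have h2 : (T * (∑ k ∈ Finset.range m, T ^ (k+1))) i j ≤ (T * G) i j := by
        rw [Matrix.mul_apply, Matrix.mul_apply]
        exact Finset.sum_le_sum fun l _ =>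
          mul_le_mul_of_nonneg_left (ih l j) (hT i l)
      calc (T + T * ∑ k ∈ Finset.range m, T ^ (k+1)) i j
          = T i j + (T * ∑ k ∈ Finset.range m, T ^ (k+1)) i j := rfl
        _ ≤ T i j + (T * G) i j := by linarith
        _ = (T + T * G) i j := rfl
        _ = G i j := by rw [← hTG]
  set t := specRad T with htdef
  have ht0 : 0 ≤ t := specRad_nonneg hn T
  obtain ⟨w, hw, ⟨i₀, hi₀⟩, hcw⟩ := exists_CW_vector hn hT
  have hpowv := pow_mulVec_lower hT ht0 hcw
  -- partial geometric bounds
  have hgeo : ∀ m : ℕ, ∀ i, (∑ k ∈ Finset.range m, t ^ (k+1)) * w i ≤ (G *ᵥ w) i := by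
    intro m i
    have h1 : ((∑ k ∈ Finset.range m, T ^ (k+1)) *ᵥ w) i ≤ (G *ᵥ w) i :=
      mulVec_mono_mat (hSm m) hw i
    have h2 : (∑ k ∈ Finset.range m, t ^ (k+1)) * w i ≤
        ((∑ k ∈ Finset.range m, T ^ (k+1)) *ᵥ w) i := by
      rw [sum_mulVec_apply, Finset.sum_mul]
      exact Finset.sum_le_sum fun k _ => hpowv (k+1) i
    exact h2.trans h1
  -- t < 1
  have ht1 : t < 1 := by
    by_contra hcon
    push_neg at hcon
    have hbig : ∀ m : ℕ, (m : ℝ) * w i₀ ≤ (G *ᵥ w) i₀ := by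
      intro m
      refine le_trans ?_ (hgeo m i₀)
      have : (m : ℝ) ≤ ∑ k ∈ Finset.range m, t ^ (k+1) := by
        calc (m : ℝ) = ∑ _k ∈ Finset.range m, (1:ℝ) := by simp
          _ ≤ _ := Finset.sum_le_sum fun k _ => by
              simpa using pow_le_pow_left₀ zero_le_one hcon (k+1)
      exact mul_le_mul_of_nonneg_right this (hw i₀)
    obtain ⟨m, hm⟩ := exists_nat_gt ((G *ᵥ w) i₀ / w i₀)
    have := hbig m
    rw [← le_div_iff₀ hi₀] at this
    linarith
  constructor
  · exact ht1
  have h1t : 0 < 1 - t := by linarith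
  constructor
  · -- t/(1-t) ≤ specRad G
    have hgsum : Tendsto (fun m : ℕ => ∑ k ∈ Finset.range m, t ^ (k+1)) atTop
        (nhds (t / (1 - t))) := by
      have hsum := (hasSum_geometric_of_lt_one ht0 ht1).tendsto_sum_nat
      have h2 := hsum.const_mul t
      have h3 : t * (1 - t)⁻¹ = t / (1 - t) := (div_eq_mul_inv t (1-t)).symm
      rw [h3] at h2
      refine h2.congr fun m => ?_
      rw [Finset.mul_sum]
      exact Finset.sum_congr rfl fun k _ => (pow_succ' t k).symm
    have hlim : ∀ i, t / (1 - t) * w i ≤ (G *ᵥ w) i := by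
      intro i
      exact le_of_tendsto (hgsum.mul_const (w i))
        (Eventually.of_forall fun m => hgeo m i)
    exact le_specRad_of_mulVec hn hGnn hw hi₀ hlim
  · -- specRad G ≤ t/(1-t)
    obtain ⟨μ, hμ, hμabs⟩ := exists_abs_eq_specRad hn G
    obtain ⟨u, hu, hue⟩ := mem_spectrum_iff_eigen.mp hμ
    have hGidC : (1 - cmap T) * cmap G = cmap T := by
      rw [← cmap_one, ← cmap_sub, ← cmap_mul, hGid]
    have hy : cmap T *ᵥ u = μ • u - μ • (cmap T *ᵥ u) := by
      conv_lhs => rw [← hGidC]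
      rw [← Matrix.mulVec_mulVec, hue, Matrix.mulVec_smul, Matrix.sub_mulVec,
        Matrix.one_mulVec, smul_sub]
    have hkey : (1 + μ) • (cmap T *ᵥ u) = μ • u := by
      rw [add_smul, one_smul]
      nth_rewrite 1 [hy]
      abel
    have hμ1 : (1 : ℂ) + μ ≠ 0 := by
      intro hcon
      have hμne : μ ≠ 0 := by
        intro h0; rw [h0, add_zero] at hcon; exact one_ne_zero hcon
      rw [hcon, zero_smul] at hkey
      obtain h | h := smul_eq_zero.mp hkey.symm
      · exact hμne h
      · exact hu h
    have hlamEq : cmap T *ᵥ u = ((1 + μ)⁻¹ * μ) • u := by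
      have := congrArg (fun z => (1 + μ)⁻¹ • z) hkey
      simpa [smul_smul, inv_mul_cancel₀ hμ1] using this
    have hlamMem : ((1 + μ)⁻¹ * μ) ∈ spectrum ℂ (cmap T) :=
      mem_spectrum_iff_eigen.mpr ⟨u, hu, hlamEq⟩
    have habsLam : ‖(1 + μ)⁻¹ * μ‖ ≤ t := abs_le_specRad hn T hlamMem
    have hfac : ‖μ‖ ≤ t * (1 + ‖μ‖) := by
      have hμeq : μ = ((1 + μ)⁻¹ * μ) * (1 + μ) := by field_simp
      calc ‖μ‖ = ‖(1 + μ)⁻¹ * μ‖ * ‖1 + μ‖ := by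
            rw [← norm_mul]; exact congrArg (‖·‖) hμeq
        _ ≤ t * (1 + ‖μ‖) := by
            refine mul_le_mul habsLam ?_ (norm_nonneg _) ht0
            calc ‖1 + μ‖ ≤ ‖(1:ℂ)‖ + ‖μ‖ :=
                  norm_add_le 1 μ
              _ = 1 + ‖μ‖ := by rw [norm_one]
    rw [← hμabs, le_div_iff₀ h1t]
    nlinarith [norm_nonneg μ]
lemma specRad_mono (hn : 0 < n) {A B : Matrix (Fin n) (Fin n) ℝ}
    (hA : ∀ i j, 0 ≤ A i j) (hB : ∀ i j, 0 ≤ B i j) (hAB : ∀ i j, A i j ≤ B i j) :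
    specRad A ≤ specRad B := by
  obtain ⟨w, hw, ⟨i₀, hi₀⟩, hcw⟩ := exists_CW_vector hn hA
  refine le_specRad_of_mulVec hn hB hw hi₀ fun i => ?_
  exact (hcw i).trans (mulVec_mono_mat hAB hw i)

end SpecRadAux

/-- Comparison of regular splittings: if `H = B₁ - C₁ = B₂ - C₂` are
regular splittings, `H` is invertible with entrywise-nonnegative inverse, and
`0 ≤ C₂ ≤ C₁` entrywise, then `0 ≤ ρ(B₂⁻¹C₂) ≤ ρ(B₁⁻¹C₁) < 1`. -/
theorem stmt_2 {n : ℕ} (hn : 1 ≤ n)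
    (H B₁ C₁ B₂ C₂ : Matrix (Fin n) (Fin n) ℝ)
    (h1 : IsRegularSplitting H B₁ C₁) (h2 : IsRegularSplitting H B₂ C₂)
    (hH : IsUnit H) (hHinv : ∀ i j, 0 ≤ H⁻¹ i j)
    (hC2nonneg : ∀ i j, 0 ≤ C₂ i j) (hle : ∀ i j, C₂ i j ≤ C₁ i j) :
    0 ≤ specRad (B₂⁻¹ * C₂) ∧
    specRad (B₂⁻¹ * C₂) ≤ specRad (B₁⁻¹ * C₁) ∧
    specRad (B₁⁻¹ * C₁) < 1 := by
  have hn0 : 0 < n := hn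
  obtain ⟨h1lt, h1low, h1up⟩ := SpecRadAux.splitting_bounds hn0 h1 hH hHinv
  obtain ⟨h2lt, h2low, h2up⟩ := SpecRadAux.splitting_bounds hn0 h2 hH hHinv
  have hGmono : specRad (H⁻¹ * C₂) ≤ specRad (H⁻¹ * C₁) :=
    SpecRadAux.specRad_mono hn0 (SpecRadAux.mul_entry_nonneg hHinv hC2nonneg)
      (SpecRadAux.mul_entry_nonneg hHinv h1.2.2.2)
      (fun i j => by
        rw [Matrix.mul_apply, Matrix.mul_apply]
        exact Finset.sum_le_sum fun l _ => mul_le_mul_of_nonneg_left (hle l j) (hHinv i l))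
  set t₁ := specRad (B₁⁻¹ * C₁) with ht₁
  set t₂ := specRad (B₂⁻¹ * C₂) with ht₂
  have ht₂0 : 0 ≤ t₂ := SpecRadAux.specRad_nonneg hn0 _
  have ht₁0 : 0 ≤ t₁ := SpecRadAux.specRad_nonneg hn0 _
  have hchain : t₂ / (1 - t₂) ≤ t₁ / (1 - t₁) := le_trans h2low (le_trans hGmono h1up)
  refine ⟨ht₂0, ?_, h1lt⟩
  rw [div_le_div_iff₀ (by linarith) (by linarith)] at hchain
  nlinarith
end

section
/- Let H be an n×n real matrix (n ≥ 1) admitting two regular splittings H = B₁ - C₁ and H = B₂ - C₂. If H is invertible, every entry of H⁻¹ is strictly positive, 0 ≤ C₂ ≤ C₁ entrywise, C₁ ≠ 0, C₂ ≠ 0, and C₁ - C₂ ≠ 0, then 0 < ρ(B₂⁻¹ C₂) < ρ(B₁⁻¹ C₁) < 1. -/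
open Matrix

namespace PFAux

variable {n : ℕ}

lemma spec_iff (M : Matrix (Fin n) (Fin n) ℂ) (μ : ℂ) :
    μ ∈ spectrum ℂ M ↔ ∃ v ≠ 0, M.mulVec v = μ • v := by
  rw [spectrum.mem_iff, Matrix.isUnit_iff_isUnit_det, isUnit_iff_ne_zero, not_ne_iff,
    ← Matrix.exists_mulVec_eq_zero_iff]
  have key : ∀ v, (algebraMap ℂ (Matrix (Fin n) (Fin n) ℂ) μ - M).mulVec v
      = μ • v - M.mulVec v := by
    intro v
    rw [Matrix.sub_mulVec, Matrix.algebraMap_eq_diagonal]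
    congr 1
    funext i
    simp [Matrix.mulVec_diagonal]
  constructor
  · rintro ⟨v, hv, h⟩
    exact ⟨v, hv, ((sub_eq_zero.mp (by rw [key] at h; exact h))).symm⟩
  · rintro ⟨v, hv, h⟩
    exact ⟨v, hv, by rw [key, h, sub_self]⟩

lemma charpoly_eval (M : Matrix (Fin n) (Fin n) ℂ) (μ : ℂ) :
    M.charpoly.eval μ = (algebraMap ℂ (Matrix (Fin n) (Fin n) ℂ) μ - M).det := by
  rw [Matrix.charpoly, ← Polynomial.coe_evalRingHom, RingHom.map_det]
  congr 1
  funext i j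
  by_cases h : i = j <;>
    simp [h, Matrix.charmatrix_apply, Matrix.algebraMap_matrix_apply, Matrix.diagonal_apply]

lemma spec_eq_roots (M : Matrix (Fin n) (Fin n) ℂ) :
    spectrum ℂ M = {μ | M.charpoly.IsRoot μ} := by
  ext μ
  rw [spectrum.mem_iff, Matrix.isUnit_iff_isUnit_det, isUnit_iff_ne_zero, not_ne_iff]
  simp [Polynomial.IsRoot, charpoly_eval]

lemma spec_finite (M : Matrix (Fin n) (Fin n) ℂ) : (spectrum ℂ M).Finite := by
  rw [spec_eq_roots]
  exact Polynomial.finite_setOf_isRoot M.charpoly_monic.ne_zero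

lemma spec_nonempty (hn : 1 ≤ n) (M : Matrix (Fin n) (Fin n) ℂ) :
    (spectrum ℂ M).Nonempty := by
  rw [spec_eq_roots]
  obtain ⟨μ, hμ⟩ := IsAlgClosed.exists_root (p := M.charpoly) (by
    rw [Matrix.charpoly_degree_eq_dim, Fintype.card_fin]
    intro h; simp at h; omega)
  exact ⟨μ, hμ⟩

/-- The set whose sSup is `specRad`. -/
lemma eigAbsSet_finite (A : Matrix (Fin n) (Fin n) ℝ) :
    {x : ℝ | ∃ μ ∈ spectrum ℂ (A.map (Complex.ofReal ·)), x = ‖μ‖}.Finite := by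
  apply Set.Finite.subset ((spec_finite (A.map (Complex.ofReal ·))).image (‖·‖))
  rintro x ⟨μ, hμ, rfl⟩
  exact ⟨μ, hμ, rfl⟩

lemma le_specRad (hn : 1 ≤ n) (A : Matrix (Fin n) (Fin n) ℝ) {μ : ℂ}
    (hμ : μ ∈ spectrum ℂ (A.map (Complex.ofReal ·))) : ‖μ‖ ≤ specRad A :=
  le_csSup (eigAbsSet_finite A).bddAbove ⟨μ, hμ, rfl⟩

lemma specRad_attained (hn : 1 ≤ n) (A : Matrix (Fin n) (Fin n) ℝ) :
    ∃ μ ∈ spectrum ℂ (A.map (Complex.ofReal ·)), specRad A = ‖μ‖ := by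
  have hne : {x : ℝ | ∃ μ ∈ spectrum ℂ (A.map (Complex.ofReal ·)),
      x = ‖μ‖}.Nonempty := by
    obtain ⟨μ, hμ⟩ := spec_nonempty hn (A.map (Complex.ofReal ·))
    exact ⟨‖μ‖, μ, hμ, rfl⟩
  exact hne.csSup_mem (eigAbsSet_finite A)

lemma specRad_nonneg (hn : 1 ≤ n) (A : Matrix (Fin n) (Fin n) ℝ) : 0 ≤ specRad A := by
  obtain ⟨μ, _, h⟩ := specRad_attained hn A
  rw [h]; exact norm_nonneg _

lemma mem_spectrum_of_real_eig (A : Matrix (Fin n) (Fin n) ℝ) {t : ℝ} {x : Fin n → ℝ}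
    (hx : x ≠ 0) (h : A.mulVec x = t • x) :
    (t : ℂ) ∈ spectrum ℂ (A.map (Complex.ofReal ·)) := by
  rw [spec_iff]
  refine ⟨fun i => (x i : ℂ), ?_, ?_⟩
  · intro hv
    apply hx
    funext i
    have := congrFun hv i
    simpa using this
  · funext i
    have hi := congrFun h i
    simp only [Matrix.mulVec, dotProduct, Pi.smul_apply, smul_eq_mul] at hi ⊢
    simp only [Matrix.map_apply]
    exact_mod_cast congrArg (Complex.ofReal) hi

variable {n : ℕ}

lemma exists_pos {x : Fin n → ℝ} (h0 : ∀ i, 0 ≤ x i) (hne : x ≠ 0) : ∃ i, 0 < x i := by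
  by_contra h
  push_neg at h
  exact hne (funext fun i => le_antisymm (h i) (h0 i))

lemma mulVec_apply' (M : Matrix (Fin n) (Fin n) ℝ) (v : Fin n → ℝ) (i : Fin n) :
    M.mulVec v i = ∑ j, M i j * v j := rfl

lemma mulVec_nonneg {M : Matrix (Fin n) (Fin n) ℝ} (hM : ∀ i j, 0 ≤ M i j)
    {x : Fin n → ℝ} (hx : ∀ i, 0 ≤ x i) (i : Fin n) : 0 ≤ M.mulVec x i := by
  rw [mulVec_apply']
  exact Finset.sum_nonneg fun j _ => mul_nonneg (hM i j) (hx j)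

lemma single_le_mulVec {M : Matrix (Fin n) (Fin n) ℝ} (hM : ∀ i j, 0 ≤ M i j)
    {x : Fin n → ℝ} (hx : ∀ i, 0 ≤ x i) (i j : Fin n) : M i j * x j ≤ M.mulVec x i :=
  Finset.single_le_sum (f := fun j => M i j * x j)
    (fun k _ => mul_nonneg (hM i k) (hx k)) (Finset.mem_univ j)

lemma mulVec_pos {M : Matrix (Fin n) (Fin n) ℝ} (hM : ∀ i j, 0 < M i j)
    {x : Fin n → ℝ} (hx : ∀ i, 0 ≤ x i) (hne : x ≠ 0) (i : Fin n) : 0 < M.mulVec x i := by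
  obtain ⟨j, hj⟩ := exists_pos hx hne
  calc (0:ℝ) < M i j * x j := mul_pos (hM i j) hj
  _ ≤ _ := single_le_mulVec (fun a b => (hM a b).le) hx i j

lemma mulVec_mono {M N : Matrix (Fin n) (Fin n) ℝ} (h : ∀ i j, M i j ≤ N i j)
    {x : Fin n → ℝ} (hx : ∀ i, 0 ≤ x i) (i : Fin n) : M.mulVec x i ≤ N.mulVec x i := by
  rw [mulVec_apply', mulVec_apply']
  exact Finset.sum_le_sum fun j _ => mul_le_mul_of_nonneg_right (h i j) (hx j)

lemma cw_pair (hn : 1 ≤ n) {v w : Fin n → ℝ} (hv : ∀ i, 0 < v i) (hw : ∀ i, 0 < w i) :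
    ∃ t > 0, ∀ i, t * v i ≤ w i := by
  haveI : Nonempty (Fin n) := ⟨⟨0, hn⟩⟩
  obtain ⟨iM, -, hiM⟩ := Finset.exists_max_image Finset.univ v Finset.univ_nonempty
  obtain ⟨im, -, him⟩ := Finset.exists_min_image Finset.univ w Finset.univ_nonempty
  have hd : 0 < w im / v iM := div_pos (hw im) (hv iM)
  refine ⟨w im / v iM, hd, fun i => ?_⟩
  calc w im / v iM * v i ≤ w im / v iM * v iM :=
        mul_le_mul_of_nonneg_left (hiM i (Finset.mem_univ i)) hd.le
  _ = w im := div_mul_cancel₀ _ (hv iM).ne'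
  _ ≤ w i := him i (Finset.mem_univ i)

theorem posPerron (hn : 1 ≤ n) (P : Matrix (Fin n) (Fin n) ℝ) (hP : ∀ i j, 0 < P i j) :
    ∃ r x, 0 ≤ r ∧ (∀ i, 0 ≤ x i) ∧ (∑ i, x i = 1) ∧ P.mulVec x = r • x ∧
      ∀ t (y : Fin n → ℝ), (∀ i, 0 ≤ y i) → y ≠ 0 →
        (∀ i, t * y i ≤ P.mulVec y i) → t ≤ r := by
  haveI : Nonempty (Fin n) := ⟨⟨0, hn⟩⟩
  have hn' : (0:ℝ) < n := by positivity
  set c : ℝ := 1 + ∑ i, ∑ j, P i j with hc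
  have hc0 : 0 < c := by
    have : (0:ℝ) ≤ ∑ i, ∑ j, P i j :=
      Finset.sum_nonneg fun i _ => Finset.sum_nonneg fun j _ => (hP i j).le
    linarith
  have hcP : ∀ i j, P i j ≤ c := by
    intro i j
    have h1 : P i j ≤ ∑ j', P i j' :=
      Finset.single_le_sum (fun k _ => (hP i k).le) (Finset.mem_univ j)
    have h2 : ∑ j', P i j' ≤ ∑ i', ∑ j', P i' j' :=
      Finset.single_le_sum (f := fun i' => ∑ j', P i' j')
        (fun k _ => Finset.sum_nonneg fun l _ => (hP k l).le) (Finset.mem_univ i)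
    simp only [hc]; linarith
  set T : ℝ := n * c + 1 with hT
  have bound : ∀ t (y : Fin n → ℝ), 0 ≤ t → (∀ i, 0 ≤ y i) → (∑ i, y i) = 1 →
      (∀ i, t * y i ≤ P.mulVec y i) → t ≤ n * c := by
    intro t y ht hy hsum hcw
    obtain ⟨i₀, hi₀⟩ : ∃ i, (n:ℝ)⁻¹ ≤ y i := by
      by_contra hco
      push_neg at hco
      have h1 : (1:ℝ) < 1 := by
        calc (1:ℝ) = ∑ i, y i := hsum.symm
        _ < ∑ _i : Fin n, (n:ℝ)⁻¹ :=
            Finset.sum_lt_sum_of_nonempty Finset.univ_nonempty (fun i _ => hco i)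
        _ = 1 := by
            rw [Finset.sum_const, Finset.card_univ, Fintype.card_fin, nsmul_eq_mul]
            field_simp
      exact lt_irrefl _ h1
    have h1 : t * y i₀ ≤ c := by
      calc t * y i₀ ≤ P.mulVec y i₀ := hcw i₀
      _ = ∑ j, P i₀ j * y j := rfl
      _ ≤ ∑ j, c * y j :=
          Finset.sum_le_sum fun j _ => mul_le_mul_of_nonneg_right (hcP i₀ j) (hy j)
      _ = c := by rw [← Finset.mul_sum, hsum, mul_one]
    have h2 : t * (n:ℝ)⁻¹ ≤ c := le_trans (mul_le_mul_of_nonneg_left hi₀ ht) h1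
    have h3 : t = t * (n:ℝ)⁻¹ * n := by field_simp
    rw [h3]
    calc t * (n:ℝ)⁻¹ * n ≤ c * n := mul_le_mul_of_nonneg_right h2 hn'.le
    _ = n * c := mul_comm _ _
  -- the compact feasible set
  set E : Set (ℝ × (Fin n → ℝ)) := {p | 0 ≤ p.1 ∧ p.1 ≤ T ∧ (∀ i, 0 ≤ p.2 i) ∧
    (∑ i, p.2 i) = 1 ∧ ∀ i, p.1 * p.2 i ≤ P.mulVec p.2 i} with hE
  have hmvc : ∀ i, Continuous fun p : ℝ × (Fin n → ℝ) => P.mulVec p.2 i := by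
    intro i
    have : (fun p : ℝ × (Fin n → ℝ) => P.mulVec p.2 i)
        = fun p : ℝ × (Fin n → ℝ) => ∑ j, P i j * p.2 j := by
      funext p; rw [mulVec_apply']
    rw [this]
    fun_prop
  have hclosed : IsClosed E := by
    have hrep : E = ({p : ℝ × (Fin n → ℝ) | 0 ≤ p.1} ∩ {p | p.1 ≤ T}
        ∩ (⋂ i, {p : ℝ × (Fin n → ℝ) | 0 ≤ p.2 i}) ∩ {p : ℝ × (Fin n → ℝ) | ∑ i, p.2 i = 1}
        ∩ ⋂ i, {p : ℝ × (Fin n → ℝ) | p.1 * p.2 i ≤ P.mulVec p.2 i}) := by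
      ext p
      simp only [hE, Set.mem_setOf_eq, Set.mem_inter_iff, Set.mem_iInter]
      tauto
    rw [hrep]
    refine (((IsClosed.inter ?_ ?_).inter ?_).inter ?_).inter ?_
    · exact isClosed_le continuous_const continuous_fst
    · exact isClosed_le continuous_fst continuous_const
    · exact isClosed_iInter fun i =>
        isClosed_le continuous_const ((continuous_apply i).comp continuous_snd)
    · exact isClosed_eq (by fun_prop) continuous_const
    · exact isClosed_iInter fun i =>
        isClosed_le (continuous_fst.mul ((continuous_apply i).comp continuous_snd)) (hmvc i)
  have hsub : E ⊆ Set.Icc (0:ℝ) T ×ˢ Set.Icc (0 : Fin n → ℝ) 1 := by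
    rintro ⟨t, y⟩ ⟨h0, hTt, hy, hsum, -⟩
    refine ⟨⟨h0, hTt⟩, ?_, ?_⟩
    · intro i; exact hy i
    · intro i
      calc y i ≤ ∑ j, y j := Finset.single_le_sum (fun k _ => hy k) (Finset.mem_univ i)
      _ = 1 := hsum
  have hcompact : IsCompact E :=
    (isCompact_Icc.prod isCompact_Icc).of_isClosed_subset hclosed hsub
  have hEne : E.Nonempty := by
    refine ⟨(0, fun _ => (n:ℝ)⁻¹), le_refl _, by positivity, fun i => by positivity, ?_, ?_⟩
    · rw [Finset.sum_const, Finset.card_univ, Fintype.card_fin, nsmul_eq_mul]; field_simp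
    · intro i
      rw [zero_mul]
      exact mulVec_nonneg (fun a b => (hP a b).le) (fun _ => by positivity) i
  obtain ⟨⟨r, x⟩, hmem, hmax⟩ := hcompact.exists_isMaxOn hEne continuous_fst.continuousOn
  obtain ⟨hr0, hrT, hx0, hxsum, hxcw⟩ := hmem
  have hxne : x ≠ 0 := by
    intro h0
    rw [h0] at hxsum
    simp at hxsum
  -- CW property first
  have cw : ∀ t (y : Fin n → ℝ), (∀ i, 0 ≤ y i) → y ≠ 0 →
      (∀ i, t * y i ≤ P.mulVec y i) → t ≤ r := by
    intro t y hy hyne hcw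
    rcases le_or_gt t 0 with ht | ht
    · exact le_trans ht hr0
    · set s : ℝ := ∑ i, y i with hs
      have hs0 : 0 < s := by
        obtain ⟨j, hj⟩ := exists_pos hy hyne
        have : y j ≤ s := Finset.single_le_sum (fun k _ => hy k) (Finset.mem_univ j)
        linarith
      set y' : Fin n → ℝ := s⁻¹ • y with hy'
      have hy'0 : ∀ i, 0 ≤ y' i := fun i => mul_nonneg (by positivity) (hy i)
      have hy'sum : ∑ i, y' i = 1 := by
        simp only [hy', Pi.smul_apply, smul_eq_mul, ← Finset.mul_sum, ← hs]
        field_simp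
      have hcw' : ∀ i, t * y' i ≤ P.mulVec y' i := by
        intro i
        have := hcw i
        have hPy : P.mulVec y' i = s⁻¹ * P.mulVec y i := by
          rw [hy', Matrix.mulVec_smul]
          simp
        rw [hPy]
        simp only [hy', Pi.smul_apply, smul_eq_mul]
        rw [mul_left_comm]
        exact mul_le_mul_of_nonneg_left (hcw i) (by positivity)
      have hbd : t ≤ n * c := bound t y' ht.le hy'0 hy'sum hcw'
      have hmem' : ((t, y') : ℝ × (Fin n → ℝ)) ∈ E := ⟨ht.le, by rw [hT]; linarith, hy'0, hy'sum, hcw'⟩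
      exact hmax hmem'
  -- eigen equation
  have heig : P.mulVec x = r • x := by
    by_contra hne
    set d : Fin n → ℝ := P.mulVec x - r • x with hd
    have hd0 : ∀ i, 0 ≤ d i := fun i => by
      have := hxcw i
      simp only [hd, Pi.sub_apply, Pi.smul_apply, smul_eq_mul]
      linarith
    have hdne : d ≠ 0 := fun h => hne (by rwa [hd, sub_eq_zero] at h)
    set y : Fin n → ℝ := P.mulVec x with hy
    have hypos : ∀ i, 0 < y i := mulVec_pos hP hx0 hxne
    have hPd : ∀ i, 0 < P.mulVec d i := mulVec_pos hP hd0 hdne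
    have key : ∀ i, P.mulVec y i - r * y i = P.mulVec d i := by
      intro i
      have : P.mulVec d = P.mulVec y - r • P.mulVec x := by
        rw [hd, Matrix.mulVec_sub, Matrix.mulVec_smul]
      have := congrFun this i
      simp only [Pi.sub_apply, Pi.smul_apply, smul_eq_mul] at this
      rw [this, ← hy]
    obtain ⟨δ, hδ0, hδ⟩ := cw_pair hn hypos hPd
    have hry : ∀ i, (r + δ) * y i ≤ P.mulVec y i := by
      intro i
      have h1 := hδ i
      have h2 := key i
      nlinarith [hypos i]
    have : r + δ ≤ r := cw (r + δ) y (fun i => (hypos i).le) (fun h => (hypos ⟨0, hn⟩).ne' (congrFun h ⟨0, hn⟩)) hry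
    linarith
  exact ⟨r, x, hr0, hx0, hxsum, heig, cw⟩

theorem perron (hn : 1 ≤ n) (A : Matrix (Fin n) (Fin n) ℝ) (hA : ∀ i j, 0 ≤ A i j) :
    (∃ x, (∀ i, 0 ≤ x i) ∧ x ≠ 0 ∧ A.mulVec x = specRad A • x) ∧
      ∀ t (y : Fin n → ℝ), (∀ i, 0 ≤ y i) → y ≠ 0 →
        (∀ i, t * y i ≤ A.mulVec y i) → t ≤ specRad A := by
  haveI : Nonempty (Fin n) := ⟨⟨0, hn⟩⟩
  set P : ℕ → Matrix (Fin n) (Fin n) ℝ :=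
    fun k => A + (((k:ℝ) + 1)⁻¹) • Matrix.of (fun _ _ => (1:ℝ)) with hPdef
  have hPapp : ∀ k i j, P k i j = A i j + ((k:ℝ)+1)⁻¹ := by
    intro k i j
    simp [hPdef]
  have hPpos : ∀ (k : ℕ), ∀ i j, 0 < P k i j := fun k i j => by
    rw [hPapp]
    have := hA i j
    positivity
  have hPmono : ∀ (k : ℕ), ∀ i j, P (k+1) i j ≤ P k i j := by
    intro k i j
    rw [hPapp, hPapp]
    have : ((k:ℝ)+1+1)⁻¹ ≤ ((k:ℝ)+1)⁻¹ := by
      apply inv_anti₀ <;> push_cast <;> linarith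
    push_cast
    linarith
  have hAP : ∀ (k : ℕ), ∀ i j, A i j ≤ P k i j := by
    intro k i j
    rw [hPapp]
    have : (0:ℝ) < ((k:ℝ)+1)⁻¹ := by positivity
    linarith
  choose r x hr0 hx0 hxsum heig hcw using fun k => posPerron hn (P k) (hPpos k)
  have hxne : ∀ k, x k ≠ 0 := fun k h => by
    have := hxsum k
    rw [h] at this
    simp at this
  have hanti : Antitone r := antitone_nat_of_succ_le (fun k => by
    apply hcw k _ (x (k+1)) (hx0 (k+1)) (hxne (k+1))
    intro i
    have h1 : r (k+1) * x (k+1) i = (P (k+1)).mulVec (x (k+1)) i := by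
      rw [heig]; simp
    rw [h1]
    exact mulVec_mono (hPmono k) (hx0 (k+1)) i)
  have hbdd : BddBelow (Set.range r) := ⟨0, by rintro - ⟨k, rfl⟩; exact hr0 k⟩
  set R := ⨅ k, r k with hR
  have htendsto : Filter.Tendsto r Filter.atTop (nhds R) := tendsto_atTop_ciInf hanti hbdd
  -- compact simplex
  set Δ : Set (Fin n → ℝ) := {y | (∀ i, 0 ≤ y i) ∧ ∑ i, y i = 1} with hΔ
  have hΔc : IsCompact Δ := by
    apply IsCompact.of_isClosed_subset (isCompact_Icc (a := (0 : Fin n → ℝ)) (b := 1))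
    · have hrep : Δ = (⋂ i, {y : Fin n → ℝ | 0 ≤ y i}) ∩ {y : Fin n → ℝ | ∑ i, y i = 1} := by
        ext y
        simp only [hΔ, Set.mem_setOf_eq, Set.mem_inter_iff, Set.mem_iInter]
      rw [hrep]
      exact IsClosed.inter
        (isClosed_iInter fun i => isClosed_le continuous_const (continuous_apply i))
        (isClosed_eq (by fun_prop) continuous_const)
    · rintro y ⟨hy, hsum⟩
      refine ⟨fun i => hy i, fun i => ?_⟩
      calc y i ≤ ∑ j, y j := Finset.single_le_sum (fun k _ => hy k) (Finset.mem_univ i)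
      _ = 1 := hsum
  obtain ⟨z, hzΔ, φ, hφ, hzt⟩ := hΔc.tendsto_subseq (x := x) (fun k => ⟨hx0 k, hxsum k⟩)
  have hzne : z ≠ 0 := fun h => by
    have := hzΔ.2
    rw [h] at this
    simp at this
  -- limit eigen equation
  have hsplit : ∀ (m : ℕ) i, A.mulVec (x m) i = r m * x m i - ((m:ℝ)+1)⁻¹ := by
    intro m i
    have h := congrFun (heig m) i
    have h2 : (P m).mulVec (x m) i = A.mulVec (x m) i + ((m:ℝ)+1)⁻¹ := by
      rw [mulVec_apply', mulVec_apply']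
      have : ∀ j, P m i j * x m j = A i j * x m j + ((m:ℝ)+1)⁻¹ * x m j := by
        intro j
        rw [hPapp]
        ring
      rw [Finset.sum_congr rfl fun j _ => this j, Finset.sum_add_distrib, ← Finset.mul_sum,
        hxsum m, mul_one]
    rw [h2] at h
    simp only [Pi.smul_apply, smul_eq_mul] at h
    linarith
  have hAz : A.mulVec z = R • z := by
    funext i
    have cont : Continuous fun y : Fin n → ℝ => A.mulVec y i := by
      have : (fun y : Fin n → ℝ => A.mulVec y i) = fun y => ∑ j, A i j * y j := by
        funext y; rw [mulVec_apply']
      rw [this]; fun_prop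
    have seq1 : Filter.Tendsto (fun k => A.mulVec (x (φ k)) i) Filter.atTop
        (nhds (A.mulVec z i)) := (cont.tendsto z).comp hzt
    have hφtop : Filter.Tendsto φ Filter.atTop Filter.atTop := hφ.tendsto_atTop
    have seqr : Filter.Tendsto (fun k => r (φ k)) Filter.atTop (nhds R) :=
      htendsto.comp hφtop
    have seqx : Filter.Tendsto (fun k => x (φ k) i) Filter.atTop (nhds (z i)) :=
      (((continuous_apply i).tendsto z)).comp hzt
    have seqinv : Filter.Tendsto (fun k => (((φ k : ℕ):ℝ)+1)⁻¹) Filter.atTop (nhds 0) := by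
      apply Filter.Tendsto.comp tendsto_inv_atTop_zero
      apply Filter.tendsto_atTop_add_const_right
      exact tendsto_natCast_atTop_atTop.comp hφtop
    have seq2 : Filter.Tendsto (fun k => r (φ k) * x (φ k) i - (((φ k : ℕ):ℝ)+1)⁻¹)
        Filter.atTop (nhds (R * z i - 0)) := (seqr.mul seqx).sub seqinv
    have e1 : (fun k => A.mulVec (x (φ k)) i)
        = fun k => r (φ k) * x (φ k) i - (((φ k : ℕ):ℝ)+1)⁻¹ :=
      funext fun k => hsplit (φ k) i
    rw [e1] at seq1
    have := tendsto_nhds_unique seq1 seq2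
    rw [this]
    simp
  -- CW property for A
  have cwA : ∀ t (y : Fin n → ℝ), (∀ i, 0 ≤ y i) → y ≠ 0 →
      (∀ i, t * y i ≤ A.mulVec y i) → t ≤ R := by
    intro t y hy hyne hineq
    refine le_ciInf fun k => hcw k t y hy hyne fun i => ?_
    exact le_trans (hineq i) (mulVec_mono (hAP k) hy i)
  -- R = specRad A
  have hle : R ≤ specRad A := by
    have hmem := mem_spectrum_of_real_eig A hzne hAz
    have := le_specRad hn A hmem
    rw [Complex.norm_real, Real.norm_eq_abs] at this
    exact le_trans (le_abs_self R) this
  have hge : specRad A ≤ R := by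
    obtain ⟨μ, hμ, hrad⟩ := specRad_attained hn A
    obtain ⟨v, hvne, hv⟩ := (spec_iff _ μ).mp hμ
    set u : Fin n → ℝ := fun i => ‖v i‖ with hu
    have hu0 : ∀ i, 0 ≤ u i := fun i => norm_nonneg _
    have hune : u ≠ 0 := by
      intro h
      apply hvne
      funext i
      have := congrFun h i
      simp only [hu, Pi.zero_apply] at this ⊢
      exact norm_eq_zero.mp this
    have hineq : ∀ i, ‖μ‖ * u i ≤ A.mulVec u i := by
      intro i
      have h1 : ‖μ‖ * u i = ‖(μ • v) i‖ := by
        simp [hu, norm_mul]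
      rw [h1, ← hv]
      have h2 : (A.map (Complex.ofReal ·)).mulVec v i = ∑ j, (A i j : ℂ) * v j := by
        rw [show (A.map (Complex.ofReal ·)).mulVec v i
          = ∑ j, (A.map (Complex.ofReal ·)) i j * v j from rfl]
        simp [Matrix.map_apply]
      rw [h2, mulVec_apply']
      calc ‖∑ j, (A i j : ℂ) * v j‖ ≤ ∑ j, ‖(A i j : ℂ) * v j‖ :=
            norm_sum_le _ _
      _ = ∑ j, A i j * u j := by
          apply Finset.sum_congr rfl
          intro j _
          rw [norm_mul, Complex.norm_real, Real.norm_eq_abs, abs_of_nonneg (hA i j)]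
      _ ≤ _ := le_refl _
    rw [hrad]
    exact cwA _ u hu0 hune hineq
  have hR : specRad A = R := le_antisymm hge hle
  rw [hR]
  exact ⟨⟨z, hzΔ.1, hzne, hAz⟩, cwA⟩
lemma mul_nonneg_entries {M N : Matrix (Fin n) (Fin n) ℝ} (hM : ∀ i j, 0 ≤ M i j)
    (hN : ∀ i j, 0 ≤ N i j) : ∀ i j, 0 ≤ (M * N) i j := by
  intro i j
  rw [Matrix.mul_apply]
  exact Finset.sum_nonneg fun k _ => mul_nonneg (hM i k) (hN k j)

lemma col_pos {H C : Matrix (Fin n) (Fin n) ℝ} (hHinv : ∀ i j, 0 < H⁻¹ i j)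
    (hC : ∀ i j, 0 ≤ C i j) {q : Fin n} (hq : ∃ p, C p q ≠ 0) :
    ∀ i, 0 < (H⁻¹ * C) i q := by
  intro i
  obtain ⟨p, hp⟩ := hq
  have hp' : 0 < C p q := lt_of_le_of_ne (hC p q) (Ne.symm hp)
  rw [Matrix.mul_apply]
  calc (0:ℝ) < H⁻¹ i p * C p q := mul_pos (hHinv i p) hp'
  _ ≤ ∑ k, H⁻¹ i k * C k q :=
      Finset.single_le_sum (f := fun k => H⁻¹ i k * C k q)
        (fun k _ => mul_nonneg (hHinv i k).le (hC k q)) (Finset.mem_univ p)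

lemma matrix_ne_zero {C : Matrix (Fin n) (Fin n) ℝ} (h : C ≠ 0) : ∃ p q, C p q ≠ 0 := by
  by_contra hc
  push_neg at hc
  exact h (by ext i j; exact hc i j)

lemma rA_pos (hn : 1 ≤ n) {H C : Matrix (Fin n) (Fin n) ℝ} (hHinv : ∀ i j, 0 < H⁻¹ i j)
    (hC : ∀ i j, 0 ≤ C i j) (hCne : C ≠ 0) : 0 < specRad (H⁻¹ * C) := by
  obtain ⟨p, q, hpq⟩ := matrix_ne_zero hCne
  set A := H⁻¹ * C with hAdef
  have hA : ∀ i j, 0 ≤ A i j := mul_nonneg_entries (fun i j => (hHinv i j).le) hC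
  have hcol : ∀ i, 0 < A i q := col_pos hHinv hC ⟨p, hpq⟩
  set xq : Fin n → ℝ := fun i => A i q with hxq
  have hxq0 : ∀ i, 0 ≤ xq i := fun i => (hcol i).le
  have hxqne : xq ≠ 0 := fun h => (hcol ⟨0, hn⟩).ne' (congrFun h ⟨0, hn⟩)
  have hAxq : ∀ i, 0 < A.mulVec xq i := by
    intro i
    calc (0:ℝ) < A i q * xq q := mul_pos (hcol i) (hcol q)
    _ ≤ _ := single_le_mulVec hA hxq0 i q
  obtain ⟨t, ht0, ht⟩ := cw_pair hn hcol hAxq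
  exact lt_of_lt_of_le ht0 ((perron hn A hA).2 t xq hxq0 hxqne ht)

lemma splitting_ids {H B C : Matrix (Fin n) (Fin n) ℝ} (hHBC : H = B - C)
    (hB : IsUnit B) (hH : IsUnit H) :
    (1 - B⁻¹ * C) * (1 + H⁻¹ * C) = 1 ∧ (1 + H⁻¹ * C) * (1 - B⁻¹ * C) = 1 := by
  have hBd : IsUnit B.det := (Matrix.isUnit_iff_isUnit_det B).mp hB
  have hHd : IsUnit H.det := (Matrix.isUnit_iff_isUnit_det H).mp hH
  have e1 : 1 - B⁻¹ * C = B⁻¹ * H := by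
    rw [hHBC, mul_sub, Matrix.nonsing_inv_mul B hBd]
  have e2 : 1 + H⁻¹ * C = H⁻¹ * B := by
    have hBHC : B = H + C := by rw [hHBC]; abel
    rw [hBHC, mul_add, Matrix.nonsing_inv_mul H hHd]
  constructor
  · rw [e1, e2, mul_assoc, ← mul_assoc H, Matrix.mul_nonsing_inv H hHd, one_mul,
      Matrix.nonsing_inv_mul B hBd]
  · rw [e1, e2, mul_assoc, ← mul_assoc B, Matrix.mul_nonsing_inv B hBd, one_mul,
      Matrix.nonsing_inv_mul H hHd]

lemma splitting_specRad (hn : 1 ≤ n) {H B C : Matrix (Fin n) (Fin n) ℝ}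
    (hs : IsRegularSplitting H B C) (hH : IsUnit H) (hHinv : ∀ i j, 0 < H⁻¹ i j)
    (hCne : C ≠ 0) :
    0 < specRad (H⁻¹ * C) ∧
      specRad (B⁻¹ * C) = specRad (H⁻¹ * C) / (1 + specRad (H⁻¹ * C)) ∧
      specRad (B⁻¹ * C) < 1 := by
  obtain ⟨hHBC, hB, hBinv, hC⟩ := hs
  set A := H⁻¹ * C with hAdef
  set G := B⁻¹ * C with hGdef
  have hA : ∀ i j, 0 ≤ A i j := mul_nonneg_entries (fun i j => (hHinv i j).le) hC
  have hG : ∀ i j, 0 ≤ G i j := mul_nonneg_entries hBinv hC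
  obtain ⟨id1, id2⟩ := splitting_ids hHBC hB hH
  obtain ⟨⟨xA, hxA0, hxAne, hxAeig⟩, cwA⟩ := perron hn A hA
  obtain ⟨⟨xG, hxG0, hxGne, hxGeig⟩, cwG⟩ := perron hn G hG
  set rA := specRad A with hrAdef
  set s := specRad G with hsdef
  have hrA : 0 < rA := rA_pos hn hHinv hC hCne
  have hs0 : 0 ≤ s := specRad_nonneg hn G
  -- key equation for xG
  have hkey : (1 - s) • (xG + A.mulVec xG) = xG := by
    have h1 : (1 - G).mulVec xG = (1 - s) • xG := by
      rw [Matrix.sub_mulVec, Matrix.one_mulVec, hxGeig]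
      funext i
      simp only [Pi.sub_apply, Pi.smul_apply, smul_eq_mul]
      ring
    have h2 : (1 + A).mulVec ((1 - G).mulVec xG) = xG := by
      rw [Matrix.mulVec_mulVec, id2, Matrix.one_mulVec]
    rw [h1, Matrix.mulVec_smul] at h2
    have h3 : (1 + A).mulVec xG = xG + A.mulVec xG := by
      rw [Matrix.add_mulVec, Matrix.one_mulVec]
    rw [← h3]
    exact h2
  obtain ⟨i0, hi0⟩ := exists_pos hxG0 hxGne
  have hAxG0 : 0 ≤ A.mulVec xG i0 := mulVec_nonneg hA hxG0 i0
  have heq0 : (1 - s) * (xG i0 + A.mulVec xG i0) = xG i0 := by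
    have := congrFun hkey i0
    simpa using this
  have h1s : 0 < 1 - s := by nlinarith
  have hslt1 : s < 1 := by linarith
  -- A xG = (s/(1-s)) xG
  have hAxG : ∀ i, A.mulVec xG i = (s / (1 - s)) * xG i := by
    intro i
    have h := congrFun hkey i
    simp only [Pi.smul_apply, Pi.add_apply, smul_eq_mul] at h
    field_simp
    nlinarith [h]
  set μ := s / (1 - s) with hμdef
  have hμ0 : 0 ≤ μ := div_nonneg hs0 h1s.le
  have hμle : μ ≤ rA := cwA μ xG hxG0 hxGne (fun i => le_of_eq (hAxG i).symm)
  have hs_eq : s = μ / (1 + μ) := by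
    rw [hμdef]
    field_simp
    ring
  have hupper : s ≤ rA / (1 + rA) := by
    rw [hs_eq, div_le_div_iff₀ (by linarith) (by linarith)]
    nlinarith
  -- lower bound
  have hlower : rA / (1 + rA) ≤ s := by
    set z : Fin n → ℝ := fun i => (1 + rA) * xA i with hzdef
    have hz0 : ∀ i, 0 ≤ z i := fun i => mul_nonneg (by linarith) (hxA0 i)
    obtain ⟨ia, hia⟩ := exists_pos hxA0 hxAne
    have hzne : z ≠ 0 := fun h => by
      have := congrFun h ia
      simp only [hzdef, Pi.zero_apply] at this
      nlinarith
    have hz_eq : z = (1 + A).mulVec xA := by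
      rw [Matrix.add_mulVec, Matrix.one_mulVec, hxAeig]
      funext i
      simp only [hzdef, Pi.add_apply, Pi.smul_apply, smul_eq_mul]
      ring
    have hGz : (1 - G).mulVec z = xA := by
      rw [hz_eq, Matrix.mulVec_mulVec, id1, Matrix.one_mulVec]
    have hGz' : ∀ i, G.mulVec z i = z i - xA i := by
      intro i
      have := congrFun hGz i
      rw [Matrix.sub_mulVec, Matrix.one_mulVec] at this
      have h2 := congrFun (rfl : (z - G.mulVec z) = z - G.mulVec z) i
      simp only [Pi.sub_apply] at this
      linarith
    have hcw : ∀ i, (rA / (1 + rA)) * z i ≤ G.mulVec z i := by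
      intro i
      rw [hGz' i]
      simp only [hzdef]
      have h1rA : (1:ℝ) + rA ≠ 0 := by linarith
      have he : rA / (1 + rA) * ((1 + rA) * xA i) = rA * xA i := by
        field_simp
      rw [he]
      nlinarith [hxA0 i]
    exact cwG _ z hz0 hzne hcw
  exact ⟨hrA, le_antisymm hupper hlower, hslt1⟩

lemma strict_lt (hn : 1 ≤ n) {H C₁ C₂ : Matrix (Fin n) (Fin n) ℝ}
    (hHinv : ∀ i j, 0 < H⁻¹ i j) (hC2 : ∀ i j, 0 ≤ C₂ i j)
    (hle : ∀ i j, C₂ i j ≤ C₁ i j) (hC2ne : C₂ ≠ 0) (hdiff : C₁ - C₂ ≠ 0) :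
    specRad (H⁻¹ * C₂) < specRad (H⁻¹ * C₁) := by
  set A₂ := H⁻¹ * C₂ with hA2def
  set A₁ := H⁻¹ * C₁ with hA1def
  have hC1 : ∀ i j, 0 ≤ C₁ i j := fun i j => le_trans (hC2 i j) (hle i j)
  have hA2 : ∀ i j, 0 ≤ A₂ i j := mul_nonneg_entries (fun i j => (hHinv i j).le) hC2
  have hA1 : ∀ i j, 0 ≤ A₁ i j := mul_nonneg_entries (fun i j => (hHinv i j).le) hC1
  obtain ⟨⟨x, hx0, hxne, hxeig⟩, cw₂⟩ := perron hn A₂ hA2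
  have cw₁ := (perron hn A₁ hA1).2
  set r₂ := specRad A₂ with hr2def
  have hr₂ : 0 < r₂ := rA_pos hn hHinv hC2 hC2ne
  -- x is strictly positive
  have hgood : ∃ j, 0 < x j ∧ ∃ k, C₂ k j ≠ 0 := by
    by_contra hcon
    push_neg at hcon
    have hzero : A₂.mulVec x = 0 := by
      funext i
      rw [mulVec_apply']
      apply Finset.sum_eq_zero
      intro j _
      rcases lt_or_ge 0 (x j) with hxj | hxj
      · have hcol0 : ∀ k, C₂ k j = 0 := hcon j hxj
        have : A₂ i j = 0 := by
          rw [hA2def, Matrix.mul_apply]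
          apply Finset.sum_eq_zero
          intro k _
          rw [hcol0 k, mul_zero]
        rw [this, zero_mul]
      · have : x j = 0 := le_antisymm hxj (hx0 j)
        rw [this, mul_zero]
    obtain ⟨i1, hi1⟩ := exists_pos hx0 hxne
    have := congrFun hxeig i1
    rw [congrFun hzero i1] at this
    simp only [Pi.smul_apply, smul_eq_mul, Pi.zero_apply] at this
    nlinarith
  obtain ⟨j, hxj, hcolj_ne⟩ := hgood
  have hcolj : ∀ i, 0 < A₂ i j := col_pos hHinv hC2 hcolj_ne
  have hxpos : ∀ i, 0 < x i := by
    intro i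
    have h1 : 0 < A₂.mulVec x i :=
      lt_of_lt_of_le (mul_pos (hcolj i) hxj) (single_le_mulVec hA2 hx0 i j)
    have h2 := congrFun hxeig i
    simp only [Pi.smul_apply, smul_eq_mul] at h2
    rw [h2] at h1
    rcases mul_pos_iff.mp h1 with ⟨-, h⟩ | ⟨h, -⟩
    · exact h
    · linarith
  -- strictly positive increment
  set D := C₁ - C₂ with hDdef
  have hD0 : ∀ i j, 0 ≤ D i j := fun i j => by
    simp only [hDdef, Matrix.sub_apply]
    linarith [hle i j]
  obtain ⟨p, q', hpq'⟩ := matrix_ne_zero hdiff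
  set w := D.mulVec x with hwdef
  have hw0 : ∀ i, 0 ≤ w i := mulVec_nonneg hD0 (fun i => (hxpos i).le)
  have hwne : w ≠ 0 := by
    intro h
    have hwp : 0 < w p :=
      lt_of_lt_of_le (mul_pos (lt_of_le_of_ne (hD0 p q') (Ne.symm hpq')) (hxpos q'))
        (single_le_mulVec hD0 (fun i => (hxpos i).le) p q')
    rw [h] at hwp
    simp at hwp
  set d := H⁻¹.mulVec w with hddef
  have hd : ∀ i, 0 < d i := mulVec_pos hHinv hw0 hwne
  have hA1x : ∀ i, A₁.mulVec x i = r₂ * x i + d i := by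
    intro i
    have hC1eq : C₁ = C₂ + D := by rw [hDdef]; abel
    have : A₁ = A₂ + H⁻¹ * D := by rw [hA1def, hA2def, hC1eq, mul_add]
    rw [this, Matrix.add_mulVec]
    have hmv : (H⁻¹ * D).mulVec x = d := by
      rw [← Matrix.mulVec_mulVec, hddef, hwdef]
    rw [hmv]
    have h2 := congrFun hxeig i
    simp only [Pi.smul_apply, smul_eq_mul] at h2
    simp only [Pi.add_apply, h2]
  obtain ⟨ε, hε0, hε⟩ := cw_pair hn hxpos hd
  have hstep : ∀ i, (r₂ + ε) * x i ≤ A₁.mulVec x i := by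
    intro i
    rw [hA1x i]
    have := hε i
    nlinarith [hxpos i]
  have := cw₁ (r₂ + ε) x hx0 hxne hstep
  have hfin : r₂ + ε ≤ specRad A₁ := this
  linarith

end PFAux

/-- Strict comparison of regular splittings: if `H = B₁ - C₁ = B₂ - C₂`
are regular splittings, `H` is invertible with entrywise strictly positive inverse,
`0 ≤ C₂ ≤ C₁` entrywise, `C₁ ≠ 0`, `C₂ ≠ 0`, `C₁ - C₂ ≠ 0`, then
`0 < ρ(B₂⁻¹C₂) < ρ(B₁⁻¹C₁) < 1`. -/
theorem stmt_3 {n : ℕ} (hn : 1 ≤ n)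
    (H B₁ C₁ B₂ C₂ : Matrix (Fin n) (Fin n) ℝ)
    (h1 : IsRegularSplitting H B₁ C₁) (h2 : IsRegularSplitting H B₂ C₂)
    (hH : IsUnit H) (hHinv : ∀ i j, 0 < H⁻¹ i j)
    (hC2nonneg : ∀ i j, 0 ≤ C₂ i j) (hle : ∀ i j, C₂ i j ≤ C₁ i j)
    (hC1ne : C₁ ≠ 0) (hC2ne : C₂ ≠ 0) (hdiff : C₁ - C₂ ≠ 0) :
    0 < specRad (B₂⁻¹ * C₂) ∧
    specRad (B₂⁻¹ * C₂) < specRad (B₁⁻¹ * C₁) ∧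
    specRad (B₁⁻¹ * C₁) < 1 := by
  obtain ⟨hr2pos, hs2eq, hs2lt⟩ := PFAux.splitting_specRad hn h2 hH hHinv hC2ne
  obtain ⟨hr1pos, hs1eq, hs1lt⟩ := PFAux.splitting_specRad hn h1 hH hHinv hC1ne
  have hstrict := PFAux.strict_lt hn hHinv hC2nonneg hle hC2ne hdiff
  refine ⟨?_, ?_, hs1lt⟩
  · rw [hs2eq]
    exact div_pos hr2pos (by linarith)
  · rw [hs1eq, hs2eq]
    rw [div_lt_div_iff₀ (by linarith) (by linarith)]
    nlinarith [hstrict]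
end

section
/- Let P be an n×n row-stochastic real matrix (with n ≥ 1), let γ ∈ [0,1), and set H = I - γP and H̄ = diag(H). Then ρ(I - H̄⁻¹H) ≤ ρ(I - H) < 1. -/
open Matrix

lemma abs_le_of_mem_spec {n : ℕ} (A : Matrix (Fin n) (Fin n) ℝ) {r : ℝ}
    (h : ∀ i, ∑ j, |A i j| ≤ r)
    {μ : ℂ} (hμ : μ ∈ spectrum ℂ (A.map (Complex.ofReal ·))) : ‖μ‖ ≤ r := by
  have hμ' : μ ∈ spectrum ℂ ((Matrix.toLinAlgEquiv (Pi.basisFun ℂ (Fin n)))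
      (A.map (Complex.ofReal ·))) := by
    rwa [AlgEquiv.spectrum_eq]
  have hev : Module.End.HasEigenvalue (Matrix.toLin' (A.map (Complex.ofReal ·))) μ :=
    Module.End.hasEigenvalue_iff_mem_spectrum.mpr hμ'
  obtain ⟨k, hk⟩ := eigenvalue_mem_ball hev
  rw [mem_closedBall_iff_norm'] at hk
  have h1 : ‖μ‖ ≤ ‖(A.map (Complex.ofReal ·)) k k‖ +
      ∑ j ∈ Finset.univ.erase k, ‖(A.map (Complex.ofReal ·)) k j‖ := by
    calc ‖μ‖ = ‖(A.map (Complex.ofReal ·)) k k + (μ - (A.map (Complex.ofReal ·)) k k)‖ := by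
          congr 1; ring
      _ ≤ _ := by
          refine (norm_add_le _ _).trans ?_
          gcongr
          rwa [← norm_neg, neg_sub]
  have h2 : ∀ i j, ‖(A.map (Complex.ofReal ·)) i j‖ = |A i j| := by
    intro i j; simp [Matrix.map_apply, Complex.norm_real, Real.norm_eq_abs]
  calc ‖μ‖ ≤ |A k k| + ∑ j ∈ Finset.univ.erase k, |A k j| := by
        rw [← h2 k k]; refine h1.trans ?_; gcongr with j hj; rw [h2]
    _ = ∑ j, |A k j| := Finset.add_sum_erase _ (fun j => |A k j|) (Finset.mem_univ k)
    _ ≤ r := h k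

lemma specRad_le {n : ℕ} (A : Matrix (Fin n) (Fin n) ℝ) {r : ℝ} (hr : 0 ≤ r)
    (h : ∀ i, ∑ j, |A i j| ≤ r) : specRad A ≤ r := by
  apply Real.sSup_le _ hr
  rintro x ⟨μ, hμ, rfl⟩
  exact abs_le_of_mem_spec A h hμ

lemma gamma_mem_spec {n : ℕ} (hn : 1 ≤ n) (P : Matrix (Fin n) (Fin n) ℝ)
    (hP1 : ∀ i, ∑ j, P i j = 1) (γ : ℝ) :
    ((γ : ℂ)) ∈ spectrum ℂ ((γ • P).map (Complex.ofReal ·)) := by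
  rw [spectrum.mem_iff]
  intro hu
  rw [Matrix.isUnit_iff_isUnit_det] at hu
  have : Nonempty (Fin n) := ⟨⟨0, hn⟩⟩
  have hdet : (algebraMap ℂ (Matrix (Fin n) (Fin n) ℂ) (γ : ℂ) -
      (γ • P).map (Complex.ofReal ·)).det = 0 := by
    rw [← Matrix.exists_mulVec_eq_zero_iff]
    refine ⟨fun _ => 1, ?_, ?_⟩
    · intro h0
      have := congrFun h0 ⟨0, hn⟩
      simp at this
    · ext i
      simp only [Matrix.sub_mulVec, Pi.sub_apply, Pi.zero_apply]
      rw [sub_eq_zero]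
      have h1 : ((algebraMap ℂ (Matrix (Fin n) (Fin n) ℂ) (γ : ℂ)).mulVec
          (fun _ => (1:ℂ))) i = (γ : ℂ) := by
        simp [Matrix.mulVec, dotProduct, Matrix.algebraMap_matrix_apply]
      have h2 : ((((γ • P).map (Complex.ofReal ·))).mulVec (fun _ => (1:ℂ))) i = (γ : ℂ) := by
        simp only [Matrix.mulVec, dotProduct, Matrix.map_apply, Matrix.smul_apply,
          smul_eq_mul, Complex.ofReal_mul, mul_one]
        rw [← Finset.mul_sum, ← Complex.ofReal_sum, hP1 i, Complex.ofReal_one, mul_one]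
      rw [h1, h2]
  rw [hdet] at hu
  simp at hu

/-- For a row-stochastic `P`, `γ ∈ [0,1)`, `H = I - γP`,
`H̄ = diag(H)`: `ρ(I - H̄⁻¹H) ≤ ρ(I - H) < 1`. -/
theorem stmt_4 {n : ℕ} (hn : 1 ≤ n) (P : Matrix (Fin n) (Fin n) ℝ)
    (hP0 : ∀ i j, 0 ≤ P i j) (hP1 : ∀ i, ∑ j, P i j = 1)
    (γ : ℝ) (hγ0 : 0 ≤ γ) (hγ1 : γ < 1)
    (H Hbar : Matrix (Fin n) (Fin n) ℝ)
    (hH : H = 1 - γ • P)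
    (hB : Hbar = Matrix.diagonal (fun i => H i i)) :
    specRad (1 - Hbar⁻¹ * H) ≤ specRad (1 - H) ∧ specRad (1 - H) < 1 := by
  have hPle1 : ∀ i, P i i ≤ 1 := by
    intro i
    rw [← hP1 i]
    exact Finset.single_le_sum (fun j _ => hP0 i j) (Finset.mem_univ i)
  have h1H : (1 : Matrix (Fin n) (Fin n) ℝ) - H = γ • P := by rw [hH, sub_sub_cancel]
  -- row sums of γ • P
  have hrow : ∀ i, ∑ j, |(γ • P) i j| = γ := by
    intro i
    have : ∀ j, |(γ • P) i j| = γ * P i j := by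
      intro j; simp [abs_of_nonneg, mul_nonneg hγ0 (hP0 i j)]
    simp_rw [this, ← Finset.mul_sum, hP1 i, mul_one]
  -- specRad (1 - H) ≥ γ
  have hge : γ ≤ specRad (1 - H) := by
    rw [h1H]
    apply le_csSup
    · exact ⟨γ, by rintro x ⟨μ, hμ, rfl⟩; exact abs_le_of_mem_spec _ (fun i => (hrow i).le) hμ⟩
    · exact ⟨(γ : ℂ), gamma_mem_spec hn P hP1 γ, by rw [Complex.norm_real, Real.norm_eq_abs, abs_of_nonneg hγ0]⟩
  have hle : specRad (1 - H) ≤ γ := by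
    rw [h1H]; exact specRad_le _ hγ0 (fun i => (hrow i).le)
  constructor
  · -- Jacobi matrix bound
    set d : Fin n → ℝ := fun i => 1 - γ * P i i with hd
    have hdpos : ∀ i, 0 < d i := by
      intro i
      have : γ * P i i < 1 := by
        rcases eq_or_lt_of_le hγ0 with h | h
        · rw [← h]; simpa using one_pos
        · calc γ * P i i ≤ γ * 1 := by
                exact mul_le_mul_of_nonneg_left (hPle1 i) hγ0
            _ < 1 := by rwa [mul_one]
      simpa [hd] using this
    have hHdiag : ∀ i, H i i = d i := by
      intro i; rw [hH]; simp [hd]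
    have hBar : Hbar = Matrix.diagonal d := by
      rw [hB]; exact congrArg Matrix.diagonal (funext hHdiag)
    have hBarInv : Hbar⁻¹ = Matrix.diagonal (fun i => (d i)⁻¹) := by
      rw [hBar]
      apply Matrix.inv_eq_right_inv
      rw [Matrix.diagonal_mul_diagonal]
      convert Matrix.diagonal_one with i
      exact mul_inv_cancel₀ (hdpos i).ne'
    have hJ : ∀ i j, (1 - Hbar⁻¹ * H) i j =
        (if i = j then (1:ℝ) else 0) - (d i)⁻¹ * H i j := by
      intro i j
      rw [Matrix.sub_apply, hBarInv, Matrix.diagonal_mul, Matrix.one_apply]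
    have hoff : ∀ i j, i ≠ j → H i j = -(γ * P i j) := by
      intro i j hij; rw [hH]; simp [Matrix.one_apply, hij]
    apply le_trans _ hge
    apply specRad_le _ hγ0
    intro i
    have hsum : ∑ j, |(1 - Hbar⁻¹ * H) i j| =
        ∑ j ∈ Finset.univ.erase i, (d i)⁻¹ * (γ * P i j) := by
      rw [← Finset.add_sum_erase _ _ (Finset.mem_univ i)]
      have hii : |(1 - Hbar⁻¹ * H) i i| = 0 := by
        rw [hJ i i, hHdiag i, if_pos rfl, inv_mul_cancel₀ (hdpos i).ne', sub_self, abs_zero]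
      rw [hii, zero_add]
      apply Finset.sum_congr rfl
      intro j hj
      have hij : i ≠ j := fun h => (Finset.mem_erase.mp hj).1 h.symm
      rw [hJ i j, if_neg hij, hoff i j hij]
      rw [abs_of_nonneg]
      · ring
      · have := mul_nonneg (mul_nonneg hγ0 (hP0 i j)) (inv_nonneg.mpr (hdpos i).le)
        nlinarith [this]
    rw [hsum, ← Finset.mul_sum]
    have hsum2 : ∑ j ∈ Finset.univ.erase i, γ * P i j = γ * (1 - P i i) := by
      rw [← Finset.mul_sum, Finset.sum_erase_eq_sub (Finset.mem_univ i), hP1 i]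
    rw [hsum2]
    rw [inv_mul_le_iff₀ (hdpos i)]
    show γ * (1 - P i i) ≤ (1 - γ * P i i) * γ
    nlinarith [mul_nonneg (mul_nonneg hγ0 (hP0 i i)) (sub_nonneg.mpr hγ1.le)]
  · exact lt_of_le_of_lt hle hγ1
end

section
/- Let H, B₁, B₂ be n×n symmetric positive-definite real matrices (n ≥ 1) such that (B₁, B₁ - H) and (B₂, B₂ - H) are regular splittings of H, every entry of H⁻¹ is nonnegative, and 0 ≤ B₁ - H ≤ B₂ - H entrywise. If in addition the largest eigenvalue of B₂⁻¹H is at least 1, then the ratio of the largest to the smallest eigenvalue of B₁⁻¹H is at most twice the ratio of the largest to the smallest eigenvalue of B₂⁻¹H, i.e. λ_max(B₁⁻¹H)/λ_min(B₁⁻¹H) ≤ 2 · λ_max(B₂⁻¹H)/λ_min(B₂⁻¹H). -/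
open Matrix

/-- The largest real eigenvalue of a real square matrix (supremum of the real points
of the spectrum of its complexification). -/
noncomputable def maxEig {n : ℕ} (A : Matrix (Fin n) (Fin n) ℝ) : ℝ :=
  sSup {x : ℝ | (x : ℂ) ∈ spectrum ℂ (A.map (Complex.ofReal ·))}

/-- The smallest real eigenvalue of a real square matrix (infimum of the real points
of the spectrum of its complexification). -/
noncomputable def minEig {n : ℕ} (A : Matrix (Fin n) (Fin n) ℝ) : ℝ :=
  sInf {x : ℝ | (x : ℂ) ∈ spectrum ℂ (A.map (Complex.ofReal ·))}
section AuxLemmas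

variable {n : ℕ}

/-- Real points of the complex spectrum of the complexification = real spectrum. -/
lemma spec_complexify (A : Matrix (Fin n) (Fin n) ℝ) (x : ℝ) :
    ((x : ℂ) ∈ spectrum ℂ (A.map (Complex.ofReal ·))) ↔ x ∈ spectrum ℝ A := by
  rw [spectrum.mem_iff, spectrum.mem_iff, not_iff_not]
  have hmap : algebraMap ℂ (Matrix (Fin n) (Fin n) ℂ) (x : ℂ) - A.map (Complex.ofReal ·)
      = (algebraMap ℝ (Matrix (Fin n) (Fin n) ℝ) x - A).map (Complex.ofRealHom) := by
    ext i j
    simp [Matrix.algebraMap_matrix_apply, apply_ite]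
  rw [hmap, Matrix.isUnit_iff_isUnit_det, Matrix.isUnit_iff_isUnit_det,
      ← RingHom.mapMatrix_apply, ← RingHom.map_det, isUnit_iff_ne_zero, isUnit_iff_ne_zero]
  simp

lemma spectrum_conj {V : Matrix (Fin n) (Fin n) ℝ} (hV : IsUnit V)
    (A : Matrix (Fin n) (Fin n) ℝ) :
    spectrum ℝ (V * A * V⁻¹) = spectrum ℝ A := by
  have h1 : V * A * V⁻¹ = (hV.unit : Matrix (Fin n) (Fin n) ℝ) * A *
      ((hV.unit⁻¹ : (Matrix (Fin n) (Fin n) ℝ)ˣ) : Matrix (Fin n) (Fin n) ℝ) := by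
    rw [Matrix.coe_units_inv, IsUnit.unit_spec]
  rw [h1, spectrum.units_conjugate]

lemma trace_pow_conj {V : Matrix (Fin n) (Fin n) ℝ} (hV : IsUnit V)
    (A : Matrix (Fin n) (Fin n) ℝ) (k : ℕ) :
    ((V * A * V⁻¹) ^ k).trace = (A ^ k).trace := by
  have h1 : V * A * V⁻¹ = (hV.unit : Matrix (Fin n) (Fin n) ℝ) * A *
      ((hV.unit⁻¹ : (Matrix (Fin n) (Fin n) ℝ)ˣ) : Matrix (Fin n) (Fin n) ℝ) := by
    rw [Matrix.coe_units_inv, IsUnit.unit_spec]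
  rw [h1, Units.conj_pow, Matrix.trace_units_conj]

lemma trace_pow_herm {S : Matrix (Fin n) (Fin n) ℝ} (hS : S.IsHermitian) (k : ℕ) :
    (S ^ k).trace = ∑ i, hS.eigenvalues i ^ k := by
  have hU := hS.eigenvectorUnitary.2
  rw [Unitary.mem_iff] at hU
  set U : Matrix (Fin n) (Fin n) ℝ := (hS.eigenvectorUnitary : Matrix (Fin n) (Fin n) ℝ)
  set u : (Matrix (Fin n) (Fin n) ℝ)ˣ := ⟨U, star U, hU.2, hU.1⟩ with hu
  have hst : S = (u : Matrix (Fin n) (Fin n) ℝ) * diagonal (RCLike.ofReal ∘ hS.eigenvalues) *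
      ((u⁻¹ : (Matrix (Fin n) (Fin n) ℝ)ˣ) : Matrix (Fin n) (Fin n) ℝ) := hS.spectral_theorem
  conv_lhs => rw [hst]
  rw [Units.conj_pow, Matrix.trace_units_conj, Matrix.diagonal_pow, Matrix.trace_diagonal]
  simp [Function.comp, RCLike.ofReal_real_eq_id]

lemma entry_mul_nonneg {A B : Matrix (Fin n) (Fin n) ℝ}
    (hA : ∀ i j, 0 ≤ A i j) (hB : ∀ i j, 0 ≤ B i j) :
    ∀ i j, 0 ≤ (A * B) i j := fun i j => by
  rw [Matrix.mul_apply]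
  exact Finset.sum_nonneg fun l _ => mul_nonneg (hA i l) (hB l j)

lemma entry_pow_mono {A B : Matrix (Fin n) (Fin n) ℝ}
    (hA : ∀ i j, 0 ≤ A i j) (hB : ∀ i j, 0 ≤ B i j) (hAB : ∀ i j, A i j ≤ B i j) (k : ℕ) :
    (∀ i j, 0 ≤ (A ^ k) i j) ∧ (∀ i j, (A ^ k) i j ≤ (B ^ k) i j) := by
  induction k with
  | zero =>
      constructor <;> intro i j <;> by_cases h : i = j <;>
        simp [pow_zero, Matrix.one_apply, h]
  | succ k ih =>
      rw [pow_succ, pow_succ]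
      refine ⟨entry_mul_nonneg ih.1 hA, fun i j => ?_⟩
      rw [Matrix.mul_apply, Matrix.mul_apply]
      refine Finset.sum_le_sum fun l _ => ?_
      exact mul_le_mul (ih.2 i l) (hAB l j) (hA l j) ((ih.1 i l).trans (ih.2 i l))

lemma trace_nonneg_of_entry {A : Matrix (Fin n) (Fin n) ℝ} (h : ∀ i j, 0 ≤ A i j) :
    0 ≤ A.trace :=
  Finset.sum_nonneg fun i _ => h i i

lemma trace_mono_of_entry {A B : Matrix (Fin n) (Fin n) ℝ} (h : ∀ i j, A i j ≤ B i j) :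
    A.trace ≤ B.trace :=
  Finset.sum_le_sum fun i _ => h i i

lemma le_of_pow_bound {m r c : ℝ} (hm : 0 ≤ m) (hr : 0 ≤ r) (hc : 0 < c)
    (h : ∀ k : ℕ, ∃ k' : ℕ, k ≤ k' ∧ m ^ k' ≤ c * r ^ k') : m ≤ r := by
  by_contra hlt
  push_neg at hlt
  have hm0 : 0 < m := lt_of_le_of_lt hr hlt
  have hratio : r / m < 1 := (div_lt_one hm0).mpr hlt
  have hrm0 : 0 ≤ r / m := by positivity
  obtain ⟨k₀, hk₀⟩ := exists_pow_lt_of_lt_one (show (0:ℝ) < 1/c by positivity) hratio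
  obtain ⟨k, hk, hmk⟩ := h k₀
  have h1 : (r/m) ^ k ≤ (r/m) ^ k₀ := pow_le_pow_of_le_one hrm0 hratio.le hk
  have hmkpos : 0 < m ^ k := pow_pos hm0 k
  have h2 : 1 ≤ c * (r/m) ^ k := by
    rw [div_pow, ← mul_div_assoc, le_div_iff₀ hmkpos, one_mul]
    linarith
  have h3 : c * (r/m) ^ k₀ < c * (1/c) := (mul_lt_mul_iff_right₀ hc).mpr hk₀
  have h4 : c * (1/c) = 1 := by field_simp
  have h5 : c * (r/m) ^ k ≤ c * (r/m) ^ k₀ := by nlinarith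
  linarith

lemma neg_le_sSup_spectrum (hn : 1 ≤ n) {P : Matrix (Fin n) (Fin n) ℝ} (hP : P.IsHermitian)
    (htr : ∀ k : ℕ, Odd k → 0 ≤ (P ^ k).trace)
    {x : ℝ} (hx : x ∈ spectrum ℝ P) : -x ≤ sSup (spectrum ℝ P) := by
  have hspec : spectrum ℝ P = Set.range hP.eigenvalues := hP.spectrum_real_eq_range_eigenvalues
  have hfin : (spectrum ℝ P).Finite := hspec ▸ Set.finite_range _
  have hbdd : BddAbove (spectrum ℝ P) := hfin.bddAbove
  set M := sSup (spectrum ℝ P) with hM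
  have hxM : x ≤ M := le_csSup hbdd hx
  by_contra hcon
  push_neg at hcon
  set m : ℝ := -x with hmdef
  have hm0 : 0 < m := by
    have : x < m := lt_of_le_of_lt hxM hcon
    simp only [hmdef] at this ⊢; linarith
  set Mp : ℝ := max M 0 with hMp
  have hMpm : Mp < m := max_lt hcon hm0
  obtain ⟨j, hj⟩ : ∃ j, hP.eigenvalues j = x := by
    have := hspec ▸ hx; exact this
  have key : m ≤ Mp := by
    refine le_of_pow_bound hm0.le (le_max_right _ _)
      (show (0:ℝ) < (n:ℝ) by exact_mod_cast hn) (fun k => ⟨2*k+1, by omega, ?_⟩)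
    have hodd : Odd (2*k+1) := ⟨k, by ring⟩
    have htr' := htr (2*k+1) hodd
    rw [trace_pow_herm hP] at htr'
    have hsplit : ∑ i, hP.eigenvalues i ^ (2*k+1)
        = hP.eigenvalues j ^ (2*k+1) + ∑ i ∈ Finset.univ.erase j, hP.eigenvalues i ^ (2*k+1) := by
      rw [← Finset.add_sum_erase _ _ (Finset.mem_univ j)]
    have hterm : ∀ i ∈ Finset.univ.erase j, hP.eigenvalues i ^ (2*k+1) ≤ Mp ^ (2*k+1) := by
      intro i _
      rcases le_or_gt 0 (hP.eigenvalues i) with hpos | hneg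
      · refine pow_le_pow_left₀ hpos ?_ _
        refine le_trans (le_csSup hbdd ?_) (le_max_left _ _)
        rw [hspec]; exact ⟨i, rfl⟩
      · exact le_trans (Odd.pow_nonpos hodd hneg.le)
          (pow_nonneg (le_max_right _ _) _)
    have hsum : ∑ i ∈ Finset.univ.erase j, hP.eigenvalues i ^ (2*k+1)
        ≤ (Finset.univ.erase j).card • Mp ^ (2*k+1) :=
      Finset.sum_le_card_nsmul _ _ _ hterm
    have hcard : ((Finset.univ.erase j).card : ℝ) ≤ (n : ℝ) := by
      have : (Finset.univ.erase j).card ≤ n := by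
        simpa using (Finset.card_erase_le.trans (by simp))
      exact_mod_cast this
    have hej : hP.eigenvalues j ^ (2*k+1) = -(m ^ (2*k+1)) := by
      have hxm : x = -m := by rw [hmdef]; ring
      rw [hj, hxm, Odd.neg_pow hodd]
    have hMppow : (0:ℝ) ≤ Mp ^ (2*k+1) := pow_nonneg (le_max_right _ _) _
    rw [hsplit, hej] at htr'
    have : ((Finset.univ.erase j).card : ℝ) * Mp ^ (2*k+1) ≤ (n : ℝ) * Mp ^ (2*k+1) :=
      mul_le_mul_of_nonneg_right hcard hMppow
    rw [nsmul_eq_mul] at hsum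
    linarith
  linarith

lemma mem_le_sSup_of_trace_pow (hn : 1 ≤ n) {M₁ M₂ : Matrix (Fin n) (Fin n) ℝ}
    (hM₁ : M₁.IsHermitian) (hM₂ : M₂.IsHermitian)
    (heven : ∀ k : ℕ, (M₁ ^ (2*k)).trace ≤ (M₂ ^ (2*k)).trace)
    (hodd : ∀ k : ℕ, Odd k → 0 ≤ (M₂ ^ k).trace)
    {x : ℝ} (hx : x ∈ spectrum ℝ M₁) : x ≤ sSup (spectrum ℝ M₂) := by
  haveI : Nonempty (Fin n) := ⟨⟨0, hn⟩⟩
  have hspec1 : spectrum ℝ M₁ = Set.range hM₁.eigenvalues := hM₁.spectrum_real_eq_range_eigenvalues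
  have hspec2 : spectrum ℝ M₂ = Set.range hM₂.eigenvalues := hM₂.spectrum_real_eq_range_eigenvalues
  have hfin2 : (spectrum ℝ M₂).Finite := hspec2 ▸ Set.finite_range _
  have hbdd2 : BddAbove (spectrum ℝ M₂) := hfin2.bddAbove
  obtain ⟨j, hj⟩ : ∃ j, hM₁.eigenvalues j = x := by
    have h := hx; rw [hspec1] at h; exact h
  obtain ⟨i₀, -, hi₀⟩ := Finset.exists_max_image Finset.univ (fun i => |hM₂.eigenvalues i|)
    ⟨Classical.arbitrary (Fin n), Finset.mem_univ _⟩
  set r : ℝ := |hM₂.eigenvalues i₀| with hrdef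
  have habs : |x| ≤ r := by
    refine le_of_pow_bound (abs_nonneg x) (abs_nonneg _)
      (show (0:ℝ) < (n:ℝ) by exact_mod_cast hn) (fun k => ⟨2*k, by omega, ?_⟩)
    have heven' : Even (2*k) := even_two_mul k
    have h1 : |x| ^ (2*k) = x ^ (2*k) := heven'.pow_abs x
    have h2 : x ^ (2*k) ≤ ∑ i, hM₁.eigenvalues i ^ (2*k) := by
      rw [← hj]
      exact Finset.single_le_sum (f := fun i => hM₁.eigenvalues i ^ (2*k))
        (fun i _ => heven'.pow_nonneg (hM₁.eigenvalues i)) (Finset.mem_univ j)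
    have h3 : ∑ i, hM₂.eigenvalues i ^ (2*k) ≤ (n : ℝ) * r ^ (2*k) := by
      have : ∀ i ∈ Finset.univ, hM₂.eigenvalues i ^ (2*k) ≤ r ^ (2*k) := by
        intro i _
        rw [← heven'.pow_abs (hM₂.eigenvalues i)]
        exact pow_le_pow_left₀ (abs_nonneg _) (hi₀ i (Finset.mem_univ i)) _
      have hs := Finset.sum_le_card_nsmul Finset.univ _ _ this
      rw [nsmul_eq_mul] at hs
      simpa using hs
    calc |x| ^ (2*k) = x ^ (2*k) := h1
      _ ≤ ∑ i, hM₁.eigenvalues i ^ (2*k) := h2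
      _ = (M₁ ^ (2*k)).trace := (trace_pow_herm hM₁ _).symm
      _ ≤ (M₂ ^ (2*k)).trace := heven k
      _ = ∑ i, hM₂.eigenvalues i ^ (2*k) := trace_pow_herm hM₂ _
      _ ≤ (n : ℝ) * r ^ (2*k) := h3
  have hr : r ≤ sSup (spectrum ℝ M₂) := by
    rcases le_or_gt 0 (hM₂.eigenvalues i₀) with hpos | hneg
    · rw [hrdef, abs_of_nonneg hpos]
      exact le_csSup hbdd2 (hspec2 ▸ ⟨i₀, rfl⟩)
    · rw [hrdef, abs_of_neg hneg]
      exact neg_le_sSup_spectrum hn hM₂ hodd (hspec2 ▸ ⟨i₀, rfl⟩)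
  calc x ≤ |x| := le_abs_self x
    _ ≤ r := habs
    _ ≤ sSup (spectrum ℝ M₂) := hr

lemma herm_conj {V A : Matrix (Fin n) (Fin n) ℝ} (hV : V.IsHermitian) (hA : A.IsHermitian) :
    (V * A * V).IsHermitian := by
  rw [Matrix.IsHermitian, Matrix.conjTranspose_mul, Matrix.conjTranspose_mul, hV.eq, hA.eq,
    Matrix.mul_assoc]

lemma posDef_conj {A V : Matrix (Fin n) (Fin n) ℝ} (hA : A.PosDef) (hV : IsUnit V)
    (hVh : V.IsHermitian) : (V * A * V).PosDef := by
  refine Matrix.PosDef.of_dotProduct_mulVec_pos (herm_conj hVh hA.isHermitian) fun x hx => ?_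
  have hVx : V *ᵥ x ≠ 0 := by
    intro h0
    exact hx ((Matrix.mulVec_injective_iff_isUnit.mpr hV) (by simpa using h0))
  have key : star x ⬝ᵥ (V * A * V) *ᵥ x = star (V *ᵥ x) ⬝ᵥ A *ᵥ (V *ᵥ x) := by
    calc star x ⬝ᵥ (V * A * V) *ᵥ x
        = star x ⬝ᵥ V *ᵥ (A *ᵥ (V *ᵥ x)) := by
          rw [Matrix.mulVec_mulVec, Matrix.mulVec_mulVec]
      _ = (star x ᵥ* V) ⬝ᵥ (A *ᵥ (V *ᵥ x)) := by rw [Matrix.dotProduct_mulVec]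
      _ = star (V *ᵥ x) ⬝ᵥ A *ᵥ (V *ᵥ x) := by rw [star_mulVec, hVh.eq]
  rw [key]
  exact hA.dotProduct_mulVec_pos hVx

end AuxLemmas

section Main

variable {n : ℕ}

lemma exists_sqrt {X : Matrix (Fin n) (Fin n) ℝ} (hX : X.PosDef) :
    ∃ R : Matrix (Fin n) (Fin n) ℝ, R * R = X ∧ R.IsHermitian ∧ IsUnit R.det := by
  open scoped MatrixOrder in
  refine ⟨CFC.sqrt X, CFC.sqrt_mul_sqrt_self X hX.posSemidef.nonneg,
    (CFC.sqrt_nonneg X).posSemidef.isHermitian, ?_⟩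
  open scoped MatrixOrder in
  have h : IsUnit (CFC.sqrt X * CFC.sqrt X) :=
    (CFC.sqrt_mul_sqrt_self X hX.posSemidef.nonneg).symm ▸ hX.isUnit
  rw [Matrix.isUnit_iff_isUnit_det, Matrix.det_mul] at h
  exact isUnit_of_mul_isUnit_left h

lemma sqrt_facts {X R : Matrix (Fin n) (Fin n) ℝ} (hRR : R * R = X) (hRd : IsUnit R.det)
    (hRh : R.IsHermitian) :
    IsUnit R⁻¹ ∧ (R⁻¹).IsHermitian ∧ (R⁻¹ * X * R⁻¹ = 1) ∧
    (∀ A, R⁻¹ * (R⁻¹ * A * R⁻¹) * (R⁻¹)⁻¹ = X⁻¹ * A) ∧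
    (∀ A, R⁻¹ * (A * X⁻¹) * (R⁻¹)⁻¹ = R⁻¹ * A * R⁻¹) := by
  have hRu : IsUnit R := (Matrix.isUnit_iff_isUnit_det R).mpr hRd
  have hXinv : X⁻¹ = R⁻¹ * R⁻¹ := by rw [← hRR, Matrix.mul_inv_rev]
  have hinvinv : (R⁻¹)⁻¹ = R := Matrix.nonsing_inv_nonsing_inv R hRd
  refine ⟨Matrix.isUnit_nonsing_inv_iff.mpr hRu, hRh.inv, ?_, ?_, ?_⟩
  · rw [← hRR]
    simp only [Matrix.mul_assoc, Matrix.mul_nonsing_inv R hRd, Matrix.mul_one,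
      Matrix.nonsing_inv_mul R hRd]
  · intro A
    rw [hinvinv, hXinv]
    simp only [Matrix.mul_assoc, Matrix.nonsing_inv_mul R hRd, Matrix.mul_one]
  · intro A
    rw [hinvinv, hXinv]
    simp only [Matrix.mul_assoc, Matrix.nonsing_inv_mul R hRd, Matrix.mul_one]

end Main

lemma inv_mem_spectrum_of_mem {n : ℕ} {A : Matrix (Fin n) (Fin n) ℝ} (hA : IsUnit A)
    {x : ℝ} (hx : x ∈ spectrum ℝ A) (hx0 : x ≠ 0) : x⁻¹ ∈ spectrum ℝ A⁻¹ := by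
  have hxA : ((Units.mk0 x hx0 : ℝˣ) : ℝ) ∈ spectrum ℝ (hA.unit : Matrix (Fin n) (Fin n) ℝ) := by
    rw [IsUnit.unit_spec]; exact hx
  have h := (spectrum.inv_mem_iff (r := Units.mk0 x hx0) (a := hA.unit)).mp hxA
  rw [Matrix.coe_units_inv, IsUnit.unit_spec] at h
  simpa using h

/-- Let `H, B₁, B₂` be symmetric positive-definite with
`(B₁, B₁ - H)` and `(B₂, B₂ - H)` regular splittings of `H`, `H⁻¹ ≥ 0` entrywise,
`0 ≤ B₁ - H ≤ B₂ - H` entrywise, and the largest eigenvalue of `B₂⁻¹H` at least `1`.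
Then `λ_max(B₁⁻¹H)/λ_min(B₁⁻¹H) ≤ 2 λ_max(B₂⁻¹H)/λ_min(B₂⁻¹H)`. -/
theorem stmt_8 {n : ℕ} (hn : 1 ≤ n)
    (H B₁ B₂ : Matrix (Fin n) (Fin n) ℝ)
    (hHpd : H.PosDef) (hB1pd : B₁.PosDef) (hB2pd : B₂.PosDef)
    (h1 : IsRegularSplitting H B₁ (B₁ - H)) (h2 : IsRegularSplitting H B₂ (B₂ - H))
    (hHinv : ∀ i j, 0 ≤ H⁻¹ i j)
    (hC1nonneg : ∀ i j, 0 ≤ (B₁ - H) i j)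
    (hle : ∀ i j, (B₁ - H) i j ≤ (B₂ - H) i j)
    (hmax2 : 1 ≤ maxEig (B₂⁻¹ * H)) :
    maxEig (B₁⁻¹ * H) / minEig (B₁⁻¹ * H) ≤
      2 * (maxEig (B₂⁻¹ * H) / minEig (B₂⁻¹ * H)) := by
  classical
  haveI : Nonempty (Fin n) := ⟨⟨0, hn⟩⟩
  have bridge : ∀ A : Matrix (Fin n) (Fin n) ℝ,
      {x : ℝ | (x : ℂ) ∈ spectrum ℂ (A.map (Complex.ofReal ·))} = spectrum ℝ A := fun A =>
    Set.ext fun x => spec_complexify A x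
  have hmaxE : ∀ A : Matrix (Fin n) (Fin n) ℝ, maxEig A = sSup (spectrum ℝ A) := fun A => by
    unfold maxEig; rw [bridge]
  have hminE : ∀ A : Matrix (Fin n) (Fin n) ℝ, minEig A = sInf (spectrum ℝ A) := fun A => by
    unfold minEig; rw [bridge]
  obtain ⟨RH, hRH, hRHh, hRHd⟩ := exists_sqrt hHpd
  obtain ⟨R1, hR1, hR1h, hR1d⟩ := exists_sqrt hB1pd
  obtain ⟨R2, hR2, hR2h, hR2d⟩ := exists_sqrt hB2pd
  obtain ⟨hWu, hWh, hWone, hWsim1, hWsim2⟩ := sqrt_facts hRH hRHd hRHh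
  obtain ⟨hV1u, hV1h, hV1one, hV1sim1, hV1sim2⟩ := sqrt_facts hR1 hR1d hR1h
  obtain ⟨hV2u, hV2h, hV2one, hV2sim1, hV2sim2⟩ := sqrt_facts hR2 hR2d hR2h
  have hS1pd : (R1⁻¹ * H * R1⁻¹).PosDef := posDef_conj hHpd hV1u hV1h
  have hS2pd : (R2⁻¹ * H * R2⁻¹).PosDef := posDef_conj hHpd hV2u hV2h
  have hQ2pd : (RH⁻¹ * B₂ * RH⁻¹).PosDef := posDef_conj hB2pd hWu hWh
  have hspec1 : spectrum ℝ (B₁⁻¹ * H) = spectrum ℝ (R1⁻¹ * H * R1⁻¹) := by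
    rw [← hV1sim1 H, spectrum_conj hV1u]
  have hspec2 : spectrum ℝ (B₂⁻¹ * H) = spectrum ℝ (R2⁻¹ * H * R2⁻¹) := by
    rw [← hV2sim1 H, spectrum_conj hV2u]
  have hspecQ1 : spectrum ℝ (H⁻¹ * B₁) = spectrum ℝ (RH⁻¹ * B₁ * RH⁻¹) := by
    rw [← hWsim1 B₁, spectrum_conj hWu]
  have hspecQ2 : spectrum ℝ (H⁻¹ * B₂) = spectrum ℝ (RH⁻¹ * B₂ * RH⁻¹) := by
    rw [← hWsim1 B₂, spectrum_conj hWu]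
  have posSpec : ∀ {S : Matrix (Fin n) (Fin n) ℝ}, S.PosDef → ∀ x ∈ spectrum ℝ S, 0 < x := by
    intro S hS x hx
    rw [hS.isHermitian.spectrum_real_eq_range_eigenvalues] at hx
    obtain ⟨i, rfl⟩ := hx
    exact hS.eigenvalues_pos i
  have finSpec : ∀ {S : Matrix (Fin n) (Fin n) ℝ}, S.IsHermitian →
      (spectrum ℝ S).Finite ∧ (spectrum ℝ S).Nonempty := by
    intro S hS
    rw [hS.spectrum_real_eq_range_eigenvalues]
    exact ⟨Set.finite_range _, Set.range_nonempty _⟩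
  set a₁ := maxEig (B₁⁻¹ * H) with ha₁def
  set b₁ := minEig (B₁⁻¹ * H) with hb₁def
  set a₂ := maxEig (B₂⁻¹ * H) with ha₂def
  set b₂ := minEig (B₂⁻¹ * H) with hb₂def
  have hE1fin : (spectrum ℝ (B₁⁻¹ * H)).Finite := by
    rw [hspec1]; exact (finSpec hS1pd.isHermitian).1
  have hE1ne : (spectrum ℝ (B₁⁻¹ * H)).Nonempty := by
    rw [hspec1]; exact (finSpec hS1pd.isHermitian).2
  have hE2fin : (spectrum ℝ (B₂⁻¹ * H)).Finite := by
    rw [hspec2]; exact (finSpec hS2pd.isHermitian).1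
  have hE2ne : (spectrum ℝ (B₂⁻¹ * H)).Nonempty := by
    rw [hspec2]; exact (finSpec hS2pd.isHermitian).2
  have ha₁mem : a₁ ∈ spectrum ℝ (B₁⁻¹ * H) := by
    rw [ha₁def, hmaxE]; exact hE1ne.csSup_mem hE1fin
  have hb₁mem : b₁ ∈ spectrum ℝ (B₁⁻¹ * H) := by
    rw [hb₁def, hminE]; exact hE1ne.csInf_mem hE1fin
  have hb₂mem : b₂ ∈ spectrum ℝ (B₂⁻¹ * H) := by
    rw [hb₂def, hminE]; exact hE2ne.csInf_mem hE2fin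
  have ha₁pos : 0 < a₁ := by
    have h := ha₁mem; rw [hspec1] at h; exact posSpec hS1pd _ h
  have hb₁pos : 0 < b₁ := by
    have h := hb₁mem; rw [hspec1] at h; exact posSpec hS1pd _ h
  have hb₂pos : 0 < b₂ := by
    have h := hb₂mem; rw [hspec2] at h; exact posSpec hS2pd _ h
  -- Step 1 : a₁ ≤ 2
  have hC1B1 : ∀ i j, 0 ≤ ((B₁ - H) * B₁⁻¹) i j := entry_mul_nonneg hC1nonneg h1.2.2.1
  have hP1eq : (1 : Matrix (Fin n) (Fin n) ℝ) - R1⁻¹ * H * R1⁻¹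
      = R1⁻¹ * (B₁ - H) * R1⁻¹ := by
    rw [Matrix.mul_sub, Matrix.sub_mul, hV1one]
  have htrP : ∀ k : ℕ, Odd k →
      0 ≤ (((1 : Matrix (Fin n) (Fin n) ℝ) - R1⁻¹ * H * R1⁻¹) ^ k).trace := by
    intro k _
    rw [hP1eq, ← hV1sim2 (B₁ - H), trace_pow_conj hV1u]
    exact trace_nonneg_of_entry (entry_pow_mono hC1B1 hC1B1 (fun _ _ => le_refl _) k).1
  have hP1herm : ((1 : Matrix (Fin n) (Fin n) ℝ) - R1⁻¹ * H * R1⁻¹).IsHermitian :=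
    Matrix.isHermitian_one.sub hS1pd.isHermitian
  have ha₁le2 : a₁ ≤ 2 := by
    have hmem : a₁ ∈ spectrum ℝ (R1⁻¹ * H * R1⁻¹) := by rw [← hspec1]; exact ha₁mem
    have hsingeq := spectrum.singleton_sub_eq (R1⁻¹ * H * R1⁻¹) (1 : ℝ)
    rw [_root_.map_one (algebraMap ℝ (Matrix (Fin n) (Fin n) ℝ))] at hsingeq
    have hmem' : (1 : ℝ) - a₁ ∈
        spectrum ℝ ((1 : Matrix (Fin n) (Fin n) ℝ) - R1⁻¹ * H * R1⁻¹) := by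
      rw [← hsingeq]
      exact Set.sub_mem_sub (Set.mem_singleton 1) hmem
    have hneg := neg_le_sSup_spectrum hn hP1herm htrP hmem'
    have hsuple : sSup (spectrum ℝ ((1 : Matrix (Fin n) (Fin n) ℝ) - R1⁻¹ * H * R1⁻¹)) ≤ 1 := by
      apply csSup_le ⟨(1 : ℝ) - a₁, hmem'⟩
      intro y hy
      rw [← hsingeq] at hy
      rw [Set.mem_sub] at hy
      obtain ⟨u, hu, v, hv, huv⟩ := hy
      rw [Set.mem_singleton_iff] at hu
      subst hu
      have hvpos := posSpec hS1pd v hv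
      linarith
    linarith
  -- Step 2 : b₂ ≤ b₁
  have hM1herm : (RH⁻¹ * (B₁ - H) * RH⁻¹).IsHermitian :=
    herm_conj hWh (hB1pd.isHermitian.sub hHpd.isHermitian)
  have hM2herm : (RH⁻¹ * (B₂ - H) * RH⁻¹).IsHermitian :=
    herm_conj hWh (hB2pd.isHermitian.sub hHpd.isHermitian)
  have hC2nonneg : ∀ i j, 0 ≤ (B₂ - H) i j := h2.2.2.2
  have hN1 : ∀ i j, 0 ≤ ((B₁ - H) * H⁻¹) i j := entry_mul_nonneg hC1nonneg hHinv
  have hN2 : ∀ i j, 0 ≤ ((B₂ - H) * H⁻¹) i j := entry_mul_nonneg hC2nonneg hHinv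
  have hN12 : ∀ i j, ((B₁ - H) * H⁻¹) i j ≤ ((B₂ - H) * H⁻¹) i j := by
    intro i j
    rw [Matrix.mul_apply, Matrix.mul_apply]
    exact Finset.sum_le_sum fun l _ => mul_le_mul_of_nonneg_right (hle i l) (hHinv l j)
  have htrM12 : ∀ k : ℕ, ((RH⁻¹ * (B₁ - H) * RH⁻¹) ^ (2 * k)).trace
      ≤ ((RH⁻¹ * (B₂ - H) * RH⁻¹) ^ (2 * k)).trace := by
    intro k
    rw [← hWsim2 (B₁ - H), ← hWsim2 (B₂ - H), trace_pow_conj hWu, trace_pow_conj hWu]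
    exact trace_mono_of_entry (entry_pow_mono hN1 hN2 hN12 (2 * k)).2
  have htrM2odd : ∀ k : ℕ, Odd k → 0 ≤ ((RH⁻¹ * (B₂ - H) * RH⁻¹) ^ k).trace := by
    intro k _
    rw [← hWsim2 (B₂ - H), trace_pow_conj hWu]
    exact trace_nonneg_of_entry (entry_pow_mono hN2 hN2 (fun _ _ => le_refl _) k).1
  have hdB1 : IsUnit B₁.det := (Matrix.isUnit_iff_isUnit_det _).mp hB1pd.isUnit
  have hdB2 : IsUnit B₂.det := (Matrix.isUnit_iff_isUnit_det _).mp hB2pd.isUnit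
  have hdH : IsUnit H.det := (Matrix.isUnit_iff_isUnit_det _).mp hHpd.isUnit
  have hB1iu : IsUnit B₁⁻¹ := Matrix.isUnit_nonsing_inv_iff.mpr hB1pd.isUnit
  have hHiu : IsUnit H⁻¹ := Matrix.isUnit_nonsing_inv_iff.mpr hHpd.isUnit
  have hU1 : IsUnit (B₁⁻¹ * H) := by
    rw [Matrix.isUnit_iff_isUnit_det, Matrix.det_mul]
    exact (((Matrix.isUnit_iff_isUnit_det _).mp hB1iu).mul hdH)
  have hU2 : IsUnit (H⁻¹ * B₂) := by
    rw [Matrix.isUnit_iff_isUnit_det, Matrix.det_mul]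
    exact (((Matrix.isUnit_iff_isUnit_det _).mp hHiu).mul hdB2)
  have hinvmat1 : (B₁⁻¹ * H)⁻¹ = H⁻¹ * B₁ := by
    rw [Matrix.mul_inv_rev, Matrix.nonsing_inv_nonsing_inv B₁ hdB1]
  have hinvmat2 : (H⁻¹ * B₂)⁻¹ = B₂⁻¹ * H := by
    rw [Matrix.mul_inv_rev, Matrix.nonsing_inv_nonsing_inv H hdH]
  have hb₁inv : b₁⁻¹ ∈ spectrum ℝ (H⁻¹ * B₁) := by
    have h := inv_mem_spectrum_of_mem hU1 hb₁mem hb₁pos.ne'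
    rwa [hinvmat1] at h
  have hQ1eq : RH⁻¹ * B₁ * RH⁻¹ = 1 + RH⁻¹ * (B₁ - H) * RH⁻¹ := by
    rw [Matrix.mul_sub, Matrix.sub_mul, hWone]
    abel
  have hQ2eq : RH⁻¹ * B₂ * RH⁻¹ = 1 + RH⁻¹ * (B₂ - H) * RH⁻¹ := by
    rw [Matrix.mul_sub, Matrix.sub_mul, hWone]
    abel
  have honealg : (1 : Matrix (Fin n) (Fin n) ℝ) = algebraMap ℝ (Matrix (Fin n) (Fin n) ℝ) 1 :=
    (_root_.map_one (algebraMap ℝ (Matrix (Fin n) (Fin n) ℝ))).symm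
  have hb₁shift : b₁⁻¹ - 1 ∈ spectrum ℝ (RH⁻¹ * (B₁ - H) * RH⁻¹) := by
    have h := hb₁inv
    rw [hspecQ1, hQ1eq] at h
    have heq : b₁⁻¹ = (b₁⁻¹ - 1) + 1 := by ring
    rw [heq, honealg] at h
    exact spectrum.add_mem_add_iff.mp h
  have hcmp : b₁⁻¹ - 1 ≤ sSup (spectrum ℝ (RH⁻¹ * (B₂ - H) * RH⁻¹)) :=
    mem_le_sSup_of_trace_pow hn hM1herm hM2herm htrM12 htrM2odd hb₁shift
  set m₂ := sSup (spectrum ℝ (RH⁻¹ * (B₂ - H) * RH⁻¹)) with hm₂def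
  have hm₂mem : m₂ ∈ spectrum ℝ (RH⁻¹ * (B₂ - H) * RH⁻¹) :=
    (finSpec hM2herm).2.csSup_mem (finSpec hM2herm).1
  have h1m₂ : 1 + m₂ ∈ spectrum ℝ (H⁻¹ * B₂) := by
    rw [hspecQ2, hQ2eq]
    have h : m₂ + 1 ∈ spectrum ℝ
        (algebraMap ℝ (Matrix (Fin n) (Fin n) ℝ) 1 + RH⁻¹ * (B₂ - H) * RH⁻¹) :=
      spectrum.add_mem_add_iff.mpr hm₂mem
    rw [← honealg] at h
    rwa [add_comm m₂ 1] at h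
  have h1m₂pos : 0 < 1 + m₂ := by
    have h := h1m₂; rw [hspecQ2] at h; exact posSpec hQ2pd _ h
  have hinv1m₂ : (1 + m₂)⁻¹ ∈ spectrum ℝ (B₂⁻¹ * H) := by
    have h := inv_mem_spectrum_of_mem hU2 h1m₂ h1m₂pos.ne'
    rwa [hinvmat2] at h
  have hb₂le : b₂ ≤ (1 + m₂)⁻¹ := by
    rw [hb₂def, hminE]
    exact csInf_le hE2fin.bddBelow hinv1m₂
  have hb₁invle : b₁⁻¹ ≤ 1 + m₂ := by linarith
  have hb₂b₁ : b₂ ≤ b₁ := by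
    have h := inv_anti₀ (inv_pos.mpr hb₁pos) hb₁invle
    rw [inv_inv] at h
    linarith
  -- Final arithmetic
  have ha₂1 : 1 ≤ a₂ := hmax2
  have key : a₁ / b₁ ≤ 2 * a₂ / b₂ := by
    rw [div_le_div_iff₀ hb₁pos hb₂pos]
    nlinarith [mul_le_mul_of_nonneg_right ha₁le2 hb₂pos.le,
      mul_le_mul_of_nonneg_left hb₂b₁ (show (0:ℝ) ≤ 2 by norm_num),
      mul_le_mul_of_nonneg_right ha₂1 (mul_pos (show (0:ℝ) < 2 by norm_num) hb₁pos).le]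
  calc a₁ / b₁ ≤ 2 * a₂ / b₂ := key
    _ = 2 * (a₂ / b₂) := mul_div_assoc 2 a₂ b₂
end

section
/- Let H and B₂ be n×n symmetric positive-definite real matrices (n ≥ 1) such that (B₂, B₂ - H) is a regular splitting of H. If H and B₂ have at least one diagonal element in common (there exists an index i with H_{ii} = (B₂)_{ii}), then the largest eigenvalue of B₂⁻¹H is at least 1. -/
open Matrix

-- bridge lemma
lemma real_spec_complex {n : ℕ} (A : Matrix (Fin n) (Fin n) ℝ) (x : ℝ) :
    (x : ℂ) ∈ spectrum ℂ (A.map (Complex.ofReal ·)) ↔ x ∈ spectrum ℝ A := by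
  rw [spectrum.mem_iff, spectrum.mem_iff, not_iff_not]
  have hmap : algebraMap ℂ (Matrix (Fin n) (Fin n) ℂ) (x : ℂ) - A.map (Complex.ofReal ·)
      = (algebraMap ℝ (Matrix (Fin n) (Fin n) ℝ) x - A).map (Complex.ofReal ·) := by
    ext i j
    by_cases h : i = j <;>
      simp [Matrix.algebraMap_matrix_apply, h, Matrix.map_apply, Matrix.sub_apply]
  rw [hmap, Matrix.isUnit_iff_isUnit_det, Matrix.isUnit_iff_isUnit_det,
    isUnit_iff_ne_zero, isUnit_iff_ne_zero]
  have : ((algebraMap ℝ (Matrix (Fin n) (Fin n) ℝ) x - A).map (Complex.ofReal ·)).det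
      = Complex.ofReal ((algebraMap ℝ (Matrix (Fin n) (Fin n) ℝ) x - A).det) :=
    by
      have := RingHom.map_det Complex.ofRealHom (algebraMap ℝ (Matrix (Fin n) (Fin n) ℝ) x - A)
      exact this.symm
  rw [this]
  simp

lemma key_eig {n : ℕ} (M : Matrix (Fin n) (Fin n) ℝ) (hM : M.IsHermitian)
    (y : Fin n → ℝ) (hy : 0 < y ⬝ᵥ y) (hMy : y ⬝ᵥ y ≤ y ⬝ᵥ M *ᵥ y) :
    ∃ k, 1 ≤ hM.eigenvalues k := by
  by_contra hcon
  push_neg at hcon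
  set U : Matrix (Fin n) (Fin n) ℝ := (hM.eigenvectorUnitary : Matrix (Fin n) (Fin n) ℝ) with hU
  have hUst : U * star U = 1 := (Matrix.mem_unitaryGroup_iff).mp hM.eigenvectorUnitary.2
  set w : Fin n → ℝ := star U *ᵥ y with hw
  have hstar : star U = Uᵀ := by
    rw [Matrix.star_eq_conjTranspose, conjTranspose_eq_transpose_of_trivial]
  have hdot : ∀ z : Fin n → ℝ, y ⬝ᵥ (U *ᵥ z) = w ⬝ᵥ z := by
    intro z
    rw [dotProduct_mulVec, hw, hstar, mulVec_transpose]
  have hww : w ⬝ᵥ w = y ⬝ᵥ y := by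
    calc w ⬝ᵥ w = y ⬝ᵥ (U *ᵥ (star U *ᵥ y)) := (hdot _).symm
    _ = y ⬝ᵥ ((U * star U) *ᵥ y) := by rw [mulVec_mulVec]
    _ = y ⬝ᵥ y := by rw [hUst, one_mulVec]
  have hMyw : y ⬝ᵥ M *ᵥ y = ∑ k, hM.eigenvalues k * (w k * w k) := by
    have hspec := hM.spectral_theorem
    calc y ⬝ᵥ M *ᵥ y
        = y ⬝ᵥ (U *ᵥ (diagonal (RCLike.ofReal ∘ hM.eigenvalues) *ᵥ w)) := by
          conv_lhs => rw [hspec, Unitary.conjStarAlgAut_apply]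
          rw [← mulVec_mulVec, ← mulVec_mulVec, hw]
      _ = w ⬝ᵥ (diagonal (RCLike.ofReal ∘ hM.eigenvalues) *ᵥ w) := hdot _
      _ = ∑ k, hM.eigenvalues k * (w k * w k) := by
          simp only [dotProduct, mulVec_diagonal, Function.comp_apply, RCLike.ofReal_real_eq_id,
            id_eq]
          exact Finset.sum_congr rfl fun k _ => by ring
  have hwne : ∃ k, w k ≠ 0 := by
    by_contra hall
    push_neg at hall
    have : w ⬝ᵥ w = 0 := by simp [dotProduct, hall]
    rw [hww] at this
    exact absurd this hy.ne'
  obtain ⟨k₀, hk₀⟩ := hwne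
  have hlt : ∑ k, hM.eigenvalues k * (w k * w k) < ∑ k, w k * w k := by
    apply Finset.sum_lt_sum
    · intro k _
      nlinarith [mul_self_nonneg (w k), (hcon k).le]
    · refine ⟨k₀, Finset.mem_univ _, ?_⟩
      have h1 : 0 < w k₀ * w k₀ := mul_self_pos.mpr hk₀
      nlinarith [hcon k₀]
  have hww' : y ⬝ᵥ y = ∑ k, w k * w k := by rw [← hww]; rfl
  rw [hMyw, hww'] at hMy
  exact absurd hMy (not_le.mpr hlt)

open scoped MatrixOrder in
private theorem stmt_9_aux {n : ℕ}
    (H B₂ : Matrix (Fin n) (Fin n) ℝ)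
    (hHpd : H.PosDef) (hB2pd : B₂.PosDef)
    (hdiag : ∃ i, H i i = B₂ i i) :
    1 ≤ sSup {x : ℝ | (x : ℂ) ∈ spectrum ℂ ((B₂⁻¹ * H).map (Complex.ofReal ·))} := by
  classical
  obtain ⟨i, hi⟩ := hdiag
  set R : Matrix (Fin n) (Fin n) ℝ := CFC.sqrt B₂ with hRdef
  have hRsd : R.PosSemidef := (CFC.sqrt_nonneg B₂).posSemidef
  have hRR : R * R = B₂ := CFC.sqrt_mul_sqrt_self B₂ hB2pd.posSemidef.nonneg
  have hRdet : IsUnit R.det := by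
    have hB : (0:ℝ) < B₂.det := hB2pd.det_pos
    rw [← hRR, det_mul] at hB
    have : R.det ≠ 0 := fun h => by simp [h] at hB
    exact this.isUnit
  have hRu : IsUnit R := (Matrix.isUnit_iff_isUnit_det _).2 hRdet
  have hRinv : R⁻¹ * R = 1 := nonsing_inv_mul R hRdet
  have hRinv' : R * R⁻¹ = 1 := mul_nonsing_inv R hRdet
  set M : Matrix (Fin n) (Fin n) ℝ := R⁻¹ * H * R⁻¹ with hMdef
  have hRh : Rᵀ = R := hRsd.1
  have hRih : (R⁻¹)ᵀ = R⁻¹ := hRsd.1.inv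
  have hM : M.IsHermitian := by
    show Mᴴ = M
    rw [hMdef, conjTranspose_mul, conjTranspose_mul, hRsd.1.inv, hHpd.1]
    rw [Matrix.mul_assoc]
  have hconj : B₂⁻¹ * H = (↑hRu.unit⁻¹ : Matrix (Fin n) (Fin n) ℝ) * M *
      (↑hRu.unit : Matrix (Fin n) (Fin n) ℝ) := by
    rw [Matrix.coe_units_inv, IsUnit.unit_spec, hMdef, ← hRR, Matrix.mul_inv_rev]
    simp only [Matrix.mul_assoc, hRinv, Matrix.mul_one]
  have hspecEq : spectrum ℝ (B₂⁻¹ * H) = spectrum ℝ M := by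
    rw [hconj]; exact spectrum.units_conjugate'
  set e : Fin n → ℝ := Pi.single i 1 with he
  set y : Fin n → ℝ := R *ᵥ e with hy
  have hyy : y ⬝ᵥ y = B₂ i i := by
    rw [hy, dotProduct_mulVec, ← mulVec_transpose, hRh, mulVec_mulVec, hRR]
    simp [he, dotProduct, mulVec, Pi.single_apply]
  have hyMy : y ⬝ᵥ M *ᵥ y = H i i := by
    have hMR : M * R = R⁻¹ * H := by
      rw [hMdef]; simp only [Matrix.mul_assoc, hRinv, Matrix.mul_one]
    have h1 : M *ᵥ y = R⁻¹ *ᵥ (H *ᵥ e) := by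
      rw [hy, mulVec_mulVec, hMR, ← mulVec_mulVec]
    have h2 : y ᵥ* R⁻¹ = e := by
      rw [← mulVec_transpose, hRih, hy, mulVec_mulVec, hRinv, one_mulVec]
    rw [h1, dotProduct_mulVec, h2]
    simp [he, dotProduct, mulVec, Pi.single_apply]
  have he0 : e ≠ 0 := by
    intro h
    have h1 : e i = 0 := by rw [h]; rfl
    rw [he, Pi.single_eq_same] at h1
    exact one_ne_zero h1
  have hBii : 0 < B₂ i i := by
    have := hB2pd.dotProduct_mulVec_pos he0
    simp only [star_trivial, RCLike.re_to_real] at this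
    calc (0:ℝ) < e ⬝ᵥ B₂ *ᵥ e := this
    _ = B₂ i i := by simp [he, dotProduct, mulVec, Pi.single_apply]
  have hy0 : 0 < y ⬝ᵥ y := by rw [hyy]; exact hBii
  have hle : y ⬝ᵥ y ≤ y ⬝ᵥ M *ᵥ y := by rw [hyy, hyMy, hi]
  obtain ⟨k, hk⟩ := key_eig M hM y hy0 hle
  have hSeq : {x : ℝ | (x : ℂ) ∈ spectrum ℂ ((B₂⁻¹ * H).map (Complex.ofReal ·))}
      = Set.range hM.eigenvalues := by
    ext x
    rw [Set.mem_setOf_eq, real_spec_complex, hspecEq, hM.spectrum_real_eq_range_eigenvalues]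
  rw [hSeq]
  have hbdd : BddAbove (Set.range hM.eigenvalues) := (Set.finite_range _).bddAbove
  exact le_trans hk (le_csSup hbdd ⟨k, rfl⟩)

/-- Let `H` and `B₂` be symmetric positive-definite with
`(B₂, B₂ - H)` a regular splitting of `H`. If `H` and `B₂` share a diagonal element,
then the largest eigenvalue of `B₂⁻¹H` is at least `1`. -/
theorem stmt_9 {n : ℕ} (hn : 1 ≤ n)
    (H B₂ : Matrix (Fin n) (Fin n) ℝ)
    (hHpd : H.PosDef) (hB2pd : B₂.PosDef)
    (h2 : IsRegularSplitting H B₂ (B₂ - H))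
    (hdiag : ∃ i, H i i = B₂ i i) :
    1 ≤ maxEig (B₂⁻¹ * H) := by
  unfold maxEig
  exact stmt_9_aux H B₂ hHpd hB2pd hdiag
end

section
/- Let P be an n×n row-stochastic real matrix (with n ≥ 1), let γ ∈ [0,1), and set H = I - γP and H̄ = diag(H). If H is symmetric, then κ(H̄⁻¹H) ≤ 2 κ(H), where κ denotes the ratio of the largest to the smallest eigenvalue. -/
open Matrix

namespace Stmt11Aux

variable {n : ℕ}

lemma specSet_eq (A : Matrix (Fin n) (Fin n) ℝ) :
    {x : ℝ | (x : ℂ) ∈ spectrum ℂ (A.map (Complex.ofReal ·))} = spectrum ℝ A := by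
  ext x
  simp only [Set.mem_setOf_eq, spectrum.mem_iff]
  have hmap : (algebraMap ℂ (Matrix (Fin n) (Fin n) ℂ)) (x : ℂ) - A.map (Complex.ofReal ·)
      = ((algebraMap ℝ (Matrix (Fin n) (Fin n) ℝ)) x - A).map (Complex.ofReal ·) := by
    ext i j
    by_cases h : i = j <;>
      simp [Matrix.algebraMap_matrix_apply, Matrix.map_apply, h]
  rw [hmap]
  rw [Matrix.isUnit_iff_isUnit_det, Matrix.isUnit_iff_isUnit_det]
  have hdet : (((algebraMap ℝ (Matrix (Fin n) (Fin n) ℝ)) x - A).map (Complex.ofReal ·)).det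
      = Complex.ofReal (((algebraMap ℝ (Matrix (Fin n) (Fin n) ℝ)) x - A).det) :=
    (RingHom.map_det Complex.ofRealHom _).symm
  rw [hdet, isUnit_iff_ne_zero, isUnit_iff_ne_zero]
  simp

lemma specSet_conj (N R Ri : Matrix (Fin n) (Fin n) ℝ) (h1 : R * Ri = 1) (h2 : Ri * R = 1) :
    {x : ℝ | (x : ℂ) ∈ spectrum ℂ ((Ri * N * R).map (Complex.ofReal ·))}
      = {x : ℝ | (x : ℂ) ∈ spectrum ℂ (N.map (Complex.ofReal ·))} := by
  have hmm : ∀ (X Y : Matrix (Fin n) (Fin n) ℝ),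
      (X * Y).map (Complex.ofReal ·) = X.map (Complex.ofReal ·) * Y.map (Complex.ofReal ·) :=
    fun X Y => Matrix.map_mul (f := Complex.ofRealHom)
  have hone : (1 : Matrix (Fin n) (Fin n) ℝ).map (Complex.ofReal ·)
      = (1 : Matrix (Fin n) (Fin n) ℂ) := by
    ext i j; by_cases h : i = j <;> simp [Matrix.map_apply, Matrix.one_apply, h]
  set u : (Matrix (Fin n) (Fin n) ℂ)ˣ :=
    ⟨R.map (Complex.ofReal ·), Ri.map (Complex.ofReal ·),
      by rw [← hmm, h1, hone], by rw [← hmm, h2, hone]⟩ with hu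
  have key : (Ri * N * R).map (Complex.ofReal ·)
      = (↑u⁻¹ : Matrix (Fin n) (Fin n) ℂ) * (N.map (Complex.ofReal ·))
        * (↑u : Matrix (Fin n) (Fin n) ℂ) := by
    rw [hmm, hmm]; rfl
  ext x
  rw [Set.mem_setOf_eq, Set.mem_setOf_eq, key, spectrum.units_conjugate']

variable {A : Matrix (Fin n) (Fin n) ℝ}

lemma eig_le (hA : A.IsHermitian) {b : ℝ}
    (h : ∀ x : Fin n → ℝ, x ⬝ᵥ (A *ᵥ x) ≤ b * (x ⬝ᵥ x)) (i : Fin n) : hA.eigenvalues i ≤ b := by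
  set v : Fin n → ℝ := ⇑(hA.eigenvectorBasis i) with hv
  have hmul : A *ᵥ v = hA.eigenvalues i • v := hA.mulVec_eigenvectorBasis i
  have hvne : v ≠ 0 := by
    intro h0
    have h1 : ‖hA.eigenvectorBasis i‖ = 1 := hA.eigenvectorBasis.orthonormal.1 i
    rw [show hA.eigenvectorBasis i = 0 from PiLp.ext (fun j => congrFun h0 j)] at h1
    simp at h1
  have hpos : 0 < v ⬝ᵥ v := by
    rcases lt_or_eq_of_le (Finset.sum_nonneg fun j _ => mul_self_nonneg (v j)) with h' | h'
    · exact h'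
    · exact absurd (dotProduct_self_eq_zero.mp h'.symm) hvne
  have hb := h v
  rw [hmul, dotProduct_smul, smul_eq_mul] at hb
  exact le_of_mul_le_mul_right hb hpos

lemma le_eig (hA : A.IsHermitian) {a : ℝ}
    (h : ∀ x : Fin n → ℝ, a * (x ⬝ᵥ x) ≤ x ⬝ᵥ (A *ᵥ x)) (i : Fin n) : a ≤ hA.eigenvalues i := by
  set v : Fin n → ℝ := ⇑(hA.eigenvectorBasis i) with hv
  have hmul : A *ᵥ v = hA.eigenvalues i • v := hA.mulVec_eigenvectorBasis i
  have hvne : v ≠ 0 := by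
    intro h0
    have h1 : ‖hA.eigenvectorBasis i‖ = 1 := hA.eigenvectorBasis.orthonormal.1 i
    rw [show hA.eigenvectorBasis i = 0 from PiLp.ext (fun j => congrFun h0 j)] at h1
    simp at h1
  have hpos : 0 < v ⬝ᵥ v := by
    rcases lt_or_eq_of_le (Finset.sum_nonneg fun j _ => mul_self_nonneg (v j)) with h' | h'
    · exact h'
    · exact absurd (dotProduct_self_eq_zero.mp h'.symm) hvne
  have hb := h v
  rw [hmul, dotProduct_smul, smul_eq_mul] at hb
  exact le_of_mul_le_mul_right hb hpos

lemma specSet_symm_eq (hA : A.IsHermitian) :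
    {x : ℝ | (x : ℂ) ∈ spectrum ℂ (A.map (Complex.ofReal ·))} = Set.range hA.eigenvalues := by
  rw [specSet_eq, hA.spectrum_real_eq_range_eigenvalues]

lemma maxEig_le (hn : 0 < n) (hA : A.IsHermitian) {b : ℝ}
    (h : ∀ x : Fin n → ℝ, x ⬝ᵥ (A *ᵥ x) ≤ b * (x ⬝ᵥ x)) : maxEig A ≤ b := by
  rw [maxEig, specSet_symm_eq hA]
  exact csSup_le ⟨hA.eigenvalues ⟨0, hn⟩, ⟨⟨0, hn⟩, rfl⟩⟩
    (by rintro y ⟨i, rfl⟩; exact eig_le hA h i)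

lemma le_minEig (hn : 0 < n) (hA : A.IsHermitian) {a : ℝ}
    (h : ∀ x : Fin n → ℝ, a * (x ⬝ᵥ x) ≤ x ⬝ᵥ (A *ᵥ x)) : a ≤ minEig A := by
  rw [minEig, specSet_symm_eq hA]
  exact le_csInf ⟨hA.eigenvalues ⟨0, hn⟩, ⟨⟨0, hn⟩, rfl⟩⟩
    (by rintro y ⟨i, rfl⟩; exact le_eig hA h i)

lemma le_maxEig (hA : A.IsHermitian) (i : Fin n) : hA.eigenvalues i ≤ maxEig A := by
  rw [maxEig, specSet_symm_eq hA]
  exact le_csSup (Set.finite_range _).bddAbove ⟨i, rfl⟩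

lemma minEig_le (hA : A.IsHermitian) (i : Fin n) : minEig A ≤ hA.eigenvalues i := by
  rw [minEig, specSet_symm_eq hA]
  exact csInf_le (Set.finite_range _).bddBelow ⟨i, rfl⟩

lemma minEig_le_maxEig (hn : 0 < n) (hA : A.IsHermitian) : minEig A ≤ maxEig A :=
  (minEig_le hA ⟨0, hn⟩).trans (le_maxEig hA ⟨0, hn⟩)

lemma quad_eq (hA : A.IsHermitian) (x : Fin n → ℝ) :
    x ⬝ᵥ (A *ᵥ x) = ∑ j, hA.eigenvalues j *
      (((hA.eigenvectorUnitary : Matrix (Fin n) (Fin n) ℝ)ᵀ *ᵥ x) j) ^ 2 := by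
  set U : Matrix (Fin n) (Fin n) ℝ := (hA.eigenvectorUnitary : Matrix (Fin n) (Fin n) ℝ) with hU
  have hstar : star U = Uᵀ := by
    rw [Matrix.star_eq_conjTranspose, conjTranspose_eq_transpose_of_trivial]
  have hdiag : diagonal (RCLike.ofReal ∘ hA.eigenvalues) = diagonal hA.eigenvalues := rfl
  set c : Fin n → ℝ := Uᵀ *ᵥ x with hc
  calc x ⬝ᵥ (A *ᵥ x) = x ⬝ᵥ ((U * diagonal hA.eigenvalues * Uᵀ) *ᵥ x) := by
        conv_lhs => rw [hA.spectral_theorem]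
        rw [Unitary.conjStarAlgAut_apply, hstar, hdiag]
  _ = x ⬝ᵥ (U *ᵥ (diagonal hA.eigenvalues *ᵥ c)) := by
        rw [hc, mulVec_mulVec, mulVec_mulVec]
  _ = c ⬝ᵥ (diagonal hA.eigenvalues *ᵥ c) := by
        rw [dotProduct_mulVec, ← mulVec_transpose]
  _ = ∑ j, hA.eigenvalues j * (c j) ^ 2 := by
        simp only [dotProduct, mulVec_diagonal]
        exact Finset.sum_congr rfl fun j _ => by ring

lemma normsq_eq (hA : A.IsHermitian) (x : Fin n → ℝ) :
    x ⬝ᵥ x = ∑ j, (((hA.eigenvectorUnitary : Matrix (Fin n) (Fin n) ℝ)ᵀ *ᵥ x) j) ^ 2 := by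
  set U : Matrix (Fin n) (Fin n) ℝ := (hA.eigenvectorUnitary : Matrix (Fin n) (Fin n) ℝ) with hU
  have hstar : star U = Uᵀ := by
    rw [Matrix.star_eq_conjTranspose, conjTranspose_eq_transpose_of_trivial]
  have hUU : U * Uᵀ = 1 := by
    rw [← hstar]
    exact (Matrix.mem_unitaryGroup_iff).mp hA.eigenvectorUnitary.2
  set c : Fin n → ℝ := Uᵀ *ᵥ x with hc
  calc x ⬝ᵥ x = x ⬝ᵥ ((U * Uᵀ) *ᵥ x) := by rw [hUU, one_mulVec]
  _ = x ⬝ᵥ (U *ᵥ c) := by rw [hc, mulVec_mulVec]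
  _ = c ⬝ᵥ c := by rw [dotProduct_mulVec, ← mulVec_transpose]
  _ = ∑ j, (c j) ^ 2 := by
        simp only [dotProduct]
        exact Finset.sum_congr rfl fun j _ => by ring

lemma quad_le_max (hA : A.IsHermitian) (x : Fin n → ℝ) :
    x ⬝ᵥ (A *ᵥ x) ≤ maxEig A * (x ⬝ᵥ x) := by
  rw [quad_eq hA x, normsq_eq hA x, Finset.mul_sum]
  exact Finset.sum_le_sum fun j _ =>
    mul_le_mul_of_nonneg_right (le_maxEig hA j) (sq_nonneg _)

lemma min_quad_le (hA : A.IsHermitian) (x : Fin n → ℝ) :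
    minEig A * (x ⬝ᵥ x) ≤ x ⬝ᵥ (A *ᵥ x) := by
  rw [quad_eq hA x, normsq_eq hA x, Finset.mul_sum]
  exact Finset.sum_le_sum fun j _ =>
    mul_le_mul_of_nonneg_right (minEig_le hA j) (sq_nonneg _)

lemma expand_quad (Q : Matrix (Fin n) (Fin n) ℝ) (y : Fin n → ℝ) :
    y ⬝ᵥ (Q *ᵥ y) = ∑ i, ∑ j, Q i j * (y i * y j) := by
  simp only [dotProduct, mulVec, Finset.mul_sum]
  exact Finset.sum_congr rfl fun i _ => Finset.sum_congr rfl fun j _ => by ring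

lemma sum_weights (Q : Matrix (Fin n) (Fin n) ℝ) (γ : ℝ)
    (hrow : ∀ i, ∑ j, Q i j = γ) (hsym : Qᵀ = Q) (y : Fin n → ℝ) :
    ∑ i, ∑ j, Q i j * ((y i ^ 2 + y j ^ 2) / 2) = γ * (y ⬝ᵥ y) := by
  have hcol : ∀ j, ∑ i, Q i j = γ := fun j => by
    rw [← hrow j]
    exact Finset.sum_congr rfl fun i _ => by
      have h := congrFun (congrFun hsym j) i
      simpa [Matrix.transpose_apply] using h
  have split : ∀ i j, Q i j * ((y i ^ 2 + y j ^ 2) / 2)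
      = Q i j * (y i ^ 2 / 2) + Q i j * (y j ^ 2 / 2) := fun i j => by ring
  simp only [split, Finset.sum_add_distrib]
  have h1 : ∑ i, ∑ j, Q i j * (y i ^ 2 / 2) = γ * (y ⬝ᵥ y) / 2 := by
    have h : ∀ i, ∑ j, Q i j * (y i ^ 2 / 2) = γ * (y i ^ 2 / 2) := fun i => by
      rw [← Finset.sum_mul, hrow i]
    simp only [h, dotProduct]
    rw [Finset.mul_sum, Finset.sum_div]
    exact Finset.sum_congr rfl fun i _ => by ring
  have h2 : ∑ i, ∑ j, Q i j * (y j ^ 2 / 2) = γ * (y ⬝ᵥ y) / 2 := by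
    rw [Finset.sum_comm]
    have h : ∀ j, ∑ i, Q i j * (y j ^ 2 / 2) = γ * (y j ^ 2 / 2) := fun j => by
      rw [← Finset.sum_mul, hcol j]
    simp only [h, dotProduct]
    rw [Finset.mul_sum, Finset.sum_div]
    exact Finset.sum_congr rfl fun j _ => by ring
  rw [h1, h2]; ring

lemma quadQ_le (Q : Matrix (Fin n) (Fin n) ℝ) (γ : ℝ) (h0 : ∀ i j, 0 ≤ Q i j)
    (hrow : ∀ i, ∑ j, Q i j = γ) (hsym : Qᵀ = Q) (y : Fin n → ℝ) :
    y ⬝ᵥ (Q *ᵥ y) ≤ γ * (y ⬝ᵥ y) := by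
  rw [expand_quad, ← sum_weights Q γ hrow hsym y]
  exact Finset.sum_le_sum fun i _ => Finset.sum_le_sum fun j _ =>
    mul_le_mul_of_nonneg_left (by nlinarith [sq_nonneg (y i - y j)]) (h0 i j)

lemma quadQ_ge (Q : Matrix (Fin n) (Fin n) ℝ) (γ : ℝ) (h0 : ∀ i j, 0 ≤ Q i j)
    (hrow : ∀ i, ∑ j, Q i j = γ) (hsym : Qᵀ = Q) (y : Fin n → ℝ) :
    2 * (∑ i, Q i i * (y i) ^ 2) - γ * (y ⬝ᵥ y) ≤ y ⬝ᵥ (Q *ᵥ y) := by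
  have key : ∑ i, Q i i * ((y i + y i) ^ 2 / 2)
      ≤ ∑ i, ∑ j, Q i j * ((y i + y j) ^ 2 / 2) :=
    Finset.sum_le_sum fun i _ =>
      Finset.single_le_sum (f := fun j => Q i j * ((y i + y j) ^ 2 / 2))
        (fun j _ => mul_nonneg (h0 i j) (by positivity)) (Finset.mem_univ i)
  have id2 : ∑ i, ∑ j, Q i j * ((y i + y j) ^ 2 / 2)
      = (∑ i, ∑ j, Q i j * (y i * y j)) + ∑ i, ∑ j, Q i j * ((y i ^ 2 + y j ^ 2) / 2) := by
    rw [← Finset.sum_add_distrib]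
    refine Finset.sum_congr rfl fun i _ => ?_
    rw [← Finset.sum_add_distrib]
    exact Finset.sum_congr rfl fun j _ => by ring
  have id3 : ∑ i, Q i i * ((y i + y i) ^ 2 / 2) = 2 * ∑ i, Q i i * (y i) ^ 2 := by
    rw [Finset.mul_sum]
    exact Finset.sum_congr rfl fun i _ => by ring
  rw [expand_quad]
  have hw := sum_weights Q γ hrow hsym y
  linarith [id2 ▸ key]

end Stmt11Aux

open Stmt11Aux

/-- For a row-stochastic `P`, `γ ∈ [0,1)`, `H = I - γP`,
`H̄ = diag(H)`: if `H` is symmetric, then `κ(H̄⁻¹H) ≤ 2 κ(H)` where `κ` is the ratio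
of the largest to the smallest eigenvalue. -/
theorem stmt_11 {n : ℕ} (hn : 1 ≤ n) (P : Matrix (Fin n) (Fin n) ℝ)
    (hP0 : ∀ i j, 0 ≤ P i j) (hP1 : ∀ i, ∑ j, P i j = 1)
    (γ : ℝ) (hγ0 : 0 ≤ γ) (hγ1 : γ < 1)
    (H Hbar : Matrix (Fin n) (Fin n) ℝ)
    (hH : H = 1 - γ • P)
    (hB : Hbar = Matrix.diagonal (fun i => H i i))
    (hsymm : H.IsSymm) :
    maxEig (Hbar⁻¹ * H) / minEig (Hbar⁻¹ * H) ≤ 2 * (maxEig H / minEig H) := by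
  have hnn : 0 < n := hn
  set Q : Matrix (Fin n) (Fin n) ℝ := γ • P with hQdef
  have hHQ : H = 1 - Q := hH
  have hQ0 : ∀ i j, 0 ≤ Q i j := fun i j => mul_nonneg hγ0 (hP0 i j)
  have hQrow : ∀ i, ∑ j, Q i j = γ := fun i => by
    simp only [hQdef, Matrix.smul_apply, smul_eq_mul, ← Finset.mul_sum, hP1 i, mul_one]
  have hQsym : Qᵀ = Q := by
    have h1 : Hᵀ = H := hsymm
    have : (1 - Q : Matrix (Fin n) (Fin n) ℝ)ᵀ = 1 - Q := by rw [← hHQ]; exact h1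
    have h2 : (1 : Matrix (Fin n) (Fin n) ℝ)ᵀ - Qᵀ = 1 - Q := by
      rwa [Matrix.transpose_sub] at this
    rw [Matrix.transpose_one] at h2
    exact sub_right_injective h2
  have hQdiag : ∀ i, 0 ≤ Q i i ∧ Q i i ≤ γ := fun i =>
    ⟨hQ0 i i, by
      rw [← hQrow i]
      exact Finset.single_le_sum (fun j _ => hQ0 i j) (Finset.mem_univ i)⟩
  -- diagonal entries
  have hHdiag : ∀ i, H i i = 1 - Q i i := fun i => by
    rw [hHQ]
    simp [Matrix.sub_apply, Matrix.one_apply_eq]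
  set d : Fin n → ℝ := fun i => H i i with hd
  have hdpos : ∀ i, 0 < d i := fun i => by
    have := (hQdiag i).2; rw [hd]; simp only [hHdiag i]; linarith
  have hdle : ∀ i, d i ≤ 1 := fun i => by
    have := (hQdiag i).1; rw [hd]; simp only [hHdiag i]; linarith
  set r : Fin n → ℝ := fun i => Real.sqrt (d i) with hr
  have hrpos : ∀ i, 0 < r i := fun i => Real.sqrt_pos.mpr (hdpos i)
  have hr2 : ∀ i, r i * r i = d i := fun i => Real.mul_self_sqrt (hdpos i).le
  set R : Matrix (Fin n) (Fin n) ℝ := Matrix.diagonal r with hR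
  set Ri : Matrix (Fin n) (Fin n) ℝ := Matrix.diagonal (fun i => (r i)⁻¹) with hRi
  have hRRi : R * Ri = 1 := by
    rw [hR, hRi, Matrix.diagonal_mul_diagonal]
    rw [show (fun i => r i * (r i)⁻¹) = fun _ => (1:ℝ) from
      funext fun i => mul_inv_cancel₀ (hrpos i).ne', Matrix.diagonal_one]
  have hRiR : Ri * R = 1 := by
    rw [hR, hRi, Matrix.diagonal_mul_diagonal]
    rw [show (fun i => (r i)⁻¹ * r i) = fun _ => (1:ℝ) from
      funext fun i => inv_mul_cancel₀ (hrpos i).ne', Matrix.diagonal_one]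
  have hHbar : Hbar = R * R := by
    rw [hB, hR, Matrix.diagonal_mul_diagonal]
    exact congrArg _ (funext fun i => (hr2 i).symm)
  have hHbarInv : Hbar⁻¹ = Ri * Ri := by
    apply Matrix.inv_eq_right_inv
    rw [hHbar, mul_assoc, ← mul_assoc R Ri Ri, hRRi, one_mul, hRRi]
  set S : Matrix (Fin n) (Fin n) ℝ := Ri * H * Ri with hS
  have hconj : Hbar⁻¹ * H = Ri * S * R := by
    rw [hHbarInv, hS]
    calc Ri * Ri * H = Ri * Ri * H * 1 := by rw [mul_one]
    _ = Ri * Ri * H * (Ri * R) := by rw [hRiR]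
    _ = Ri * (Ri * H * Ri) * R := by noncomm_ring
  have hHherm : H.IsHermitian := by
    rw [Matrix.IsHermitian, conjTranspose_eq_transpose_of_trivial]
    exact hsymm
  have hSsym : S.IsHermitian := by
    rw [Matrix.IsHermitian, conjTranspose_eq_transpose_of_trivial, hS,
      Matrix.transpose_mul, Matrix.transpose_mul, Matrix.diagonal_transpose]
    rw [show Hᵀ = H from hsymm]
    rw [← hRi, mul_assoc]
  -- quadratic form transfers
  have hRisymm : Riᵀ = Ri := Matrix.diagonal_transpose _
  have hRsymm : Rᵀ = R := Matrix.diagonal_transpose _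
  have e1 : ∀ x : Fin n → ℝ, x ⬝ᵥ (S *ᵥ x) = (Ri *ᵥ x) ⬝ᵥ (H *ᵥ (Ri *ᵥ x)) := fun x => by
    rw [hS, ← mulVec_mulVec, ← mulVec_mulVec, dotProduct_mulVec, ← mulVec_transpose, hRisymm]
  have e2 : ∀ x : Fin n → ℝ, x ⬝ᵥ x = (Ri *ᵥ x) ⬝ᵥ (Hbar *ᵥ (Ri *ᵥ x)) := fun x => by
    have hx : x = R *ᵥ (Ri *ᵥ x) := by rw [mulVec_mulVec, hRRi, one_mulVec]
    conv_lhs => rw [hx]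
    rw [dotProduct_mulVec, ← mulVec_transpose, hRsymm, mulVec_mulVec, ← hHbar,
      dotProduct_comm]
  have hquadHbar : ∀ y : Fin n → ℝ, y ⬝ᵥ (Hbar *ᵥ y) = ∑ i, d i * (y i) ^ 2 := fun y => by
    rw [hB]
    simp only [dotProduct, mulVec_diagonal]
    exact Finset.sum_congr rfl fun i _ => by rw [hd]; ring
  have hquadH : ∀ y : Fin n → ℝ, y ⬝ᵥ (H *ᵥ y) = y ⬝ᵥ y - y ⬝ᵥ (Q *ᵥ y) := fun y => by
    rw [hHQ, Matrix.sub_mulVec, dotProduct_sub, one_mulVec]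
  have hyy : ∀ y : Fin n → ℝ, (0:ℝ) ≤ y ⬝ᵥ y := fun y =>
    Finset.sum_nonneg fun j _ => mul_self_nonneg (y j)
  -- bounds for H
  set mH : ℝ := minEig H with hmHdef
  set MH : ℝ := maxEig H with hMHdef
  have hmH : 1 - γ ≤ mH := by
    apply le_minEig hnn hHherm
    intro y
    have := quadQ_le Q γ hQ0 hQrow hQsym y
    rw [hquadH y]
    nlinarith [hyy y]
  have hmHpos : 0 < mH := lt_of_lt_of_le (by linarith) hmH
  have hMHpos : 0 < MH := lt_of_lt_of_le hmHpos (minEig_le_maxEig hnn hHherm)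
  have hdMH : ∀ i, d i ≤ MH := fun i => by
    have := quad_le_max hHherm (Pi.single i 1)
    rw [show (Pi.single i 1 : Fin n → ℝ) ⬝ᵥ (H *ᵥ Pi.single i 1) = d i from by
      rw [single_dotProduct, one_mul, mulVec_single]
      simp [hd]] at this
    rw [show (Pi.single i 1 : Fin n → ℝ) ⬝ᵥ (Pi.single i 1) = 1 from by
      rw [single_dotProduct, one_mul, Pi.single_eq_same]] at this
    linarith [this]
  -- bounds for S
  have hMS : maxEig S ≤ 2 := by
    apply maxEig_le hnn hSsym
    intro x
    rw [e1 x, e2 x]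
    set y : Fin n → ℝ := Ri *ᵥ x
    rw [hquadH y, hquadHbar y]
    have hge := quadQ_ge Q γ hQ0 hQrow hQsym y
    have hsum : ∑ i, d i * (y i) ^ 2 = y ⬝ᵥ y - ∑ i, Q i i * (y i) ^ 2 := by
      simp only [dotProduct]
      rw [← Finset.sum_sub_distrib]
      exact Finset.sum_congr rfl fun i _ => by
        simp only [hd, hHdiag i]; ring
    rw [hsum]
    nlinarith [hyy y]
  have hmS : mH / MH ≤ minEig S := by
    apply le_minEig hnn hSsym
    intro x
    rw [e1 x, e2 x]
    set y : Fin n → ℝ := Ri *ᵥ x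
    rw [hquadHbar y]
    have h1 : ∑ i, d i * (y i) ^ 2 ≤ MH * (y ⬝ᵥ y) := by
      have : MH * (y ⬝ᵥ y) = ∑ i, MH * (y i) ^ 2 := by
        simp only [dotProduct]
        rw [Finset.mul_sum]
        exact Finset.sum_congr rfl fun i _ => by ring
      rw [this]
      exact Finset.sum_le_sum fun i _ => mul_le_mul_of_nonneg_right (hdMH i) (sq_nonneg _)
    have h2 : mH * (y ⬝ᵥ y) ≤ y ⬝ᵥ (H *ᵥ y) := min_quad_le hHherm y
    have h3 : mH / MH * (∑ i, d i * (y i) ^ 2) ≤ mH / MH * (MH * (y ⬝ᵥ y)) :=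
      mul_le_mul_of_nonneg_left h1 (div_nonneg hmHpos.le hMHpos.le)
    have h4 : mH / MH * (MH * (y ⬝ᵥ y)) = mH * (y ⬝ᵥ y) := by
      field_simp
    linarith
  have hmSpos : 0 < minEig S := lt_of_lt_of_le (div_pos hmHpos hMHpos) hmS
  -- transfer spectra
  have hsetEq : {x : ℝ | (x : ℂ) ∈ spectrum ℂ ((Hbar⁻¹ * H).map (Complex.ofReal ·))}
      = {x : ℝ | (x : ℂ) ∈ spectrum ℂ (S.map (Complex.ofReal ·))} := by
    rw [hconj]
    exact specSet_conj S R Ri hRRi hRiR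
  have hmaxEq : maxEig (Hbar⁻¹ * H) = maxEig S := by rw [maxEig, maxEig, hsetEq]
  have hminEq : minEig (Hbar⁻¹ * H) = minEig S := by rw [minEig, minEig, hsetEq]
  rw [hmaxEq, hminEq]
  calc maxEig S / minEig S ≤ 2 / (mH / MH) :=
        div_le_div₀ (by norm_num) hMS (div_pos hmHpos hMHpos) hmS
  _ = 2 * (MH / mH) := by field_simp
  _ = 2 * (maxEig H / minEig H) := rfl
end

section
/- Let P be an n×n row-stochastic real matrix (with n ≥ 1), let γ ∈ [0,1), let m ≥ 1 be a natural number, and set H_m = I - γ^m P^m and H̄_m = diag(H_m). Then ρ(I - H̄_m⁻¹ H_m) ≤ ρ(I - H_m) < 1. -/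
open Matrix

/-- Any complex eigenvalue of (the complexification of) a real matrix is bounded in
absolute value by the maximal absolute row sum. -/
lemma abs_eig_le_rowsum {n : ℕ} (B : Matrix (Fin n) (Fin n) ℝ) (r : ℝ)
    (h : ∀ i, ∑ j, |B i j| ≤ r) {μ : ℂ}
    (hμ : μ ∈ spectrum ℂ (B.map (Complex.ofReal ·))) : ‖μ‖ ≤ r := by
  set M : Matrix (Fin n) (Fin n) ℂ := B.map (Complex.ofReal ·) with hM
  have hspec : spectrum ℂ (Matrix.toLinAlgEquiv' M) = spectrum ℂ M :=
    AlgEquiv.spectrum_eq Matrix.toLinAlgEquiv' M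
  have heig : Module.End.HasEigenvalue (Matrix.toLin' M) μ := by
    rw [Module.End.hasEigenvalue_iff_mem_spectrum]
    show μ ∈ spectrum ℂ (Matrix.toLinAlgEquiv' M)
    rw [hspec]; exact hμ
  obtain ⟨k, hk⟩ := eigenvalue_mem_ball heig
  rw [Metric.mem_closedBall, Complex.dist_eq] at hk
  have habs : ∀ i j, ‖M i j‖ = |B i j| := by
    intro i j; simp [hM, Matrix.map_apply]
  have h1 : ‖μ‖ ≤ ‖μ - M k k‖ + ‖M k k‖ := by
    simpa using norm_add_le (μ - M k k) (M k k)
  have h2 : ‖M k k‖ = ‖M k k‖ := rfl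
  calc ‖μ‖ ≤ ‖μ - M k k‖ + ‖M k k‖ := by rw [← h2]; exact h1
    _ ≤ (∑ j ∈ Finset.univ.erase k, ‖M k j‖) + ‖M k k‖ := by gcongr
    _ = ‖M k k‖ + ∑ j ∈ Finset.univ.erase k, ‖M k j‖ := by ring
    _ = ∑ j, ‖M k j‖ := Finset.add_sum_erase _ (fun j => ‖M k j‖) (Finset.mem_univ k)
    _ = ∑ j, |B k j| := by simp_rw [habs]
    _ ≤ r := h k

lemma specRad_le_of_rowsum {n : ℕ} (B : Matrix (Fin n) (Fin n) ℝ) (r : ℝ) (hr : 0 ≤ r)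
    (h : ∀ i, ∑ j, |B i j| ≤ r) : specRad B ≤ r := by
  apply Real.sSup_le _ hr
  rintro x ⟨μ, hμ, rfl⟩
  exact abs_eig_le_rowsum B r h hμ

lemma pow_entry_nonneg {n : ℕ} (P : Matrix (Fin n) (Fin n) ℝ)
    (hP0 : ∀ i j, 0 ≤ P i j) (k : ℕ) : ∀ i j, 0 ≤ (P ^ k) i j := by
  induction k with
  | zero => intro i j; rw [pow_zero]; by_cases hij : i = j <;> simp [Matrix.one_apply, hij]
  | succ k ih =>
    intro i j
    rw [pow_succ, Matrix.mul_apply]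
    exact Finset.sum_nonneg fun l _ => mul_nonneg (ih i l) (hP0 l j)

lemma pow_rowsum {n : ℕ} (P : Matrix (Fin n) (Fin n) ℝ)
    (hP1 : ∀ i, ∑ j, P i j = 1) (k : ℕ) : ∀ i, ∑ j, (P ^ k) i j = 1 := by
  induction k with
  | zero => intro i; simp [pow_zero, Matrix.one_apply]
  | succ k ih =>
    intro i
    simp_rw [pow_succ, Matrix.mul_apply]
    rw [Finset.sum_comm]
    simp_rw [← Finset.mul_sum, hP1, mul_one]
    exact ih i

/-- For a row-stochastic `P`, `γ ∈ [0,1)`, `m ≥ 1`,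
`H_m = I - γ^m P^m`, `H̄_m = diag(H_m)`: `ρ(I - H̄_m⁻¹H_m) ≤ ρ(I - H_m) < 1`. -/
theorem stmt_12 {n : ℕ} (hn : 1 ≤ n) (P : Matrix (Fin n) (Fin n) ℝ)
    (hP0 : ∀ i j, 0 ≤ P i j) (hP1 : ∀ i, ∑ j, P i j = 1)
    (γ : ℝ) (hγ0 : 0 ≤ γ) (hγ1 : γ < 1)
    (m : ℕ) (hm : 1 ≤ m)
    (Hm Hmbar : Matrix (Fin n) (Fin n) ℝ)
    (hH : Hm = 1 - γ ^ m • P ^ m)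
    (hB : Hmbar = Matrix.diagonal (fun i => Hm i i)) :
    specRad (1 - Hmbar⁻¹ * Hm) ≤ specRad (1 - Hm) ∧ specRad (1 - Hm) < 1 := by
  have hn' : Nonempty (Fin n) := ⟨⟨0, hn⟩⟩
  set c : ℝ := γ ^ m with hc
  set Q : Matrix (Fin n) (Fin n) ℝ := P ^ m with hQdef
  have hc0 : 0 ≤ c := pow_nonneg hγ0 m
  have hc1 : c < 1 := pow_lt_one₀ hγ0 hγ1 (by omega)
  have hQ0 : ∀ i j, 0 ≤ Q i j := pow_entry_nonneg P hP0 m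
  have hQ1 : ∀ i, ∑ j, Q i j = 1 := pow_rowsum P hP1 m
  have hQle1 : ∀ i, Q i i ≤ 1 := by
    intro i
    calc Q i i ≤ ∑ j, Q i j :=
      Finset.single_le_sum (fun j _ => hQ0 i j) (Finset.mem_univ i)
    _ = 1 := hQ1 i
  have h1H : (1 : Matrix (Fin n) (Fin n) ℝ) - Hm = c • Q := by
    rw [hH, sub_sub_cancel]
  have hrowQ : ∀ i, ∑ j, |(c • Q) i j| = c := by
    intro i
    have : ∀ j, |(c • Q) i j| = c * Q i j := fun j => by
      rw [Matrix.smul_apply, smul_eq_mul, abs_of_nonneg (mul_nonneg hc0 (hQ0 i j))]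
    simp_rw [this, ← Finset.mul_sum, hQ1, mul_one]
  -- c is an eigenvalue of c • Q
  have hmem : (c : ℂ) ∈ spectrum ℂ ((c • Q).map (Complex.ofReal ·)) := by
    rw [spectrum.mem_iff]
    intro hunit
    rw [Matrix.isUnit_iff_isUnit_det, isUnit_iff_ne_zero] at hunit
    apply hunit
    rw [← Matrix.exists_mulVec_eq_zero_iff]
    refine ⟨fun _ => 1, ?_, ?_⟩
    · intro h0
      have := congrFun h0 ⟨0, hn⟩
      simp at this
    · rw [Matrix.sub_mulVec, Algebra.algebraMap_eq_smul_one, Matrix.smul_mulVec,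
        Matrix.one_mulVec]
      ext i
      simp only [Pi.sub_apply, Pi.smul_apply, smul_eq_mul, mul_one, Pi.zero_apply,
        Matrix.mulVec, dotProduct, Matrix.map_apply, Matrix.smul_apply, smul_eq_mul]
      rw [sub_eq_zero]
      have : ∀ j, ((c * Q i j : ℝ) : ℂ) = (c : ℂ) * ((Q i j : ℝ) : ℂ) := by
        intro j; push_cast; ring
      simp_rw [this, ← Finset.mul_sum]
      norm_cast
      rw [hQ1, mul_one]
  have hbdd : BddAbove {x : ℝ | ∃ μ ∈ spectrum ℂ ((1 - Hm).map (Complex.ofReal ·)),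
      x = ‖μ‖} := by
    refine ⟨c, ?_⟩
    rintro x ⟨μ, hμ, rfl⟩
    rw [h1H] at hμ
    exact abs_eig_le_rowsum _ c (fun i => (hrowQ i).le) hμ
  have hcle : c ≤ specRad (1 - Hm) := by
    apply le_csSup hbdd
    refine ⟨(c : ℂ), ?_, ?_⟩
    · rw [h1H]; exact hmem
    · rw [Complex.norm_of_nonneg hc0]
  have hle_c : specRad (1 - Hm) ≤ c := by
    apply specRad_le_of_rowsum _ c hc0
    intro i
    rw [h1H]
    exact (hrowQ i).le
  constructor
  · refine le_trans ?_ hcle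
    set d : Fin n → ℝ := fun i => 1 - c * Q i i with hd
    have hdi : ∀ i, d i = 1 - c * Q i i := fun i => rfl
    have hHdiag : ∀ i, Hm i i = d i := by
      intro i
      rw [hH, hdi]
      simp [Matrix.sub_apply, Matrix.one_apply_eq, Matrix.smul_apply]
    have hdpos : ∀ i, 0 < d i := by
      intro i
      rw [hdi]
      have : c * Q i i ≤ c * 1 := mul_le_mul_of_nonneg_left (hQle1 i) hc0
      linarith
    have hdne : ∀ i, d i ≠ 0 := fun i => (hdpos i).ne'
    have hfun : (fun i => Hm i i) = d := funext hHdiag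
    have hinv : Hmbar⁻¹ = Matrix.diagonal (fun i => (d i)⁻¹) := by
      apply Matrix.inv_eq_right_inv
      rw [hB, hfun, Matrix.diagonal_mul_diagonal]
      have : (fun i => d i * (d i)⁻¹) = fun _ => (1 : ℝ) :=
        funext fun i => mul_inv_cancel₀ (hdne i)
      rw [this, Matrix.diagonal_one]
    apply specRad_le_of_rowsum _ c hc0
    intro i
    have hAentry : ∀ j, (1 - Hmbar⁻¹ * Hm) i j =
        if j = i then 0 else (d i)⁻¹ * (c * Q i j) := by
      intro j
      rw [Matrix.sub_apply, hinv, Matrix.diagonal_mul]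
      by_cases hij : j = i
      · subst hij
        rw [if_pos rfl, Matrix.one_apply_eq, hHdiag, inv_mul_cancel₀ (hdne j), sub_self]
      · rw [if_neg hij, Matrix.one_apply_ne' hij, hH]
        simp only [Matrix.sub_apply, Matrix.smul_apply, Matrix.one_apply_ne' hij,
          smul_eq_mul, zero_sub, mul_neg, neg_neg, zero_sub]
    have hQoff : ∑ j ∈ Finset.univ.erase i, Q i j = 1 - Q i i := by
      have := Finset.add_sum_erase Finset.univ (fun j => Q i j) (Finset.mem_univ i)
      rw [hQ1 i] at this
      linarith [this]
    calc ∑ j, |(1 - Hmbar⁻¹ * Hm) i j|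
        = ∑ j ∈ Finset.univ.erase i, |(1 - Hmbar⁻¹ * Hm) i j| := by
          rw [← Finset.add_sum_erase Finset.univ _ (Finset.mem_univ i),
            hAentry i, if_pos rfl, abs_zero, zero_add]
      _ = ∑ j ∈ Finset.univ.erase i, (d i)⁻¹ * (c * Q i j) := by
          apply Finset.sum_congr rfl
          intro j hj
          rw [hAentry j, if_neg (Finset.ne_of_mem_erase hj),
            abs_of_nonneg (mul_nonneg (inv_nonneg.mpr (hdpos i).le)
              (mul_nonneg hc0 (hQ0 i j)))]
      _ = (d i)⁻¹ * (c * (1 - Q i i)) := by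
          rw [← Finset.mul_sum, ← Finset.mul_sum, hQoff]
      _ ≤ c := by
          rw [inv_mul_le_iff₀ (hdpos i), hdi]
          have h2 : c * (c * Q i i) ≤ 1 * (c * Q i i) :=
            mul_le_mul_of_nonneg_right hc1.le (mul_nonneg hc0 (hQ0 i i))
          nlinarith [h2]
  · exact lt_of_le_of_lt hle_c hc1
end

section
/- Let P be an n×n row-stochastic real matrix (with n ≥ 1), let γ ∈ [0,1), let m ≥ 1 be a natural number, and set H_m = I - γ^m P^m and H̄_m = diag(H_m). If H_m is symmetric, then κ(H̄_m⁻¹ H_m) ≤ 2 κ(H_m), where κ denotes the ratio of the largest to the smallest eigenvalue. -/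
open Matrix

lemma realSpec_eq {n : ℕ} (A : Matrix (Fin n) (Fin n) ℝ) :
    {x : ℝ | (x : ℂ) ∈ spectrum ℂ (A.map (Complex.ofReal ·))} = spectrum ℝ A := by
  ext x
  have hmap : (algebraMap ℂ (Matrix (Fin n) (Fin n) ℂ) (x : ℂ)) - A.map (Complex.ofReal ·)
      = ((algebraMap ℝ (Matrix (Fin n) (Fin n) ℝ) x) - A).map Complex.ofRealHom := by
    rw [Matrix.map_sub _ (fun a b => by simp [Complex.ofReal_sub])]
    congr 1
    rw [algebraMap_eq_diagonal, algebraMap_eq_diagonal, diagonal_map (by simp)]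
    congr
  simp only [Set.mem_setOf_eq, spectrum.mem_iff, Matrix.isUnit_iff_isUnit_det, hmap,
    ← RingHom.mapMatrix_apply, ← RingHom.map_det]
  simp [isUnit_iff_ne_zero]

lemma algebraMap_mulVec {n : ℕ} (x : ℝ) (v : Fin n → ℝ) :
    algebraMap ℝ (Matrix (Fin n) (Fin n) ℝ) x *ᵥ v = x • v := by
  rw [algebraMap_eq_diagonal]
  ext i; simp [mulVec_diagonal]

lemma mem_spectrum_iff_eig {n : ℕ} (A : Matrix (Fin n) (Fin n) ℝ) (x : ℝ) :
    x ∈ spectrum ℝ A ↔ ∃ v, v ≠ 0 ∧ A *ᵥ v = x • v := by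
  rw [spectrum.mem_iff, Matrix.isUnit_iff_isUnit_det, isUnit_iff_ne_zero, not_not,
    ← Matrix.exists_mulVec_eq_zero_iff]
  constructor
  · rintro ⟨v, hv, h⟩
    refine ⟨v, hv, ?_⟩
    rw [sub_mulVec, algebraMap_mulVec] at h
    exact (sub_eq_zero.mp h).symm
  · rintro ⟨v, hv, h⟩
    exact ⟨v, hv, by rw [sub_mulVec, algebraMap_mulVec, h, sub_self]⟩

lemma rayleigh {n : ℕ} (A : Matrix (Fin n) (Fin n) ℝ) (hA : A.IsHermitian)
    (a b : ℝ) (ha : ∀ i, a ≤ hA.eigenvalues i) (hb : ∀ i, hA.eigenvalues i ≤ b)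
    (v : Fin n → ℝ) :
    a * (v ⬝ᵥ v) ≤ v ⬝ᵥ (A *ᵥ v) ∧ v ⬝ᵥ (A *ᵥ v) ≤ b * (v ⬝ᵥ v) := by
  classical
  set U : Matrix (Fin n) (Fin n) ℝ := (hA.eigenvectorUnitary : Matrix (Fin n) (Fin n) ℝ) with hU
  set w : Fin n → ℝ := v ᵥ* U with hw
  have hstar : star U = Uᵀ := conjTranspose_eq_transpose_of_trivial U
  have hUU : U * Uᵀ = 1 := by
    rw [← hstar]; exact (mem_unitaryGroup_iff.mp hA.eigenvectorUnitary.2)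
  have hwv : Uᵀ *ᵥ v = w := by rw [mulVec_transpose]
  have h1 : v ⬝ᵥ (A *ᵥ v) = ∑ i, hA.eigenvalues i * (w i * w i) := by
    conv_lhs => rw [hA.spectral_theorem, Unitary.conjStarAlgAut_apply]
    rw [hstar, ← mulVec_mulVec, ← mulVec_mulVec, hwv, dotProduct_mulVec, ← hw]
    simp [dotProduct, mulVec_diagonal, RCLike.ofReal_real_eq_id]
    exact Finset.sum_congr rfl fun i _ => by ring
  have h2 : v ⬝ᵥ v = ∑ i, w i * w i := by
    have : w ⬝ᵥ w = v ⬝ᵥ v := by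
      rw [hw, ← mulVec_transpose, dotProduct_mulVec, vecMul_transpose, mulVec_mulVec, hUU,
        one_mulVec]
    rw [← this]; rfl
  constructor
  · rw [h1, h2, Finset.mul_sum]
    exact Finset.sum_le_sum fun i _ => mul_le_mul_of_nonneg_right (ha i) (mul_self_nonneg _)
  · rw [h1, h2, Finset.mul_sum]
    exact Finset.sum_le_sum fun i _ => mul_le_mul_of_nonneg_right (hb i) (mul_self_nonneg _)

lemma quad_bounds {n : ℕ} (Q : Matrix (Fin n) (Fin n) ℝ) (h0 : ∀ i j, 0 ≤ Q i j)
    (hrow : ∀ i, ∑ j, Q i j = 1) (hsym : ∀ i j, Q i j = Q j i) (v : Fin n → ℝ) :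
    (|∑ i, ∑ j, Q i j * (v i * v j)| ≤ ∑ i, v i * v i) ∧
    2 * (∑ i, Q i i * (v i * v i)) - (∑ i, ∑ j, Q i j * (v i * v j)) ≤ ∑ i, v i * v i := by
  have hcol : ∀ j, ∑ i, Q i j = 1 := fun j => by
    rw [Finset.sum_congr rfl fun i _ => hsym i j]; exact hrow j
  have hS1 : ∑ i, ∑ j, Q i j * (v i * v i) = ∑ i, v i * v i :=
    Finset.sum_congr rfl fun i _ => by rw [← Finset.sum_mul, hrow i, one_mul]
  have hS2 : ∑ i, ∑ j, Q i j * (v j * v j) = ∑ i, v i * v i := by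
    rw [Finset.sum_comm]
    exact Finset.sum_congr rfl fun j _ => by rw [← Finset.sum_mul, hcol j, one_mul]
  have hminus : ∑ i, ∑ j, Q i j * ((v i - v j)*(v i - v j))
      = 2 * (∑ i, v i * v i) - 2 * (∑ i, ∑ j, Q i j * (v i * v j)) := by
    calc ∑ i, ∑ j, Q i j * ((v i - v j)*(v i - v j))
        = ∑ i, ∑ j, ((Q i j * (v i * v i) + Q i j * (v j * v j)) - 2 * (Q i j * (v i * v j))) :=
          Finset.sum_congr rfl fun i _ => Finset.sum_congr rfl fun j _ => by ring
      _ = ∑ i, ((∑ j, (Q i j * (v i * v i) + Q i j * (v j * v j)))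
            - ∑ j, 2 * (Q i j * (v i * v j))) :=
          Finset.sum_congr rfl fun i _ => Finset.sum_sub_distrib _ _
      _ = (∑ i, ∑ j, (Q i j * (v i * v i) + Q i j * (v j * v j)))
            - ∑ i, ∑ j, 2 * (Q i j * (v i * v j)) := Finset.sum_sub_distrib _ _
      _ = ((∑ i, ∑ j, Q i j * (v i * v i)) + ∑ i, ∑ j, Q i j * (v j * v j))
            - 2 * ∑ i, ∑ j, (Q i j * (v i * v j)) := by
          simp_rw [Finset.sum_add_distrib, Finset.mul_sum]
      _ = 2 * (∑ i, v i * v i) - 2 * (∑ i, ∑ j, Q i j * (v i * v j)) := by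
          rw [hS1, hS2]; ring
  have hplus : ∑ i, ∑ j, Q i j * ((v i + v j)*(v i + v j))
      = 2 * (∑ i, v i * v i) + 2 * (∑ i, ∑ j, Q i j * (v i * v j)) := by
    calc ∑ i, ∑ j, Q i j * ((v i + v j)*(v i + v j))
        = ∑ i, ∑ j, ((Q i j * (v i * v i) + Q i j * (v j * v j)) + 2 * (Q i j * (v i * v j))) :=
          Finset.sum_congr rfl fun i _ => Finset.sum_congr rfl fun j _ => by ring
      _ = ((∑ i, ∑ j, Q i j * (v i * v i)) + ∑ i, ∑ j, Q i j * (v j * v j))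
            + 2 * ∑ i, ∑ j, (Q i j * (v i * v j)) := by
          simp_rw [Finset.sum_add_distrib, Finset.mul_sum]
      _ = 2 * (∑ i, v i * v i) + 2 * (∑ i, ∑ j, Q i j * (v i * v j)) := by
          rw [hS1, hS2]; ring
  have hmnonneg : (0:ℝ) ≤ ∑ i, ∑ j, Q i j * ((v i - v j)*(v i - v j)) :=
    Finset.sum_nonneg fun i _ => Finset.sum_nonneg fun j _ =>
      mul_nonneg (h0 i j) (mul_self_nonneg _)
  have hdiag : ∑ i, Q i i * ((v i + v i)*(v i + v i))
      ≤ ∑ i, ∑ j, Q i j * ((v i + v j)*(v i + v j)) :=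
    Finset.sum_le_sum fun i _ =>
      Finset.single_le_sum (f := fun j => Q i j * ((v i + v j)*(v i + v j)))
        (fun j _ => mul_nonneg (h0 i j) (mul_self_nonneg _)) (Finset.mem_univ i)
  have hdiag4 : ∑ i, Q i i * ((v i + v i)*(v i + v i)) = 4 * ∑ i, Q i i * (v i * v i) := by
    rw [Finset.mul_sum]; exact Finset.sum_congr rfl fun i _ => by ring
  constructor
  · rw [abs_le]
    constructor
    · have hpnonneg : (0:ℝ) ≤ ∑ i, ∑ j, Q i j * ((v i + v j)*(v i + v j)) :=
        Finset.sum_nonneg fun i _ => Finset.sum_nonneg fun j _ =>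
          mul_nonneg (h0 i j) (mul_self_nonneg _)
      linarith [hpnonneg, hplus]
    · linarith [hmnonneg, hminus]
  · have h4 := hdiag4 ▸ hdiag
    rw [hplus] at h4
    linarith

lemma pow_stochastic {n : ℕ} (P : Matrix (Fin n) (Fin n) ℝ)
    (hP0 : ∀ i j, 0 ≤ P i j) (hP1 : ∀ i, ∑ j, P i j = 1) (m : ℕ) :
    (∀ i j, 0 ≤ (P ^ m) i j) ∧ (∀ i, ∑ j, (P ^ m) i j = 1) := by
  induction m with
  | zero =>
    constructor
    · intro i j
      by_cases h : i = j <;> simp [pow_zero, Matrix.one_apply, h]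
    · intro i
      simp [pow_zero, Matrix.one_apply]
  | succ k ih =>
    rw [pow_succ]
    constructor
    · intro i j
      rw [Matrix.mul_apply]
      exact Finset.sum_nonneg fun l _ => mul_nonneg (ih.1 i l) (hP0 l j)
    · intro i
      simp_rw [Matrix.mul_apply]
      rw [Finset.sum_comm]
      calc ∑ l, ∑ j, (P ^ k) i l * P l j = ∑ l, (P ^ k) i l * ∑ j, P l j := by
            simp_rw [Finset.mul_sum]
        _ = 1 := by simp_rw [hP1]; simpa using ih.2 i
/-- For a row-stochastic `P`, `γ ∈ [0,1)`, `m ≥ 1`,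
`H_m = I - γ^m P^m`, `H̄_m = diag(H_m)`: if `H_m` is symmetric, then
`κ(H̄_m⁻¹H_m) ≤ 2 κ(H_m)`. -/
theorem stmt_13 {n : ℕ} (hn : 1 ≤ n) (P : Matrix (Fin n) (Fin n) ℝ)
    (hP0 : ∀ i j, 0 ≤ P i j) (hP1 : ∀ i, ∑ j, P i j = 1)
    (γ : ℝ) (hγ0 : 0 ≤ γ) (hγ1 : γ < 1)
    (m : ℕ) (hm : 1 ≤ m)
    (Hm Hmbar : Matrix (Fin n) (Fin n) ℝ)
    (hH : Hm = 1 - γ ^ m • P ^ m)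
    (hB : Hmbar = Matrix.diagonal (fun i => Hm i i))
    (hsymm : Hm.IsSymm) :
    maxEig (Hmbar⁻¹ * Hm) / minEig (Hmbar⁻¹ * Hm) ≤ 2 * (maxEig Hm / minEig Hm) := by
  classical
  set g : ℝ := γ ^ m with hgdef
  have hg0 : 0 ≤ g := pow_nonneg hγ0 m
  have hg1 : g < 1 := pow_lt_one₀ hγ0 hγ1 (by omega)
  -- a stochastic symmetric Q with Hm = 1 - g • Q
  obtain ⟨Q, hQ0, hrow, hQsym, hHQ⟩ :
      ∃ Q : Matrix (Fin n) (Fin n) ℝ, (∀ i j, 0 ≤ Q i j) ∧ (∀ i, ∑ j, Q i j = 1)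
        ∧ (∀ i j, Q i j = Q j i) ∧ Hm = 1 - g • Q := by
    rcases eq_or_ne g 0 with h0 | h0
    · refine ⟨1, ?_, ?_, ?_, ?_⟩
      · intro i j; by_cases h : i = j <;> simp [Matrix.one_apply, h]
      · intro i; simp [Matrix.one_apply]
      · intro i j; by_cases h : i = j <;> simp [Matrix.one_apply, h, Ne.symm]
      · rw [hH, h0, zero_smul, zero_smul]
    · refine ⟨P ^ m, (pow_stochastic P hP0 hP1 m).1, (pow_stochastic P hP0 hP1 m).2, ?_, hH⟩
      intro i j
      have h1 : Hm j i = Hm i j := by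
        rw [← Matrix.transpose_apply Hm i j, hsymm]
      rw [hH] at h1
      simp only [Matrix.sub_apply, Matrix.smul_apply, Matrix.one_apply, smul_eq_mul] at h1
      have h2 : g * (P ^ m) j i = g * (P ^ m) i j := by
        by_cases h : i = j
        · subst h; rfl
        · rw [if_neg (fun hji => h hji.symm), if_neg h] at h1
          linarith
      exact (mul_left_cancel₀ h0 h2).symm
  -- entries of Hm
  have hentry : ∀ i j, Hm i j = (if i = j then (1:ℝ) else 0) - g * Q i j := by
    intro i j
    rw [hHQ]
    simp [Matrix.sub_apply, Matrix.smul_apply, Matrix.one_apply]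
  set d : Fin n → ℝ := fun i => 1 - g * Q i i with hd
  have hHdiag : ∀ i, Hm i i = d i := fun i => by rw [hentry i i, if_pos rfl]
  have hQii1 : ∀ i, Q i i ≤ 1 := fun i => by
    rw [← hrow i]
    exact Finset.single_le_sum (fun j _ => hQ0 i j) (Finset.mem_univ i)
  have hd_lb : ∀ i, 1 - g ≤ d i := fun i => by
    have : g * Q i i ≤ g := by
      calc g * Q i i ≤ g * 1 := mul_le_mul_of_nonneg_left (hQii1 i) hg0
        _ = g := mul_one g
    simp only [hd]; linarith
  have hd_pos : ∀ i, 0 < d i := fun i => lt_of_lt_of_le (by linarith) (hd_lb i)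
  have hd_le1 : ∀ i, d i ≤ 1 := fun i => by
    have : 0 ≤ g * Q i i := mul_nonneg hg0 (hQ0 i i)
    simp only [hd]; linarith
  have hBd : Hmbar = Matrix.diagonal d := by
    rw [hB]; exact congrArg Matrix.diagonal (funext hHdiag)
  have hBinv : Hmbar⁻¹ = Matrix.diagonal (fun i => (d i)⁻¹) := by
    apply Matrix.inv_eq_left_inv
    rw [hBd, Matrix.diagonal_mul_diagonal]
    convert Matrix.diagonal_one using 2
    exact funext fun i => inv_mul_cancel₀ (hd_pos i).ne'
  have hBB : Hmbar * Hmbar⁻¹ = 1 := by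
    rw [hBinv, hBd, Matrix.diagonal_mul_diagonal]
    convert Matrix.diagonal_one using 2
    exact funext fun i => mul_inv_cancel₀ (hd_pos i).ne'
  -- quadratic forms
  have hqHm : ∀ v : Fin n → ℝ, v ⬝ᵥ (Hm *ᵥ v)
      = (∑ i, v i * v i) - g * (∑ i, ∑ j, Q i j * (v i * v j)) := by
    intro v
    rw [hHQ, Matrix.sub_mulVec, Matrix.one_mulVec, dotProduct_sub, Matrix.smul_mulVec,
      dotProduct_smul]
    congr 1
    rw [smul_eq_mul]
    congr 1
    simp_rw [dotProduct, Matrix.mulVec, dotProduct, Finset.mul_sum]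
    exact Finset.sum_congr rfl fun i _ => Finset.sum_congr rfl fun j _ => by ring
  have hqB : ∀ v : Fin n → ℝ, v ⬝ᵥ (Hmbar *ᵥ v) = ∑ i, d i * (v i * v i) := by
    intro v
    rw [hBd]
    simp_rw [dotProduct, Matrix.mulVec_diagonal]
    exact Finset.sum_congr rfl fun i _ => by ring
  have hvv : ∀ v : Fin n → ℝ, v ⬝ᵥ v = ∑ i, v i * v i := fun v => rfl
  have hSv_pos : ∀ v : Fin n → ℝ, v ≠ 0 → 0 < ∑ i, v i * v i := by
    intro v hv
    obtain ⟨i, hi⟩ := Function.ne_iff.mp hv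
    calc (0:ℝ) < v i * v i := mul_self_pos.mpr hi
      _ ≤ ∑ i, v i * v i :=
        Finset.single_le_sum (fun j _ => mul_self_nonneg (v j)) (Finset.mem_univ i)
  -- spectrum of Hm
  have hSH : ∀ x ∈ spectrum ℝ Hm, 1 - g ≤ x ∧ x ≤ 1 + g := by
    intro x hx
    obtain ⟨v, hv, hev⟩ := (mem_spectrum_iff_eig _ _).mp hx
    have hSv := hSv_pos v hv
    have hdot : v ⬝ᵥ (Hm *ᵥ v) = x * ∑ i, v i * v i := by
      rw [hev, dotProduct_smul, smul_eq_mul, hvv]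
    obtain ⟨habs, -⟩ := quad_bounds Q hQ0 hrow hQsym v
    rw [abs_le] at habs
    rw [hqHm] at hdot
    constructor
    · have h1 : g * (∑ i, ∑ j, Q i j * (v i * v j)) ≤ g * (∑ i, v i * v i) :=
        mul_le_mul_of_nonneg_left habs.2 hg0
      nlinarith [hSv]
    · have h1 : -(g * (∑ i, v i * v i)) ≤ g * (∑ i, ∑ j, Q i j * (v i * v j)) := by
        have := mul_le_mul_of_nonneg_left habs.1 hg0
        nlinarith
      nlinarith [hSv]
  have hherm : Hm.IsHermitian := by
    rw [Matrix.IsHermitian, Matrix.conjTranspose_eq_transpose_of_trivial]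
    exact hsymm
  have hlam_mem : ∀ k, hherm.eigenvalues k ∈ spectrum ℝ Hm := fun k =>
    hherm.eigenvalues_mem_spectrum_real k
  have hne : (spectrum ℝ Hm).Nonempty := ⟨hherm.eigenvalues ⟨0, hn⟩, hlam_mem _⟩
  have hbdda : BddAbove (spectrum ℝ Hm) := ⟨1 + g, fun x hx => (hSH x hx).2⟩
  have hbddb : BddBelow (spectrum ℝ Hm) := ⟨1 - g, fun x hx => (hSH x hx).1⟩
  set a : ℝ := sInf (spectrum ℝ Hm) with hadef
  set b : ℝ := sSup (spectrum ℝ Hm) with hbdef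
  have ha_lb : 1 - g ≤ a := le_csInf hne fun x hx => (hSH x hx).1
  have ha_pos : 0 < a := lt_of_lt_of_le (by linarith) ha_lb
  have hlam_a : ∀ k, a ≤ hherm.eigenvalues k := fun k => csInf_le hbddb (hlam_mem k)
  have hlam_b : ∀ k, hherm.eigenvalues k ≤ b := fun k => le_csSup hbdda (hlam_mem k)
  have hb_pos : 0 < b := lt_of_lt_of_le ha_pos (le_trans (hlam_a ⟨0, hn⟩) (hlam_b ⟨0, hn⟩))
  have hray := rayleigh Hm hherm a b hlam_a hlam_b
  -- diagonal entries bounded by b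
  have hd_le_b : ∀ i, d i ≤ b := by
    intro i
    have h := (hray (Pi.single i 1)).2
    simp only [single_dotProduct, dotProduct_single, Matrix.mulVec_single, one_mul, mul_one,
      Pi.single_eq_same] at h
    rw [← hHdiag i]
    simpa using h
  -- spectrum of M := Hmbar⁻¹ * Hm
  have hSM : ∀ x ∈ spectrum ℝ (Hmbar⁻¹ * Hm), a / b ≤ x ∧ x ≤ 2 := by
    intro x hx
    obtain ⟨v, hv, hev⟩ := (mem_spectrum_iff_eig _ _).mp hx
    have hSv := hSv_pos v hv
    have hHv : Hm *ᵥ v = x • (Hmbar *ᵥ v) := by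
      have h1 : Hmbar *ᵥ ((Hmbar⁻¹ * Hm) *ᵥ v) = Hm *ᵥ v := by
        rw [Matrix.mulVec_mulVec, ← Matrix.mul_assoc, hBB, Matrix.one_mul]
      rw [hev, Matrix.mulVec_smul] at h1
      exact h1.symm
    set E : ℝ := ∑ i, d i * (v i * v i) with hEdef
    have hE_lb : (1 - g) * (∑ i, v i * v i) ≤ E := by
      rw [hEdef, Finset.mul_sum]
      exact Finset.sum_le_sum fun i _ =>
        mul_le_mul_of_nonneg_right (hd_lb i) (mul_self_nonneg _)
    have hE_pos : 0 < E := lt_of_lt_of_le (by nlinarith) hE_lb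
    have hE_ub : E ≤ b * (∑ i, v i * v i) := by
      rw [hEdef, Finset.mul_sum]
      exact Finset.sum_le_sum fun i _ =>
        mul_le_mul_of_nonneg_right (hd_le_b i) (mul_self_nonneg _)
    have hdot : v ⬝ᵥ (Hm *ᵥ v) = x * E := by
      rw [hHv, dotProduct_smul, smul_eq_mul, hqB]
    constructor
    · -- lower bound a / b ≤ x
      have hlow : a * (∑ i, v i * v i) ≤ x * E := by
        rw [← hdot]
        have := (hray v).1
        rwa [hvv] at this
      have h1 : a / b * E ≤ a / b * (b * (∑ i, v i * v i)) :=
        mul_le_mul_of_nonneg_left hE_ub (div_nonneg ha_pos.le hb_pos.le)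
      have h2 : a / b * (b * (∑ i, v i * v i)) = a * (∑ i, v i * v i) := by
        rw [← mul_assoc, div_mul_cancel₀ a hb_pos.ne']
      have h3 : a / b * E ≤ x * E := by
        calc a / b * E ≤ a * (∑ i, v i * v i) := h2 ▸ h1
          _ ≤ x * E := hlow
      exact le_of_mul_le_mul_right h3 hE_pos
    · -- upper bound x ≤ 2
      set Sv : ℝ := ∑ i, v i * v i with hSvdef
      set C : ℝ := ∑ i, ∑ j, Q i j * (v i * v j) with hCdef
      set Dg : ℝ := ∑ i, Q i i * (v i * v i) with hDgdef
      obtain ⟨-, hkey⟩ := quad_bounds Q hQ0 hrow hQsym v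
      have hkey2 : g * (2 * Dg - C) ≤ Sv := by
        rcases le_or_gt (2 * Dg - C) 0 with h | h
        · calc g * (2 * Dg - C) ≤ 0 := mul_nonpos_of_nonneg_of_nonpos hg0 h
            _ ≤ Sv := hSv.le
        · calc g * (2 * Dg - C) ≤ 1 * (2 * Dg - C) :=
              mul_le_mul_of_nonneg_right hg1.le h.le
            _ = 2 * Dg - C := one_mul _
            _ ≤ Sv := hkey
      have hxE : x * E = Sv - g * C := by rw [← hdot, hqHm]
      have hE2 : E = Sv - g * Dg := by
        rw [hEdef, hSvdef, hDgdef, Finset.mul_sum, ← Finset.sum_sub_distrib]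
        exact Finset.sum_congr rfl fun i _ => by simp only [hd]; ring
      have h2E : x * E ≤ 2 * E := by rw [hxE, hE2]; linarith
      exact le_of_mul_le_mul_right h2E hE_pos
  -- assemble
  have hmaxH : maxEig Hm = b := by rw [maxEig, realSpec_eq]
  have hminH : minEig Hm = a := by rw [minEig, realSpec_eq]
  have hmaxM : maxEig (Hmbar⁻¹ * Hm) = sSup (spectrum ℝ (Hmbar⁻¹ * Hm)) := by
    rw [maxEig, realSpec_eq]
  have hminM : minEig (Hmbar⁻¹ * Hm) = sInf (spectrum ℝ (Hmbar⁻¹ * Hm)) := by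
    rw [minEig, realSpec_eq]
  rw [hmaxH, hminH, hmaxM, hminM]
  rcases (spectrum ℝ (Hmbar⁻¹ * Hm)).eq_empty_or_nonempty with hemp | hMne
  · rw [hemp, Real.sSup_empty, Real.sInf_empty, zero_div]
    positivity
  · have hX : sSup (spectrum ℝ (Hmbar⁻¹ * Hm)) ≤ 2 :=
      Real.sSup_le (fun x hx => (hSM x hx).2) (by norm_num)
    have hY : a / b ≤ sInf (spectrum ℝ (Hmbar⁻¹ * Hm)) :=
      le_csInf hMne fun x hx => (hSM x hx).1
    have hab : 0 < a / b := div_pos ha_pos hb_pos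
    calc sSup (spectrum ℝ (Hmbar⁻¹ * Hm)) / sInf (spectrum ℝ (Hmbar⁻¹ * Hm))
        ≤ 2 / (a / b) := div_le_div₀ (by norm_num) hX hab hY
      _ = 2 * (b / a) := by
          rw [div_div_eq_mul_div, mul_div_assoc]
end

section
/- Let P be an n×n row-stochastic real matrix (with n ≥ 1), let γ ∈ [0,1) and λ ∈ [0,1], and set H_λ = (I - γλP)⁻¹(I - γP). Then I - H_λ = γ(1-λ)(I - γλP)⁻¹P, every entry of I - H_λ is nonnegative, and every diagonal entry of H_λ lies in the interval (0, 1]. -/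
open Matrix

/-- For a row-stochastic `P`, `γ ∈ [0,1)`, `λ ∈ [0,1]`, and
`H_λ = (I - γλP)⁻¹(I - γP)`: `I - H_λ = γ(1-λ)(I - γλP)⁻¹P`, every entry of
`I - H_λ` is nonnegative, and every diagonal entry of `H_λ` lies in `(0, 1]`. -/
theorem stmt_14 {n : ℕ} (hn : 1 ≤ n) (P : Matrix (Fin n) (Fin n) ℝ)
    (hP0 : ∀ i j, 0 ≤ P i j) (hP1 : ∀ i, ∑ j, P i j = 1)
    (γ : ℝ) (hγ0 : 0 ≤ γ) (hγ1 : γ < 1)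
    (lam : ℝ) (hl0 : 0 ≤ lam) (hl1 : lam ≤ 1)
    (Hlam : Matrix (Fin n) (Fin n) ℝ)
    (hH : Hlam = (1 - (γ * lam) • P)⁻¹ * (1 - γ • P)) :
    1 - Hlam = (γ * (1 - lam)) • ((1 - (γ * lam) • P)⁻¹ * P) ∧
    (∀ i j, 0 ≤ (1 - Hlam) i j) ∧
    ∀ i, 0 < Hlam i i ∧ Hlam i i ≤ 1 := by
  set c : ℝ := γ * lam with hc
  have hc0 : 0 ≤ c := mul_nonneg hγ0 hl0
  have hc1 : c < 1 := lt_of_le_of_lt (by nlinarith) hγ1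
  set A : Matrix (Fin n) (Fin n) ℝ := 1 - c • P with hA
  -- invertibility and entrywise nonnegativity of A⁻¹ via Neumann series
  letI := Matrix.linftyOpNormedRing (n := Fin n) (α := ℝ)
  letI := Matrix.linftyOpNormedAlgebra (n := Fin n) (R := ℝ) (α := ℝ)
  haveI : CompleteSpace (Matrix (Fin n) (Fin n) ℝ) :=
    FiniteDimensional.complete ℝ _
  have hPnorm : ‖P‖ ≤ 1 := by
    rw [linfty_opNorm_def]
    have : ∀ i : Fin n, ∑ j, ‖P i j‖₊ = 1 := by
      intro i
      have : ((∑ j, ‖P i j‖₊ : NNReal) : ℝ) = 1 := by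
        push_cast
        rw [← hP1 i]
        exact Finset.sum_congr rfl fun j _ => abs_of_nonneg (hP0 i j)
      exact_mod_cast this
    simp only [this]
    simp
  have hB : ‖c • P‖ < 1 := by
    rw [norm_smul]
    calc ‖c‖ * ‖P‖ ≤ c * 1 :=
          mul_le_mul (le_of_eq (abs_of_nonneg hc0)) hPnorm (norm_nonneg _) hc0
      _ < 1 := by linarith
  have hU : IsUnit A := isUnit_one_sub_of_norm_lt_one hB
  have hUdet : IsUnit A.det := (Matrix.isUnit_iff_isUnit_det A).mp hU
  have hAinvA : A⁻¹ * A = 1 := Matrix.nonsing_inv_mul A hUdet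
  -- nonnegativity of entries of A⁻¹
  have hpow : ∀ (k : ℕ) (i j : Fin n), 0 ≤ ((c • P) ^ k) i j := by
    intro k
    induction k with
    | zero => intro i j; simp [Matrix.one_apply]; positivity
    | succ m ih =>
      intro i j
      rw [pow_succ, Matrix.mul_apply]
      exact Finset.sum_nonneg fun m' _ =>
        mul_nonneg (ih i m') (by simp only [Matrix.smul_apply, smul_eq_mul]; exact mul_nonneg hc0 (hP0 _ _))
  have hAinv0 : ∀ i j, 0 ≤ A⁻¹ i j := by
    intro i j
    have hsum := hasSum_geom_series_inverse (c • P) hB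
    rw [← Matrix.nonsing_inv_eq_ringInverse] at hsum
    let f : Matrix (Fin n) (Fin n) ℝ →ₗ[ℝ] ℝ :=
      (LinearMap.proj j).comp (LinearMap.proj (R := ℝ) (φ := fun _ : Fin n => Fin n → ℝ) i)
    have hf : Continuous f := f.continuous_of_finiteDimensional
    have h2 : HasSum (fun k : ℕ => ((c • P) ^ k) i j) ((A⁻¹) i j) := hsum.map f hf
    exact hasSum_le (fun k => hpow k i j) hasSum_zero h2
  -- the algebraic identity
  have key : 1 - Hlam = (γ * (1 - lam)) • (A⁻¹ * P) := by
    rw [hH]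
    calc (1 : Matrix (Fin n) (Fin n) ℝ) - A⁻¹ * (1 - γ • P)
        = A⁻¹ * A - A⁻¹ * (1 - γ • P) := by rw [hAinvA]
      _ = A⁻¹ * (A - (1 - γ • P)) := (Matrix.mul_sub _ _ _).symm
      _ = A⁻¹ * ((γ - c) • P) := by rw [hA]; congr 1; rw [sub_smul]; abel
      _ = (γ * (1 - lam)) • (A⁻¹ * P) := by
          rw [Matrix.mul_smul]; congr 1; rw [hc]; ring
  -- row sums of A⁻¹
  have hArow : ∀ m, ∑ k, A m k = 1 - c := by
    intro m
    rw [hA]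
    simp only [Matrix.sub_apply, Matrix.smul_apply, smul_eq_mul, Finset.sum_sub_distrib,
      ← Finset.mul_sum, hP1 m, Matrix.one_apply]
    simp
  have hAirow : ∀ i, ∑ k, A⁻¹ i k = 1 / (1 - c) := by
    intro i
    have h1 : ∑ k, (A⁻¹ * A) i k = 1 := by
      rw [hAinvA]
      simp [Matrix.one_apply]
    have h2 : ∑ k, (A⁻¹ * A) i k = (1 - c) * ∑ m, A⁻¹ i m := by
      simp only [Matrix.mul_apply]
      rw [Finset.sum_comm]
      rw [Finset.mul_sum]
      refine Finset.sum_congr rfl fun m _ => ?_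
      rw [← Finset.mul_sum, hArow m]
      ring
    rw [h2] at h1
    rw [eq_div_iff (by linarith : (1:ℝ) - c ≠ 0)]
    linarith
  -- entries of A⁻¹ * P etc.
  refine ⟨key, ?_, ?_⟩
  · intro i j
    rw [key]
    simp only [Matrix.smul_apply, smul_eq_mul, Matrix.mul_apply]
    exact mul_nonneg (by nlinarith) (Finset.sum_nonneg fun k _ =>
      mul_nonneg (hAinv0 i k) (hP0 k j))
  · intro i
    have hdiag : Hlam i i = 1 - (γ * (1 - lam)) * (A⁻¹ * P) i i := by
      have := congrFun (congrFun key i) i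
      simp only [Matrix.sub_apply, Matrix.smul_apply, smul_eq_mul, Matrix.one_apply_eq] at this
      linarith
    have hMP0 : 0 ≤ (A⁻¹ * P) i i := by
      rw [Matrix.mul_apply]
      exact Finset.sum_nonneg fun k _ => mul_nonneg (hAinv0 i k) (hP0 k i)
    have hPle1 : ∀ k j, P k j ≤ 1 := by
      intro k j
      rw [← hP1 k]
      exact Finset.single_le_sum (fun m _ => hP0 k m) (Finset.mem_univ j)
    have hMPle : (A⁻¹ * P) i i ≤ 1 / (1 - c) := by
      rw [Matrix.mul_apply, ← hAirow i]
      exact Finset.sum_le_sum fun k _ => by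
        nlinarith [hAinv0 i k, hP0 k i, hPle1 k i]
    constructor
    · rw [hdiag]
      have hcg : γ * (1 - lam) * (A⁻¹ * P) i i < 1 := by
        have h1 : γ * (1 - lam) * (A⁻¹ * P) i i ≤ γ * (1 - lam) * (1 / (1 - c)) :=
          mul_le_mul_of_nonneg_left hMPle (by nlinarith)
        have h2 : γ * (1 - lam) * (1 / (1 - c)) < 1 := by
          rw [hc] at *
          rw [mul_one_div, div_lt_one (by linarith)]
          nlinarith
        linarith
      linarith
    · rw [hdiag]
      have := mul_nonneg (mul_nonneg hγ0 (by linarith : (0:ℝ) ≤ 1 - lam)) hMP0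
      linarith
end
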